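/- arXiv:1509.00231 — 3 statements merged into one kernel-verified Lean document; each statement's English description precedes it below -/
import Mathlib

section
/- (Discounted BSDE existence, uniqueness and approximation) Let α > 0 and let the driver f : Ω × ℕ × ℝ^N → ℝ (independent of y) be adapted and satisfy: f is Lipschitz in z with constant L; f satisfies the comparison condition (for any t, z, z' and atom F ∈ F_t, f(ω,t,z) − f(ω,t,z') > min_{i∈J_t^F}{(z−z')ᵀ(e_i − E[X_{t+1}|F_t])} on F unless that minimum is 0, in which case equality holds); and |f(ω,t,0)| ≤ C for some C > 0 uniformly in (ω,t). Then there exists an adapted solution (Y,Z) of the infinite-horizon discounted BSDE Y_T = Y_t − Σ_{t≤u<T}(f(ω,u,Z_u) − αY_u) + Σ_{t≤u<T} Z_uᵀM_{u+1}, holding a.s. for all 0 ≤ t < T < ∞, with |Y_t| ≤ C/α for all t; this solution is unique among bounded adapted solutions (up to indistinguishability for Y and ∼_M for Z). Furthermore, if (Y^T,Z^T) denotes the unique adapted solution of the finite horizon BSDE 0 = Y^T_t − Σ_{t≤u<T}(f(ω,u,Z^T_u) − αY^T_u) + Σ_{t≤u<T}(Z^T_u)ᵀM_{u+1}, then Y^T_t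 → Y_t in L^∞ as T → ∞, uniformly on finite sets in t. -/
open MeasureTheory Finset Filter

noncomputable section

namespace DiscreteEBSDE

variable {Ω : Type*} {mΩ : MeasurableSpace Ω} {N : ℕ}

/-- The standard basis vector `e i` of `ℝ^N`. -/
def e (N : ℕ) (i : Fin N) : Fin N → ℝ := Pi.single i 1

/-- The Euclidean inner product on `ℝ^N`. -/
def dotR {N : ℕ} (z w : Fin N → ℝ) : ℝ := ∑ i, z i * w i

/-- The process `X` takes values in the standard basis of `ℝ^N`. -/
def BasisValued (X : ℕ → Ω → (Fin N → ℝ)) : Prop := ∀ t ω, ∃ i, X t ω = e N i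

/-- The σ-algebra generated by `X 0, …, X t`. -/
def natSigma (X : ℕ → Ω → (Fin N → ℝ)) (t : ℕ) : MeasurableSpace Ω :=
  ⨆ s ∈ Set.Iic t, MeasurableSpace.comap (X s) inferInstance

/-- `F` is the `P`-completion of the natural filtration of `X`:
a set is `F t`-measurable iff it agrees with a set of the natural σ-algebra up to a
`P`-null symmetric difference. -/
def IsCompletedNaturalFiltration (P : Measure Ω) (X : ℕ → Ω → (Fin N → ℝ))
    (F : Filtration ℕ mΩ) : Prop :=
  ∀ (t : ℕ) (A : Set Ω), MeasurableSet[F t] A ↔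
    ∃ B : Set Ω, MeasurableSet[natSigma X t] B ∧ P (symmDiff A B) = 0

/-- The martingale difference `M (t+1) = X (t+1) - E[X (t+1) | F t]` (componentwise). -/
def Mdiff (P : Measure Ω) (F : Filtration ℕ mΩ) (X : ℕ → Ω → (Fin N → ℝ)) (t : ℕ)
    (ω : Ω) : Fin N → ℝ :=
  fun i => X (t + 1) ω i - (P[(fun ω' => X (t + 1) ω' i)|F t]) ω

/-- The conditional second moment `‖Z‖²_{M_{t+1}} = E[(Zᵀ M_{t+1})² | F t]`. -/
def seminormSq (P : Measure Ω) (F : Filtration ℕ mΩ) (X : ℕ → Ω → (Fin N → ℝ))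
    (t : ℕ) (Z : Ω → Fin N → ℝ) : Ω → ℝ :=
  P[(fun ω => (dotR (Z ω) (Mdiff P F X t ω)) ^ 2)|F t]

/-- The stochastic seminorm `‖Z‖_{M_{t+1}}`. -/
def mSeminorm (P : Measure Ω) (F : Filtration ℕ mΩ) (X : ℕ → Ω → (Fin N → ℝ))
    (t : ℕ) (Z : Ω → Fin N → ℝ) (ω : Ω) : ℝ :=
  Real.sqrt (seminormSq P F X t Z ω)

/-- `Z ∼_{M_{t+1}} Z'`, i.e. `‖Z - Z'‖_{M_{t+1}} = 0` a.s. -/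
def equivMt (P : Measure Ω) (F : Filtration ℕ mΩ) (X : ℕ → Ω → (Fin N → ℝ)) (t : ℕ)
    (Z Z' : Ω → Fin N → ℝ) : Prop :=
  seminormSq P F X t (fun ω => Z ω - Z' ω) =ᵐ[P] 0

/-- `Z ∼_M Z'`. -/
def equivM (P : Measure Ω) (F : Filtration ℕ mΩ) (X : ℕ → Ω → (Fin N → ℝ))
    (Z Z' : ℕ → Ω → Fin N → ℝ) : Prop :=
  ∀ t, equivMt P F X t (Z t) (Z' t)

/-- A driver `f(ω,t,y,z)` is adapted if `(ω,y,z) ↦ f(ω,t,y,z)` is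
`F t ⊗ B(ℝ) ⊗ B(ℝ^N)`-measurable for every `t`. -/
def DriverAdapted (F : Filtration ℕ mΩ) (f : Ω → ℕ → ℝ → (Fin N → ℝ) → ℝ) : Prop :=
  ∀ t : ℕ, Measurable[(F t).prod inferInstance]
    fun p : Ω × (ℝ × (Fin N → ℝ)) => f p.1 t p.2.1 p.2.2

/-- A column-stochastic transition matrix. -/
def IsTransMat {n : ℕ} (A : Matrix (Fin n) (Fin n) ℝ) : Prop :=
  (∀ i j, 0 ≤ A i j) ∧ ∀ j, ∑ i, A i j = 1

/-- `X` is a Markov chain with transition matrices `A t`; since `X` is valued in the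
standard basis this is equivalent to `E[X (t+1) | F t] = (A t) (X t)` a.s. -/
def IsMarkovChain (P : Measure Ω) (F : Filtration ℕ mΩ) (X : ℕ → Ω → (Fin N → ℝ))
    (A : ℕ → Matrix (Fin N) (Fin N) ℝ) : Prop :=
  (∀ t, IsTransMat (A t)) ∧
    ∀ (t : ℕ) (i : Fin N),
      (P[(fun ω => X (t + 1) ω i)|F t]) =ᵐ[P] fun ω => (A t).mulVec (X t ω) i

/-- The atom of `F t` containing `ω₀` (the set of paths agreeing with `ω₀` up to time `t`). -/
def pathAtom (X : ℕ → Ω → (Fin N → ℝ)) (t : ℕ) (ω₀ : Ω) : Set Ω :=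
  {ω' | ∀ s ≤ t, X s ω' = X s ω₀}

/-- `min_{i ∈ J_t^F} (z - z')ᵀ(e_i - E[X_{t+1} | F_t])` where `F` is the atom of `ω₀`
 at time `t` and `J_t^F = {i : P(X_{t+1} = e_i | F) > 0}`. -/
def minJump (P : Measure Ω) (F : Filtration ℕ mΩ) (X : ℕ → Ω → (Fin N → ℝ))
    (t : ℕ) (ω₀ : Ω) (z z' : Fin N → ℝ) (ω : Ω) : ℝ :=
  sInf {r : ℝ | ∃ i : Fin N,
    0 < P ({ω' | X (t + 1) ω' = e N i} ∩ pathAtom X t ω₀) ∧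
    r = dotR (z - z') (fun j => e N i j - (P[(fun ω'' => X (t + 1) ω'' j)|F t]) ω)}

/-- The comparison condition of the change-of-measure proposition: on every atom `F` of
`F t`, `f(ω,t,y,z) - f(ω,t,y,z') > min_{i ∈ J_t^F}{(z-z')ᵀ(e_i - E[X_{t+1}|F_t])}`, unless
this minimum is `0`, in which case equality holds. -/
def ComparisonCondition (P : Measure Ω) (F : Filtration ℕ mΩ) (X : ℕ → Ω → (Fin N → ℝ))
    (f : Ω → ℕ → ℝ → (Fin N → ℝ) → ℝ) : Prop :=
  ∀ (t : ℕ) (y : ℝ) (z z' : Fin N → ℝ) (ω₀ : Ω), 0 < P (pathAtom X t ω₀) →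
    ∀ᵐ ω ∂P, ω ∈ pathAtom X t ω₀ →
      (minJump P F X t ω₀ z z' ω = 0 → f ω t y z - f ω t y z' = 0) ∧
      (minJump P F X t ω₀ z z' ω ≠ 0 →
        minJump P F X t ω₀ z z' ω < f ω t y z - f ω t y z')

/-- `f` is Lipschitz in `z` with constant `L`, w.r.t. the stochastic seminorm. -/
def DriverLipschitzNoY (P : Measure Ω) (F : Filtration ℕ mΩ) (X : ℕ → Ω → (Fin N → ℝ))
    (L : ℝ) (f : Ω → ℕ → (Fin N → ℝ) → ℝ) : Prop :=
  ∀ (t : ℕ) (Zt Z't : Ω → Fin N → ℝ),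
    StronglyMeasurable[F t] Zt → StronglyMeasurable[F t] Z't →
    ∀ᵐ ω ∂P, |f ω t (Zt ω) - f ω t (Z't ω)| ≤
      L * mSeminorm P F X t (fun ω' => Zt ω' - Z't ω') ω

/-- `(Y,Z)` is an adapted solution of the finite horizon BSDE with driver `f`,
horizon `T` and terminal condition `ξ`. -/
def SolvesFiniteBSDE (P : Measure Ω) (F : Filtration ℕ mΩ) (X : ℕ → Ω → (Fin N → ℝ))
    (f : Ω → ℕ → ℝ → (Fin N → ℝ) → ℝ) (T : ℕ) (ξ : Ω → ℝ)
    (Y : ℕ → Ω → ℝ) (Z : ℕ → Ω → Fin N → ℝ) : Prop :=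
  Adapted F Y ∧ Adapted F Z ∧
    ∀ t ≤ T, ∀ᵐ ω ∂P,
      Y t ω - ∑ u ∈ Finset.Ico t T, f ω u (Y u ω) (Z u ω) +
        ∑ u ∈ Finset.Ico t T, dotR (Z u ω) (Mdiff P F X u ω) = ξ ω

/-- `(Y,Z)` is an adapted solution of the infinite-horizon discounted BSDE
with discount rate `α` and driver `f` (independent of `y`). -/
def SolvesDiscountedBSDE (P : Measure Ω) (F : Filtration ℕ mΩ) (X : ℕ → Ω → (Fin N → ℝ))
    (α : ℝ) (f : Ω → ℕ → (Fin N → ℝ) → ℝ)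
    (Y : ℕ → Ω → ℝ) (Z : ℕ → Ω → Fin N → ℝ) : Prop :=
  Adapted F Y ∧ Adapted F Z ∧
    ∀ t T : ℕ, t < T → ∀ᵐ ω ∂P,
      Y T ω = Y t ω - ∑ u ∈ Finset.Ico t T, (f ω u (Z u ω) - α * Y u ω) +
        ∑ u ∈ Finset.Ico t T, dotR (Z u ω) (Mdiff P F X u ω)

/-- `(Y,Z,lam)` solves the Ergodic BSDE with Markovian driver `f`. -/
def SolvesEBSDE (P : Measure Ω) (F : Filtration ℕ mΩ) (X : ℕ → Ω → (Fin N → ℝ))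
    (f : (Fin N → ℝ) → (Fin N → ℝ) → ℝ) (Y : ℕ → Ω → ℝ) (Z : ℕ → Ω → Fin N → ℝ)
    (lam : ℝ) : Prop :=
  ∀ t T : ℕ, t < T → ∀ᵐ ω ∂P,
    Y T ω = Y t ω - ∑ u ∈ Finset.Ico t T, (f (X u ω) (Z u ω) - lam) +
      ∑ u ∈ Finset.Ico t T, dotR (Z u ω) (Mdiff P F X u ω)

/-- Ratio with the convention `0/0 := 1`. -/
def balRatio (a b : ℝ) : ℝ := if a = 0 ∧ b = 0 then 1 else a / b

/-- The driver `f(ω,t,y,z)` is `γ`-balanced. -/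
def IsGammaBalanced (P : Measure Ω) (F : Filtration ℕ mΩ) (X : ℕ → Ω → (Fin N → ℝ))
    (A : ℕ → Matrix (Fin N) (Fin N) ℝ) (γ : ℝ)
    (f : Ω → ℕ → ℝ → (Fin N → ℝ) → ℝ) : Prop :=
  ∃ ψ : Ω → ℕ → (Fin N → ℝ) → (Fin N → ℝ) → (Fin N → ℝ),
    (∀ t : ℕ, Measurable[(F t).prod inferInstance]
      fun p : Ω × ((Fin N → ℝ) × (Fin N → ℝ)) => ψ p.1 t p.2.1 p.2.2) ∧
    ∀ (t : ℕ) (y : ℝ) (z z' : Fin N → ℝ), ∀ᵐ ω ∂P,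
      f ω t y z - f ω t y z' =
          dotR (z - z') (fun i => ψ ω t z z' i - (A t).mulVec (X t ω) i) ∧
        (∀ i, balRatio (ψ ω t z z' i) ((A t).mulVec (X t ω) i) ∈ Set.Icc γ γ⁻¹) ∧
        ∑ i, ψ ω t z z' i = 1

/-- The driver `f(ω,t,z)` (independent of `y`) is `γ`-balanced. -/
def IsGammaBalancedNoY (P : Measure Ω) (F : Filtration ℕ mΩ) (X : ℕ → Ω → (Fin N → ℝ))
    (A : ℕ → Matrix (Fin N) (Fin N) ℝ) (γ : ℝ)
    (f : Ω → ℕ → (Fin N → ℝ) → ℝ) : Prop :=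
  ∃ ψ : Ω → ℕ → (Fin N → ℝ) → (Fin N → ℝ) → (Fin N → ℝ),
    (∀ t : ℕ, Measurable[(F t).prod inferInstance]
      fun p : Ω × ((Fin N → ℝ) × (Fin N → ℝ)) => ψ p.1 t p.2.1 p.2.2) ∧
    ∀ (t : ℕ) (z z' : Fin N → ℝ), ∀ᵐ ω ∂P,
      f ω t z - f ω t z' =
          dotR (z - z') (fun i => ψ ω t z z' i - (A t).mulVec (X t ω) i) ∧
        (∀ i, balRatio (ψ ω t z z' i) ((A t).mulVec (X t ω) i) ∈ Set.Icc γ γ⁻¹) ∧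
        ∑ i, ψ ω t z z' i = 1

/-- A probability vector on `Fin n`. -/
def IsProbVec {n : ℕ} (μ : Fin n → ℝ) : Prop := (∀ i, 0 ≤ μ i) ∧ ∑ i, μ i = 1

/-- Total variation distance between (signed) measures on a finite state space. -/
def tvDist {n : ℕ} (μ ν : Fin n → ℝ) : ℝ := (∑ x, |μ x - ν x|) / 2

/-- Uniform ergodicity of the chain induced by the column-stochastic matrix `A`. -/
def UniformlyErgodic {n : ℕ} (A : Matrix (Fin n) (Fin n) ℝ) : Prop :=
  ∃ π : Fin n → ℝ, IsProbVec π ∧ ∃ R ρ : ℝ, 0 < R ∧ 0 < ρ ∧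
    ∀ (t : ℕ) (μ : Fin n → ℝ), IsProbVec μ →
      tvDist ((A ^ t).mulVec μ) π ≤ R * Real.exp (-ρ * t)


section AuxLemmas
variable {Ω : Type*} {mΩ : MeasurableSpace Ω} {N : ℕ}

-- ===================== Part 1 : foundations =====================

lemma e_injective (N : ℕ) : Function.Injective (e N) := by
  intro i j h
  by_contra hij
  have := congrFun h i
  simp [e, Pi.single_apply, Ne.symm hij] at this

lemma mem_pathAtom_self (X : ℕ → Ω → (Fin N → ℝ)) (t : ℕ) (ω : Ω) :
    ω ∈ pathAtom X t ω := fun _ _ => rfl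

lemma mem_pathAtom_symm {X : ℕ → Ω → (Fin N → ℝ)} {t : ℕ} {ω ω' : Ω}
    (h : ω' ∈ pathAtom X t ω) : ω ∈ pathAtom X t ω' := fun s hs => (h s hs).symm

lemma pathAtom_eq_of_mem {X : ℕ → Ω → (Fin N → ℝ)} {t : ℕ} {ω₀ ω₁ : Ω}
    (h : ω₁ ∈ pathAtom X t ω₀) : pathAtom X t ω₁ = pathAtom X t ω₀ := by
  ext ω'
  constructor <;> intro h' s hs
  · rw [h' s hs, h s hs]
  · rw [h' s hs, ← h s hs]

lemma measurableSet_pathAtom_natSigma (X : ℕ → Ω → (Fin N → ℝ)) (t : ℕ) (ω₀ : Ω) :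
    MeasurableSet[natSigma X t] (pathAtom X t ω₀) := by
  have h : pathAtom X t ω₀ = ⋂ s ∈ Set.Iic t, X s ⁻¹' {X s ω₀} := by
    ext ω'; simp [pathAtom, Set.mem_iInter]
  rw [h]
  refine MeasurableSet.biInter (Set.to_countable _) fun s hs => ?_
  have h1 : MeasurableSpace.comap (X s) inferInstance ≤ natSigma X t :=
    le_biSup (fun s => MeasurableSpace.comap (X s) inferInstance) hs
  exact h1 _ ⟨{X s ω₀}, measurableSet_singleton _, rfl⟩

variable {P : Measure Ω} {F : Filtration ℕ mΩ} {X : ℕ → Ω → (Fin N → ℝ)}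

lemma natSigma_le (hF : IsCompletedNaturalFiltration P X F) (t : ℕ) :
    natSigma X t ≤ F t := by
  intro B hB
  exact (hF t B).2 ⟨B, hB, by simp⟩

lemma measurableSet_pathAtom (hF : IsCompletedNaturalFiltration P X F) (t : ℕ) (ω₀ : Ω) :
    MeasurableSet[F t] (pathAtom X t ω₀) :=
  natSigma_le hF t _ (measurableSet_pathAtom_natSigma X t ω₀)

lemma null_mem_F (hF : IsCompletedNaturalFiltration P X F) (t : ℕ) {A : Set Ω}
    (hA : P A = 0) : MeasurableSet[F t] A :=
  (hF t A).2 ⟨∅, @MeasurableSet.empty _ (natSigma X t), by simpa using hA⟩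

/-- natSigma-measurable sets are unions of path atoms. -/
lemma pathAtom_subset_of_natSigma {t : ℕ} {B : Set Ω}
    (hB : MeasurableSet[natSigma X t] B) {ω : Ω} (hω : ω ∈ B) :
    pathAtom X t ω ⊆ B := by
  let m' : MeasurableSpace Ω :=
    { MeasurableSet' := fun B => ∀ ω ∈ B, pathAtom X t ω ⊆ B
      measurableSet_empty := by simp
      measurableSet_compl := by
        intro B hB ω hω ω' hω'
        intro hmem
        exact hω (hB ω' hmem (mem_pathAtom_symm hω'))
      measurableSet_iUnion := by
        intro s hs ω hω ω' hω'
        obtain ⟨i, hi⟩ := Set.mem_iUnion.1 hω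
        exact Set.mem_iUnion.2 ⟨i, hs i ω hi hω'⟩ }
  have hle : natSigma X t ≤ m' := by
    refine iSup₂_le fun s hs => ?_
    intro B hB
    obtain ⟨E, -, rfl⟩ := hB
    intro ω hω ω' hω'
    simpa [Set.mem_preimage, hω' s hs] using hω
  exact hle B hB ω hω


section
variable {P : Measure Ω} {F : Filtration ℕ mΩ} {X : ℕ → Ω → (Fin N → ℝ)}
lemma integrable_of_ae_bdd [IsProbabilityMeasure P] {g : Ω → ℝ}
    (hm : AEStronglyMeasurable g P) {K : ℝ} (hb : ∀ᵐ ω ∂P, |g ω| ≤ K) :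
    Integrable g P :=
  (memLp_top_of_bound hm K (by simpa [Real.norm_eq_abs] using hb)).integrable le_top

/-- F t measurable functions are a.e. constant on positive-measure path atoms. -/
lemma exists_ae_const_on_atom [IsProbabilityMeasure P]
    (hF : IsCompletedNaturalFiltration P X F) (t : ℕ)
    {g : Ω → ℝ} (hg : Measurable[F t] g) {ω₀ : Ω} (hA : 0 < P (pathAtom X t ω₀)) :
    ∃ c : ℝ, ∀ᵐ ω ∂P, ω ∈ pathAtom X t ω₀ → g ω = c := by
  classical
  set A := pathAtom X t ω₀ with hAdef
  have hAm : MeasurableSet A := F.le t _ (measurableSet_pathAtom hF t ω₀)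
  have hgm : Measurable g := hg.mono (F.le t) le_rfl
  have hGm : ∀ q : ℝ, MeasurableSet (A ∩ {ω | g ω ≤ q}) :=
    fun q => hAm.inter (hgm measurableSet_Iic)
  have key : ∀ q : ℝ, P (A ∩ {ω | g ω ≤ q}) = 0 ∨ P (A ∩ {ω | g ω ≤ q}) = P A := by
    intro q
    obtain ⟨B, hBmeas, hBnull⟩ := (hF t {ω | g ω ≤ q}).1 (hg measurableSet_Iic)
    have hcong : P (A ∩ {ω | g ω ≤ q}) = P (A ∩ B) :=
      measure_congr (ae_eq_set_inter (ae_eq_refl A)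
        (measure_symmDiff_eq_zero_iff.1 hBnull))
    by_cases hω₀B : ω₀ ∈ B
    · right
      rw [hcong, Set.inter_eq_self_of_subset_left
        (hAdef ▸ pathAtom_subset_of_natSigma hBmeas hω₀B)]
    · left
      rw [hcong]
      have hempty : A ∩ B = ∅ := by
        by_contra hne
        obtain ⟨ω', hω'⟩ := Set.nonempty_iff_ne_empty.2 hne
        exact hω₀B (pathAtom_subset_of_natSigma hBmeas hω'.2 (mem_pathAtom_symm hω'.1))
      simp [hempty]
  set Q := {q : ℝ | P (A ∩ {ω | g ω ≤ q}) = P A} with hQ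
  have hmono : ∀ {q q' : ℝ}, q ≤ q' → q ∈ Q → q' ∈ Q := by
    intro q q' hqq' hq
    refine le_antisymm (measure_mono Set.inter_subset_left) ?_
    calc P A = P (A ∩ {ω | g ω ≤ q}) := hq.symm
    _ ≤ P (A ∩ {ω | g ω ≤ q'}) :=
        measure_mono (fun ω h => ⟨h.1, le_trans h.2 hqq'⟩)
  have hQne : Q.Nonempty := by
    have hU : ⋃ n : ℕ, (A ∩ {ω | g ω ≤ (n : ℝ)}) = A := by
      ext ω
      constructor
      · intro h
        obtain ⟨n, hn⟩ := Set.mem_iUnion.1 h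
        exact hn.1
      · intro h
        obtain ⟨n, hn⟩ := exists_nat_ge (g ω)
        exact Set.mem_iUnion.2 ⟨n, h, hn⟩
    have hdir : Directed (fun x1 x2 : Set Ω => x1 ⊆ x2)
        (fun n : ℕ => A ∩ {ω | g ω ≤ (n : ℝ)}) := by
      intro n m
      refine ⟨max n m, fun ω h => ⟨h.1, ?_⟩, fun ω h => ⟨h.1, ?_⟩⟩
      · have h2 : g ω ≤ (n : ℝ) := h.2
        exact le_trans h2 (by exact_mod_cast le_max_left n m)
      · have h2 : g ω ≤ (m : ℝ) := h.2
        exact le_trans h2 (by exact_mod_cast le_max_right n m)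
    have hsup : (⨆ n : ℕ, P (A ∩ {ω | g ω ≤ (n : ℝ)})) = P A := by
      rw [← Directed.measure_iUnion hdir, hU]
    by_contra hne
    have hall : ∀ n : ℕ, P (A ∩ {ω | g ω ≤ (n : ℝ)}) = 0 := by
      intro n
      rcases key n with h | h
      · exact h
      · exact absurd h (fun h => hne ⟨_, h⟩)
    rw [iSup_congr hall] at hsup
    simp at hsup
    exact absurd hsup.symm hA.ne'
  have hQbdd : BddBelow Q := by
    by_contra hbdd
    have hinQ : ∀ n : ℕ, (-(n : ℝ)) ∈ Q := by
      intro n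
      obtain ⟨q, hq, hlt⟩ := not_bddBelow_iff.1 hbdd (-(n : ℝ))
      exact hmono (le_of_lt hlt) hq
    have hint : ⋂ n : ℕ, (A ∩ {ω | g ω ≤ -(n : ℝ)}) = ∅ := by
      ext ω
      simp only [Set.mem_iInter, Set.mem_empty_iff_false, iff_false]
      intro h
      obtain ⟨n, hn⟩ := exists_nat_gt (-(g ω))
      have := (h n).2
      simp only [Set.mem_setOf_eq] at this
      linarith
    have htend := tendsto_measure_iInter_atTop
      (μ := P) (s := fun n : ℕ => A ∩ {ω | g ω ≤ -(n : ℝ)})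
      (fun n => (hGm _).nullMeasurableSet)
      (fun n m hnm => Set.inter_subset_inter_right _
        (fun ω h => by
          have h2 : g ω ≤ -(n:ℝ) := le_trans h (neg_le_neg (by exact_mod_cast hnm))
          exact h2))
      ⟨0, measure_ne_top _ _⟩
    rw [hint] at htend
    have hconst : (⇑P ∘ fun n : ℕ => A ∩ {ω | g ω ≤ -(n : ℝ)}) = fun _ => P A := by
      funext n; exact hinQ n
    rw [hconst] at htend
    have := tendsto_nhds_unique htend tendsto_const_nhds
    simp at this
    exact absurd this.symm hA.ne'
  set c := sInf Q with hc
  have hupper : P (A ∩ {ω | g ω ≤ c}) = P A := by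
    have hint : ⋂ n : ℕ, (A ∩ {ω | g ω ≤ c + 1 / ((n : ℝ) + 1)}) = A ∩ {ω | g ω ≤ c} := by
      ext ω
      simp only [Set.mem_iInter, Set.mem_inter_iff, Set.mem_setOf_eq]
      constructor
      · intro h
        refine ⟨(h 0).1, le_of_forall_pos_le_add fun ε hε => ?_⟩
        obtain ⟨n, hn⟩ := exists_nat_one_div_lt hε
        exact le_trans (h n).2 (by linarith)
      · intro h n
        refine ⟨h.1, le_trans h.2 (le_add_of_nonneg_right (by positivity))⟩
    have hinQ : ∀ n : ℕ, (c + 1 / ((n : ℝ) + 1)) ∈ Q := by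
      intro n
      obtain ⟨q, hq, hlt⟩ := (csInf_lt_iff hQbdd hQne).1
        (show sInf Q < c + 1 / ((n : ℝ) + 1) by
          rw [← hc]; exact lt_add_of_pos_right c (by positivity))
      exact hmono (le_of_lt hlt) hq
    have htend := tendsto_measure_iInter_atTop
      (μ := P) (s := fun n : ℕ => A ∩ {ω | g ω ≤ c + 1 / ((n : ℝ) + 1)})
      (fun n => (hGm _).nullMeasurableSet)
      (fun n m hnm => Set.inter_subset_inter_right _
        (fun ω h => by
          have h1 : (1:ℝ) / ((m : ℝ) + 1) ≤ 1 / ((n : ℝ) + 1) :=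
            one_div_le_one_div_of_le (by positivity)
              (by exact_mod_cast Nat.succ_le_succ hnm)
          have h2 : g ω ≤ c + 1 / ((m:ℝ) + 1) := h
          show g ω ≤ c + 1 / ((n:ℝ) + 1)
          linarith))
      ⟨0, measure_ne_top _ _⟩
    rw [hint] at htend
    have hconst : (⇑P ∘ fun n : ℕ => A ∩ {ω | g ω ≤ c + 1 / ((n : ℝ) + 1)})
        = fun _ => P A := by funext n; exact hinQ n
    rw [hconst] at htend
    exact (tendsto_nhds_unique htend tendsto_const_nhds)
  have hlower : P (A ∩ {ω | g ω < c}) = 0 := by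
    have hU : A ∩ {ω | g ω < c} = ⋃ n : ℕ, (A ∩ {ω | g ω ≤ c - 1 / ((n : ℝ) + 1)}) := by
      ext ω
      simp only [Set.mem_iUnion, Set.mem_inter_iff, Set.mem_setOf_eq]
      constructor
      · intro h
        obtain ⟨n, hn⟩ := exists_nat_one_div_lt (show (0:ℝ) < c - g ω by linarith [h.2])
        exact ⟨n, h.1, by linarith⟩
      · rintro ⟨n, h1, h2⟩
        refine ⟨h1, lt_of_le_of_lt h2 (by
          have : (0:ℝ) < 1 / ((n : ℝ) + 1) := by positivity
          linarith)⟩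
    rw [hU]
    refine measure_iUnion_null fun n => ?_
    rcases key (c - 1 / ((n : ℝ) + 1)) with h | h
    · exact h
    · exfalso
      have hle := csInf_le hQbdd (show (c - 1 / ((n : ℝ) + 1)) ∈ Q from h)
      rw [← hc] at hle
      have : (0:ℝ) < 1 / ((n : ℝ) + 1) := by positivity
      linarith
  refine ⟨c, ?_⟩
  have hbad : P (A ∩ {ω | g ω ≠ c}) = 0 := by
    have hsub : A ∩ {ω | g ω ≠ c} ⊆ (A ∩ {ω | g ω < c}) ∪ (A \ (A ∩ {ω | g ω ≤ c})) := by
      intro ω ⟨h1, h2⟩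
      rcases lt_trichotomy (g ω) c with h | h | h
      · exact Or.inl ⟨h1, h⟩
      · exact absurd h h2
      · exact Or.inr ⟨h1, fun hc' => absurd hc'.2 (not_le.2 h)⟩
    refine measure_mono_null hsub (measure_union_null hlower ?_)
    rw [measure_diff Set.inter_subset_left (hGm c).nullMeasurableSet (measure_ne_top _ _),
      hupper, tsub_self]
  have := measure_eq_zero_iff_ae_notMem.1 hbad
  filter_upwards [this] with ω hω hmem
  by_contra hne
  exact hω ⟨hmem, hne⟩

/-- value of a conditional expectation on a positive atom -/
lemma condexp_ae_eq_on_atom [IsProbabilityMeasure P]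
    (hF : IsCompletedNaturalFiltration P X F) (t : ℕ)
    {g : Ω → ℝ} (hgi : Integrable g P) {ω₀ : Ω} (hA : 0 < P (pathAtom X t ω₀)) :
    ∀ᵐ ω ∂P, ω ∈ pathAtom X t ω₀ →
      (P[g|F t]) ω = (∫ x in pathAtom X t ω₀, g x ∂P) / (P (pathAtom X t ω₀)).toReal := by
  set A := pathAtom X t ω₀ with hAdef
  have hAmF : MeasurableSet[F t] A := measurableSet_pathAtom hF t ω₀
  have hAm : MeasurableSet A := F.le t _ hAmF
  obtain ⟨c, hc⟩ := exists_ae_const_on_atom hF t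
    (stronglyMeasurable_condExp.measurable) hA
  have hint : ∫ x in A, (P[g|F t]) x ∂P = ∫ x in A, g x ∂P :=
    setIntegral_condExp (F.le t) hgi hAmF
  have hconst : ∫ x in A, (P[g|F t]) x ∂P = c * (P A).toReal := by
    rw [setIntegral_congr_ae hAm (hc.mono fun ω h hω => h hω)]
    simp [mul_comm, Measure.real]
  have hPA : (P A).toReal ≠ 0 := by
    simp only [ENNReal.toReal_ne_zero]
    exact ⟨ne_of_gt hA, measure_ne_top _ _⟩
  filter_upwards [hc] with ω h hω
  rw [h hω, ← hint, hconst]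
  field_simp
end

/-- the event `X (t+1) = e i`. -/
def EV (X : ℕ → Ω → (Fin N → ℝ)) (t : ℕ) (i : Fin N) : Set Ω := {ω | X (t+1) ω = e N i}

section
variable {P : Measure Ω} {F : Filtration ℕ mΩ} {X : ℕ → Ω → (Fin N → ℝ)}

lemma measurable_X_natSigma (X : ℕ → Ω → (Fin N → ℝ)) {s t : ℕ} (hst : s ≤ t) :
    Measurable[natSigma X t] (X s) := by
  intro E hE
  have h1 : MeasurableSpace.comap (X s) inferInstance ≤ natSigma X t :=
    le_biSup (fun s => MeasurableSpace.comap (X s) inferInstance) hst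
  exact h1 _ ⟨E, hE, rfl⟩

lemma measurable_X (hF : IsCompletedNaturalFiltration P X F) {s t : ℕ} (hst : s ≤ t) :
    Measurable[F t] (X s) :=
  (measurable_X_natSigma X hst).mono (natSigma_le hF t) le_rfl

lemma measurable_X' (hF : IsCompletedNaturalFiltration P X F) (s : ℕ) :
    Measurable (X s) :=
  (measurable_X hF (le_refl s)).mono (F.le s) le_rfl

lemma measurableSet_EV (hF : IsCompletedNaturalFiltration P X F) (t : ℕ) (i : Fin N) :
    MeasurableSet[F (t+1)] (EV X t i) :=
  measurable_X hF le_rfl (measurableSet_singleton (e N i))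

lemma measurableSet_EV' (hF : IsCompletedNaturalFiltration P X F) (t : ℕ) (i : Fin N) :
    MeasurableSet (EV X t i) :=
  F.le (t+1) _ (measurableSet_EV hF t i)

lemma X_eq_indicator (hX : BasisValued X) (t : ℕ) (ω : Ω) (i : Fin N) :
    X (t+1) ω i = (EV X t i).indicator (fun _ => (1:ℝ)) ω := by
  obtain ⟨j, hj⟩ := hX (t+1) ω
  by_cases h : ω ∈ EV X t i
  · have h' : X (t+1) ω = e N i := h
    rw [Set.indicator_of_mem h, h']
    simp [e]
  · rw [Set.indicator_of_notMem h, hj]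
    have hji : j ≠ i := fun hji => h (show X (t+1) ω = e N i by rw [hj, hji])
    simp [e, Pi.single_apply, Ne.symm hji]

lemma abs_X_le_one (hX : BasisValued X) (t : ℕ) (ω : Ω) (i : Fin N) :
    |X (t+1) ω i| ≤ 1 := by
  rw [X_eq_indicator hX t ω i]
  by_cases h : ω ∈ EV X t i
  · rw [Set.indicator_of_mem h]; norm_num
  · rw [Set.indicator_of_notMem h]; norm_num

lemma sum_measure_inter_EV [IsProbabilityMeasure P]
    (hX : BasisValued X) (hF : IsCompletedNaturalFiltration P X F) (t : ℕ)
    {A : Set Ω} (hAm : MeasurableSet A) :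
    ∑ i, P (A ∩ EV X t i) = P A := by
  have hdisj : Pairwise (Function.onFun Disjoint fun i => A ∩ EV X t i) := by
    intro i j hij
    refine Set.disjoint_left.2 fun ω h1 h2 => hij ?_
    exact e_injective N ((h1.2 : X (t+1) ω = e N i).symm.trans (h2.2 : X (t+1) ω = e N j))
  have hcover : ⋃ i, (A ∩ EV X t i) = A := by
    ext ω
    constructor
    · intro h
      obtain ⟨i, hi⟩ := Set.mem_iUnion.1 h
      exact hi.1
    · intro h
      obtain ⟨i, hi⟩ := hX (t+1) ω
      exact Set.mem_iUnion.2 ⟨i, h, hi⟩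
  calc ∑ i, P (A ∩ EV X t i) = ∑' i, P (A ∩ EV X t i) := (tsum_fintype _).symm
    _ = P (⋃ i, (A ∩ EV X t i)) :=
        (measure_iUnion hdisj (fun i => hAm.inter (measurableSet_EV' hF t i))).symm
    _ = P A := by rw [hcover]

/-- a.e. every point lies in a positive-measure atom. -/
lemma ae_pos_pathAtom [IsProbabilityMeasure P] (hX : BasisValued X) (t : ℕ) :
    ∀ᵐ ω ∂P, 0 < P (pathAtom X t ω) := by
  classical
  set Av : (Fin (t+1) → Fin N) → Set Ω :=
    fun v => {ω | ∀ s : Fin (t+1), X s ω = e N (v s)} with hAv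
  have hatom : ∀ ω : Ω, ∃ v, pathAtom X t ω = Av v := by
    intro ω
    choose v hv using fun s : Fin (t+1) => hX s ω
    refine ⟨v, ?_⟩
    ext ω'
    constructor
    · intro h s
      rw [← hv s]
      exact h s (Nat.lt_succ_iff.mp s.isLt)
    · intro h s hs
      have h1 := h ⟨s, Nat.lt_succ_of_le hs⟩
      rw [h1, hv ⟨s, Nat.lt_succ_of_le hs⟩]
  have hnull : P (⋃ v ∈ {v : Fin (t+1) → Fin N | P (Av v) = 0}, Av v) = 0 :=
    (measure_biUnion_null_iff (Set.to_countable _)).2 (fun v hv => hv)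
  filter_upwards [measure_eq_zero_iff_ae_notMem.1 hnull] with ω hω
  obtain ⟨v, hv⟩ := hatom ω
  rcases eq_or_lt_of_le (zero_le : 0 ≤ P (pathAtom X t ω)) with h | h
  · exfalso
    apply hω
    refine Set.mem_biUnion (show P (Av v) = 0 by rw [← hv]; exact h.symm) ?_
    rw [← hv]
    exact mem_pathAtom_self X t ω
  · exact h

/-- value of the conditional probabilities on an atom. -/
lemma condexp_X_on_atom [IsProbabilityMeasure P]
    (hX : BasisValued X) (hF : IsCompletedNaturalFiltration P X F) (t : ℕ)
    {ω₀ : Ω} (hA : 0 < P (pathAtom X t ω₀)) (i : Fin N) :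
    ∀ᵐ ω ∂P, ω ∈ pathAtom X t ω₀ →
      (P[(fun ω' => X (t+1) ω' i)|F t]) ω
        = (P (pathAtom X t ω₀ ∩ EV X t i)).toReal / (P (pathAtom X t ω₀)).toReal := by
  set A := pathAtom X t ω₀
  have hAm : MeasurableSet A := F.le t _ (measurableSet_pathAtom hF t ω₀)
  have hint : Integrable (fun ω' => X (t+1) ω' i) P :=
    integrable_of_ae_bdd (((measurable_pi_apply i).comp (measurable_X' hF (t+1))).aestronglyMeasurable)
      (Eventually.of_forall (fun ω => abs_X_le_one hX t ω i))
  have hval : ∫ x in A, X (t+1) x i ∂P = (P (A ∩ EV X t i)).toReal := by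
    rw [integral_congr_ae (Eventually.of_forall (fun x => X_eq_indicator hX t x i))]
    rw [setIntegral_indicator (measurableSet_EV' hF t i), setIntegral_const]
    rw [smul_eq_mul, mul_one]
    rfl
  filter_upwards [condexp_ae_eq_on_atom hF t hint hA] with ω h hω
  rw [h hω, hval]
end

-- ===================== Part 4 =====================

/-- pure algebra: the weighted average of the jumps vanishes. -/
lemma sum_p_dot_eq_zero {N : ℕ} {p z : Fin N → ℝ} (hp : ∑ i, p i = 1) :
    ∑ i, p i * dotR z (fun j => e N i j - p j) = 0 := by
  classical
  have h1 : ∀ i, p i * dotR z (fun j => e N i j - p j)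
      = ∑ j, z j * p i * e N i j - ∑ j, z j * p i * p j := by
    intro i
    rw [dotR, Finset.mul_sum, ← Finset.sum_sub_distrib]
    refine Finset.sum_congr rfl fun j _ => by ring
  rw [Finset.sum_congr rfl fun i _ => h1 i, Finset.sum_sub_distrib,
    Finset.sum_comm (f := fun i j => z j * p i * e N i j),
    Finset.sum_comm (f := fun i j => z j * p i * p j)]
  have h2 : ∀ j, ∑ i, z j * p i * e N i j = z j * p j := by
    intro j
    have hee : ∀ i : Fin N, z j * p i * e N i j = if j = i then z j * p i else 0 := by
      intro i
      by_cases h : j = i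
      · subst h; simp [e]
      · simp [e, Pi.single_apply, h, Ne.symm h]
    rw [Finset.sum_congr rfl fun i _ => hee i, Finset.sum_ite_eq]
    simp
  have h3 : ∀ j, ∑ i, z j * p i * p j = z j * p j := by
    intro j
    calc ∑ i, z j * p i * p j = (∑ i, p i) * (z j * p j) := by
          rw [Finset.sum_mul]; exact Finset.sum_congr rfl fun i _ => by ring
    _ = z j * p j := by rw [hp, one_mul]
  rw [Finset.sum_congr rfl fun j _ => h2 j, Finset.sum_congr rfl fun j _ => h3 j, sub_self]

section
variable {P : Measure Ω} {F : Filtration ℕ mΩ} {X : ℕ → Ω → (Fin N → ℝ)}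

/-- combine statements that hold a.e. on each positive atom. -/
lemma ae_of_ae_on_atoms [IsProbabilityMeasure P] (hX : BasisValued X) (t : ℕ)
    {Q : Ω → Prop}
    (h : ∀ ω₀ : Ω, 0 < P (pathAtom X t ω₀) → ∀ᵐ ω ∂P, ω ∈ pathAtom X t ω₀ → Q ω) :
    ∀ᵐ ω ∂P, Q ω := by
  classical
  set Av : (Fin (t+1) → Fin N) → Set Ω :=
    fun v => {ω | ∀ s : Fin (t+1), X s ω = e N (v s)} with hAv
  have hatom : ∀ ω : Ω, ∃ v, ω ∈ Av v ∧ pathAtom X t ω = Av v := by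
    intro ω
    choose v hv using fun s : Fin (t+1) => hX s ω
    refine ⟨v, fun s => hv s, ?_⟩
    ext ω'
    constructor
    · intro hmem s
      rw [← hv s]
      exact hmem s (Nat.lt_succ_iff.mp s.isLt)
    · intro hmem s hs
      have h1 := hmem ⟨s, Nat.lt_succ_of_le hs⟩
      rw [h1, hv ⟨s, Nat.lt_succ_of_le hs⟩]
  have hv_null : ∀ v : Fin (t+1) → Fin N, P (Av v ∩ {ω | ¬ Q ω}) = 0 := by
    intro v
    rcases eq_or_lt_of_le (zero_le : 0 ≤ P (Av v)) with hz | hpos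
    · exact measure_mono_null Set.inter_subset_left hz.symm
    · rcases Set.eq_empty_or_nonempty (Av v) with he | ⟨ω₀, hω₀⟩
      · rw [he]; simp
      · have hAv0 : pathAtom X t ω₀ = Av v := by
          obtain ⟨v', hv'1, hv'2⟩ := hatom ω₀
          have : v' = v := by
            funext s
            exact e_injective N ((hv'1 s).symm.trans (hω₀ s))
          rw [hv'2, this]
        have := h ω₀ (by rw [hAv0]; exact hpos)
        rw [eventually_iff, mem_ae_iff] at this
        refine measure_mono_null ?_ this
        intro ω hω hmem
        rw [hAv0] at hmem
        exact hω.2 (hmem hω.1)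
  have hcover : {ω | ¬ Q ω} ⊆ ⋃ v : Fin (t+1) → Fin N, (Av v ∩ {ω | ¬ Q ω}) := by
    intro ω hω
    obtain ⟨v, hv1, -⟩ := hatom ω
    exact Set.mem_iUnion.2 ⟨v, hv1, hω⟩
  rw [eventually_iff, mem_ae_iff]
  exact measure_mono_null (by intro ω hω; exact hcover hω) (measure_iUnion_null hv_null)

/-- pick a point in a positive set satisfying an a.e. property. -/
lemma exists_mem_of_ae {S : Set Ω} (hS : 0 < P S) {R : Ω → Prop}
    (hR : ∀ᵐ ω ∂P, R ω) : ∃ ω, ω ∈ S ∧ R ω := by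
  have hbad : P {ω | ¬ R ω} = 0 := ae_iff.1 hR
  have hsub : S ⊆ (S ∩ {ω | R ω}) ∪ {ω | ¬ R ω} := by
    intro ω hω
    by_cases h : R ω
    · exact Or.inl ⟨hω, h⟩
    · exact Or.inr h
  have hpos : P (S ∩ {ω | R ω}) ≠ 0 := by
    intro h0
    have h1 : P S ≤ P (S ∩ {ω | R ω}) + P {ω | ¬ R ω} :=
      le_trans (measure_mono hsub) (measure_union_le _ _)
    rw [h0, hbad, add_zero] at h1
    exact absurd (le_antisymm h1 zero_le) (ne_of_gt hS)
  obtain ⟨ω, hω⟩ := nonempty_of_measure_ne_zero hpos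
  exact ⟨ω, hω.1, hω.2⟩

/-- vector version of a.e. constancy on atoms. -/
lemma exists_ae_const_on_atom_vec [IsProbabilityMeasure P]
    (hF : IsCompletedNaturalFiltration P X F) (t : ℕ)
    {Z : Ω → Fin N → ℝ} (hZ : StronglyMeasurable[F t] Z) {ω₀ : Ω}
    (hA : 0 < P (pathAtom X t ω₀)) :
    ∃ z : Fin N → ℝ, ∀ᵐ ω ∂P, ω ∈ pathAtom X t ω₀ → ∀ i, Z ω i = z i := by
  have h := fun i : Fin N => exists_ae_const_on_atom hF t
    ((measurable_pi_apply i).comp hZ.measurable) hA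
  choose z hz using h
  refine ⟨z, ?_⟩
  filter_upwards [ae_all_iff.2 hz] with ω hω hmem i
  exact hω i hmem

/-- a.e., the conditional probabilities agree with the atom formula, for every `i`. -/
lemma condexp_X_vec_on_atom [IsProbabilityMeasure P]
    (hX : BasisValued X) (hF : IsCompletedNaturalFiltration P X F) (t : ℕ)
    {ω₀ : Ω} (hA : 0 < P (pathAtom X t ω₀)) :
    ∀ᵐ ω ∂P, ω ∈ pathAtom X t ω₀ → ∀ i,
      (P[(fun ω' => X (t+1) ω' i)|F t]) ω
        = (P (pathAtom X t ω₀ ∩ EV X t i)).toReal / (P (pathAtom X t ω₀)).toReal := by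
  filter_upwards [ae_all_iff.2 (fun i => condexp_X_on_atom hX hF t hA i)] with ω hω hmem i
  exact hω i hmem

lemma pAtom_sum_one [IsProbabilityMeasure P]
    (hX : BasisValued X) (hF : IsCompletedNaturalFiltration P X F) (t : ℕ)
    {ω₀ : Ω} (hA : 0 < P (pathAtom X t ω₀)) :
    ∑ i, (P (pathAtom X t ω₀ ∩ EV X t i)).toReal / (P (pathAtom X t ω₀)).toReal = 1 := by
  have hAm : MeasurableSet (pathAtom X t ω₀) := F.le t _ (measurableSet_pathAtom hF t ω₀)
  have h1 : ∑ i, (P (pathAtom X t ω₀ ∩ EV X t i)).toReal = (P (pathAtom X t ω₀)).toReal := by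
    rw [← ENNReal.toReal_sum (fun i _ => measure_ne_top _ _),
      sum_measure_inter_EV hX hF t hAm]
  rw [← Finset.sum_div, h1, div_self]
  simp only [ENNReal.toReal_ne_zero]
  exact ⟨ne_of_gt hA, measure_ne_top _ _⟩

lemma pAtom_eq_zero_iff [IsFiniteMeasure P] {t : ℕ} {ω₀ : Ω} (hA : 0 < P (pathAtom X t ω₀)) (i : Fin N) :
    (P (pathAtom X t ω₀ ∩ EV X t i)).toReal / (P (pathAtom X t ω₀)).toReal = 0 ↔
      P (pathAtom X t ω₀ ∩ EV X t i) = 0 := by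
  rw [div_eq_zero_iff]
  constructor
  · rintro (h | h)
    · exact (ENNReal.toReal_eq_zero_iff _).1 h |>.resolve_right (measure_ne_top _ _)
    · exact absurd h (by
        simp only [ENNReal.toReal_ne_zero]
        exact ⟨ne_of_gt hA, measure_ne_top _ _⟩)
  · intro h
    left
    simp [h]

end

lemma dotR_sub (a b w : Fin N → ℝ) : dotR (a - b) w = dotR a w - dotR b w := by
  simp only [dotR, Pi.sub_apply, ← Finset.sum_sub_distrib]
  exact Finset.sum_congr rfl fun j _ => by ring

section
variable {P : Measure Ω} {F : Filtration ℕ mΩ} {X : ℕ → Ω → (Fin N → ℝ)}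

lemma measurable_f_z {f : Ω → ℕ → (Fin N → ℝ) → ℝ}
    (hfAd : ∀ t : ℕ, Measurable[(F t).prod inferInstance]
      fun p : Ω × (Fin N → ℝ) => f p.1 t p.2) (t : ℕ) (z : Fin N → ℝ) :
    Measurable[F t] fun ω => f ω t z := by
  have hprod : @Measurable Ω (Ω × (Fin N → ℝ)) (F t) ((F t).prod inferInstance)
      (fun ω => (ω, z)) := Measurable.prodMk measurable_id measurable_const
  simpa [Function.comp_def] using (hfAd t).comp hprod

lemma measurable_f_Z {f : Ω → ℕ → (Fin N → ℝ) → ℝ}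
    (hfAd : ∀ t : ℕ, Measurable[(F t).prod inferInstance]
      fun p : Ω × (Fin N → ℝ) => f p.1 t p.2) (t : ℕ)
    {Z : Ω → Fin N → ℝ} (hZ : StronglyMeasurable[F t] Z) :
    Measurable[F t] fun ω => f ω t (Z ω) := by
  have hprod : @Measurable Ω (Ω × (Fin N → ℝ)) (F t) ((F t).prod inferInstance)
      (fun ω => (ω, Z ω)) := Measurable.prodMk measurable_id hZ.measurable
  simpa [Function.comp_def] using (hfAd t).comp hprod

lemma measurable_dotMdiff (hF : IsCompletedNaturalFiltration P X F) (t : ℕ)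
    {Z : Ω → Fin N → ℝ} (hZ : StronglyMeasurable[F t] Z) :
    Measurable fun ω => dotR (Z ω) (Mdiff P F X t ω) := by
  simp only [dotR, Mdiff]
  refine Finset.measurable_sum Finset.univ fun i _ => ?_
  exact ((measurable_pi_apply i).comp (hZ.measurable.mono (F.le t) le_rfl)).mul
    (((measurable_pi_apply i).comp (measurable_X' hF (t+1))).sub
      (stronglyMeasurable_condExp.measurable.mono (F.le t) le_rfl))

/-- the minimum in `minJump` is attained over the finitely many positive events. -/
lemma minJump_spec [IsProbabilityMeasure P] (hX : BasisValued X)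
    (hF : IsCompletedNaturalFiltration P X F) (t : ℕ) {ω₀ : Ω}
    (hA : 0 < P (pathAtom X t ω₀)) (z z' : Fin N → ℝ) (ω : Ω) :
    (∃ i, 0 < P (EV X t i ∩ pathAtom X t ω₀) ∧ minJump P F X t ω₀ z z' ω
        = dotR (z - z') (fun j => e N i j - (P[(fun ω'' => X (t+1) ω'' j)|F t]) ω)) ∧
    (∀ i, 0 < P (EV X t i ∩ pathAtom X t ω₀) → minJump P F X t ω₀ z z' ω
        ≤ dotR (z - z') (fun j => e N i j - (P[(fun ω'' => X (t+1) ω'' j)|F t]) ω)) := by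
  classical
  set g : Fin N → ℝ :=
    fun i => dotR (z - z') (fun j => e N i j - (P[(fun ω'' => X (t+1) ω'' j)|F t]) ω)
    with hg
  set J : Finset (Fin N) :=
    Finset.univ.filter (fun i => 0 < P (EV X t i ∩ pathAtom X t ω₀)) with hJ
  have hAm : MeasurableSet (pathAtom X t ω₀) := F.le t _ (measurableSet_pathAtom hF t ω₀)
  have hJne : J.Nonempty := by
    by_contra hemp
    have hall : ∀ i, P (pathAtom X t ω₀ ∩ EV X t i) = 0 := by
      intro i
      by_contra hne
      refine hemp ⟨i, Finset.mem_filter.2 ⟨Finset.mem_univ i, ?_⟩⟩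
      rw [Set.inter_comm]
      exact lt_of_le_of_ne zero_le (Ne.symm hne)
    have := sum_measure_inter_EV hX hF t (A := pathAtom X t ω₀) hAm
    rw [Finset.sum_congr rfl (fun i _ => hall i)] at this
    simp at this
    exact absurd this.symm hA.ne'
  have hset : {r : ℝ | ∃ i : Fin N, 0 < P ({ω' | X (t + 1) ω' = e N i} ∩ pathAtom X t ω₀) ∧
      r = dotR (z - z') (fun j => e N i j - (P[(fun ω'' => X (t + 1) ω'' j)|F t]) ω)}
      = ↑(J.image g) := by
    ext r
    constructor
    · rintro ⟨i, hi, hr⟩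
      exact Finset.mem_coe.2 (Finset.mem_image.2
        ⟨i, Finset.mem_filter.2 ⟨Finset.mem_univ i, hi⟩, hr.symm⟩)
    · intro hr
      obtain ⟨i, hiJ, hgi⟩ := Finset.mem_image.1 (Finset.mem_coe.1 hr)
      exact ⟨i, (Finset.mem_filter.1 hiJ).2, hgi.symm⟩
  have himne : (J.image g).Nonempty := hJne.image g
  have hval : minJump P F X t ω₀ z z' ω = (J.image g).min' himne := by
    rw [minJump, hset]
    exact himne.csInf_eq_min'
  constructor
  · obtain ⟨i, hiJ, hgi⟩ := Finset.mem_image.1 ((J.image g).min'_mem himne)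
    refine ⟨i, (Finset.mem_filter.1 hiJ).2, ?_⟩
    rw [hval, ← hgi]
  · intro i hi
    rw [hval]
    exact Finset.min'_le _ _ (Finset.mem_image_of_mem g
      (Finset.mem_filter.2 ⟨Finset.mem_univ i, hi⟩))

/-- key bound: if the martingale increment difference decomposes as a small term plus an
`F t`-measurable term, then it is uniformly small. -/
lemma dot_bound_on_atom [IsProbabilityMeasure P]
    (hX : BasisValued X) (hF : IsCompletedNaturalFiltration P X F) (t : ℕ)
    {Z1 Z2 : Ω → Fin N → ℝ} (hZ1 : StronglyMeasurable[F t] Z1)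
    (hZ2 : StronglyMeasurable[F t] Z2)
    {u h : Ω → ℝ} (hh : Measurable[F t] h) {ε : ℝ}
    (heq : ∀ᵐ ω ∂P, dotR (Z1 ω) (Mdiff P F X t ω) - dotR (Z2 ω) (Mdiff P F X t ω)
      = u ω + h ω)
    (hu : ∀ᵐ ω ∂P, |u ω| ≤ ε) :
    ∀ᵐ ω ∂P, |dotR (Z1 ω) (Mdiff P F X t ω) - dotR (Z2 ω) (Mdiff P F X t ω)| ≤ 2 * ε := by
  classical
  have hε : 0 ≤ ε := by
    obtain ⟨ω, -, hω⟩ := exists_mem_of_ae (P := P) (S := Set.univ)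
      (by simp [measure_univ]) hu
    exact le_trans (abs_nonneg _) hω
  refine ae_of_ae_on_atoms hX t (fun ω₀ hA => ?_)
  obtain ⟨z1, hz1⟩ := exists_ae_const_on_atom_vec hF t hZ1 hA
  obtain ⟨z2, hz2⟩ := exists_ae_const_on_atom_vec hF t hZ2 hA
  obtain ⟨ch, hch⟩ := exists_ae_const_on_atom hF t hh hA
  have hp := condexp_X_vec_on_atom hX hF t hA
  set p : Fin N → ℝ :=
    fun i => (P (pathAtom X t ω₀ ∩ EV X t i)).toReal / (P (pathAtom X t ω₀)).toReal
    with hpdef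
  have hpsum : ∑ i, p i = 1 := pAtom_sum_one hX hF t hA
  have hpnn : ∀ i, 0 ≤ p i := fun i => div_nonneg ENNReal.toReal_nonneg ENNReal.toReal_nonneg
  set d : Fin N → ℝ := fun i => dotR (fun j => z1 j - z2 j) (fun j => e N i j - p j)
    with hddef
  have hW : ∀ᵐ ω ∂P, ω ∈ pathAtom X t ω₀ → ∀ i, ω ∈ EV X t i →
      dotR (Z1 ω) (Mdiff P F X t ω) - dotR (Z2 ω) (Mdiff P F X t ω) = d i := by
    filter_upwards [hz1, hz2, hp] with ω h1 h2 h3 hmem i hEV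
    have hXω : X (t+1) ω = e N i := hEV
    simp only [dotR, Mdiff, hddef, ← Finset.sum_sub_distrib]
    refine Finset.sum_congr rfl fun j _ => ?_
    rw [h1 hmem j, h2 hmem j, h3 hmem j, hXω]
    ring
  have hsum0 : ∑ i, p i * d i = 0 := sum_p_dot_eq_zero hpsum
  have hpick : ∀ i : Fin N, p i ≠ 0 → ∃ w : ℝ, |w| ≤ ε ∧ d i = w + ch := by
    intro i hpi
    have hApos : 0 < P (pathAtom X t ω₀ ∩ EV X t i) := by
      rcases eq_or_lt_of_le (zero_le : 0 ≤ P (pathAtom X t ω₀ ∩ EV X t i)) with hz | hpos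
      · exact absurd ((pAtom_eq_zero_iff hA i).2 hz.symm) hpi
      · exact hpos
    obtain ⟨ω, hωmem, hωR⟩ := exists_mem_of_ae hApos
      (hW.and (heq.and (hu.and hch)))
    obtain ⟨hW1, heq1, hu1, hch1⟩ := hωR
    refine ⟨u ω, hu1, ?_⟩
    rw [← hW1 hωmem.1 i hωmem.2, heq1, hch1 hωmem.1]
  choose! w hw1 hw2 using hpick
  have hch_bound : |ch| ≤ ε := by
    have h1 : ∀ i, p i * d i = p i * w i + p i * ch := by
      intro i
      by_cases hpi : p i = 0
      · simp [hpi]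
      · rw [hw2 i hpi]; ring
    have h2 : (0:ℝ) = (∑ i, p i * w i) + ch := by
      rw [← hsum0, Finset.sum_congr rfl fun i _ => h1 i, Finset.sum_add_distrib]
      congr 1
      rw [← Finset.sum_mul, hpsum, one_mul]
    have h3 : |∑ i, p i * w i| ≤ ε := by
      calc |∑ i, p i * w i| ≤ ∑ i, |p i * w i| := Finset.abs_sum_le_sum_abs _ _
        _ ≤ ∑ i, p i * ε := by
            refine Finset.sum_le_sum fun i _ => ?_
            by_cases hpi : p i = 0
            · simp [hpi]
            · rw [abs_mul, abs_of_nonneg (hpnn i)]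
              exact mul_le_mul_of_nonneg_left (hw1 i hpi) (hpnn i)
        _ = ε := by rw [← Finset.sum_mul, hpsum, one_mul]
    have : ch = -(∑ i, p i * w i) := by linarith
    rw [this, abs_neg]
    exact h3
  have hnullev : ∀ᵐ ω ∂P, ∀ i, P (pathAtom X t ω₀ ∩ EV X t i) = 0 →
      ω ∉ pathAtom X t ω₀ ∩ EV X t i := by
    rw [ae_all_iff]
    intro i
    by_cases hz : P (pathAtom X t ω₀ ∩ EV X t i) = 0
    · filter_upwards [measure_eq_zero_iff_ae_notMem.1 hz] with ω hω _
      exact hω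
    · filter_upwards with ω hmem
      exact absurd hmem hz
  filter_upwards [hW, hnullev] with ω h1 h2 hmem
  obtain ⟨i, hEV⟩ := hX (t+1) ω
  have hEV' : ω ∈ EV X t i := hEV
  by_cases hpi : p i = 0
  · exact absurd ⟨hmem, hEV'⟩ (h2 i ((pAtom_eq_zero_iff hA i).1 hpi))
  · rw [h1 hmem i hEV', hw2 i hpi]
    calc |w i + ch| ≤ |w i| + |ch| := abs_add_le _ _
      _ ≤ ε + ε := add_le_add (hw1 i hpi) hch_bound
      _ = 2 * ε := by ring
end
section
variable {P : Measure Ω} {F : Filtration ℕ mΩ} {X : ℕ → Ω → (Fin N → ℝ)}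

lemma EV_pairwise_disjoint {A : Set Ω} (t : ℕ) :
    Pairwise (Function.onFun Disjoint fun i => A ∩ EV X t i) := by
  intro i j hij
  refine Set.disjoint_left.2 fun ω h1 h2 => hij ?_
  exact e_injective N ((h1.2 : X (t+1) ω = e N i).symm.trans (h2.2 : X (t+1) ω = e N j))

lemma iUnion_inter_EV (hX : BasisValued X) {A : Set Ω} (t : ℕ) :
    ⋃ i, (A ∩ EV X t i) = A := by
  ext ω
  constructor
  · intro h
    obtain ⟨i, hi⟩ := Set.mem_iUnion.1 h
    exact hi.1
  · intro h
    obtain ⟨i, hi⟩ := hX (t+1) ω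
    exact Set.mem_iUnion.2 ⟨i, h, hi⟩

/-- bounded martingale increments have vanishing conditional expectation -/
lemma condexp_dot_eq_zero [IsProbabilityMeasure P]
    (hX : BasisValued X) (hF : IsCompletedNaturalFiltration P X F) (t : ℕ)
    {Z1 : Ω → Fin N → ℝ} (hZ1 : StronglyMeasurable[F t] Z1) {K : ℝ}
    (hbdd : ∀ᵐ ω ∂P, |dotR (Z1 ω) (Mdiff P F X t ω)| ≤ K) :
    (P[(fun ω => dotR (Z1 ω) (Mdiff P F X t ω))|F t]) =ᵐ[P] 0 := by
  classical
  set W : Ω → ℝ := fun ω => dotR (Z1 ω) (Mdiff P F X t ω) with hWdef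
  have hWm : Measurable W := measurable_dotMdiff hF t hZ1
  have hWi : Integrable W P := integrable_of_ae_bdd hWm.aestronglyMeasurable hbdd
  have hmain : ∀ᵐ ω ∂P, (P[W|F t]) ω = 0 := by
    refine ae_of_ae_on_atoms hX t (fun ω₀ hA => ?_)
    have hAm : MeasurableSet (pathAtom X t ω₀) := F.le t _ (measurableSet_pathAtom hF t ω₀)
    obtain ⟨z1, hz1⟩ := exists_ae_const_on_atom_vec hF t hZ1 hA
    have hp := condexp_X_vec_on_atom hX hF t hA
    set p : Fin N → ℝ :=
      fun i => (P (pathAtom X t ω₀ ∩ EV X t i)).toReal / (P (pathAtom X t ω₀)).toReal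
      with hpdef
    have hpsum : ∑ i, p i = 1 := pAtom_sum_one hX hF t hA
    set d : Fin N → ℝ := fun i => dotR z1 (fun j => e N i j - p j) with hddef
    have hW : ∀ᵐ ω ∂P, ω ∈ pathAtom X t ω₀ → ∀ i, ω ∈ EV X t i → W ω = d i := by
      filter_upwards [hz1, hp] with ω h1 h3 hmem i hEV
      have hXω : X (t+1) ω = e N i := hEV
      simp only [hWdef, dotR, Mdiff, hddef]
      refine Finset.sum_congr rfl fun j _ => ?_
      rw [h1 hmem j, h3 hmem j, hXω]
    have hAint : ∫ x in pathAtom X t ω₀, W x ∂P = 0 := by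
      have hdecomp : ∫ x in pathAtom X t ω₀, W x ∂P
          = ∑ i, ∫ x in pathAtom X t ω₀ ∩ EV X t i, W x ∂P := by
        have h1 : ∫ x in ⋃ i, (pathAtom X t ω₀ ∩ EV X t i), W x ∂P
            = ∑' i, ∫ x in pathAtom X t ω₀ ∩ EV X t i, W x ∂P :=
          integral_iUnion (fun i => hAm.inter (measurableSet_EV' hF t i))
            (EV_pairwise_disjoint t) hWi.integrableOn
        rw [iUnion_inter_EV hX t] at h1
        rw [h1, tsum_fintype]
      have hval : ∀ i, ∫ x in pathAtom X t ω₀ ∩ EV X t i, W x ∂P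
          = d i * (P (pathAtom X t ω₀ ∩ EV X t i)).toReal := by
        intro i
        have hmeas : MeasurableSet (pathAtom X t ω₀ ∩ EV X t i) :=
          hAm.inter (measurableSet_EV' hF t i)
        have := exists_mem_of_ae (P := P) (S := Set.univ) (by simp [measure_univ]) hW
        rw [setIntegral_congr_ae hmeas ((hW.mono fun ω hω hmem => hω hmem.1 i hmem.2))]
        rw [setIntegral_const, smul_eq_mul, mul_comm]
        rfl
      rw [hdecomp, Finset.sum_congr rfl fun i _ => hval i]
      have hrw : ∀ i, d i * (P (pathAtom X t ω₀ ∩ EV X t i)).toReal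
          = (p i * d i) * (P (pathAtom X t ω₀)).toReal := by
        intro i
        have hPA : (P (pathAtom X t ω₀)).toReal ≠ 0 := by
          simp only [ENNReal.toReal_ne_zero]
          exact ⟨hA.ne', measure_ne_top _ _⟩
        rw [hpdef]
        field_simp
      rw [Finset.sum_congr rfl fun i _ => hrw i, ← Finset.sum_mul,
        sum_p_dot_eq_zero hpsum, zero_mul]
    filter_upwards [condexp_ae_eq_on_atom hF t hWi hA] with ω h hmem
    rw [h hmem, hAint, zero_div]
  filter_upwards [hmain] with ω h
  simpa using h
end
section
variable {P : Measure Ω} {F : Filtration ℕ mΩ} {X : ℕ → Ω → (Fin N → ℝ)}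

/-- the fundamental one-step contraction estimate. -/
lemma onestep_contraction [IsProbabilityMeasure P]
    (hX : BasisValued X) (hF : IsCompletedNaturalFiltration P X F)
    {α : ℝ} (hα : 0 < α) {f : Ω → ℕ → (Fin N → ℝ) → ℝ}
    (hfAd : ∀ t : ℕ, Measurable[(F t).prod inferInstance]
      fun p : Ω × (Fin N → ℝ) => f p.1 t p.2)
    (hfComp : ComparisonCondition P F X fun ω t _ z => f ω t z)
    (t : ℕ) {Y1 Y2 Y1' Y2' : Ω → ℝ} {Z1 Z2 : Ω → Fin N → ℝ}
    (hY1 : Measurable[F t] Y1) (hY2 : Measurable[F t] Y2)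
    (hZ1 : StronglyMeasurable[F t] Z1) (hZ2 : StronglyMeasurable[F t] Z2)
    {D : ℝ}
    (heq1 : ∀ᵐ ω ∂P, Y1' ω
      = (1+α) * Y1 ω - f ω t (Z1 ω) + dotR (Z1 ω) (Mdiff P F X t ω))
    (heq2 : ∀ᵐ ω ∂P, Y2' ω
      = (1+α) * Y2 ω - f ω t (Z2 ω) + dotR (Z2 ω) (Mdiff P F X t ω))
    (hD : ∀ᵐ ω ∂P, |Y1' ω - Y2' ω| ≤ D) :
    ∀ᵐ ω ∂P, |Y1 ω - Y2 ω| ≤ D / (1+α) := by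
  classical
  have h1α : (0:ℝ) < 1 + α := by linarith
  refine ae_of_ae_on_atoms hX t (fun ω₀ hA => ?_)
  obtain ⟨z1, hz1⟩ := exists_ae_const_on_atom_vec hF t hZ1 hA
  obtain ⟨z2, hz2⟩ := exists_ae_const_on_atom_vec hF t hZ2 hA
  obtain ⟨c1, hc1⟩ := exists_ae_const_on_atom hF t hY1 hA
  obtain ⟨c2, hc2⟩ := exists_ae_const_on_atom hF t hY2 hA
  obtain ⟨cf, hcf⟩ := exists_ae_const_on_atom hF t
    ((measurable_f_z hfAd t z1).sub (measurable_f_z hfAd t z2)) hA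
  have hp := condexp_X_vec_on_atom hX hF t hA
  set p : Fin N → ℝ :=
    fun i => (P (pathAtom X t ω₀ ∩ EV X t i)).toReal / (P (pathAtom X t ω₀)).toReal
    with hpdef
  set d : Fin N → ℝ := fun i => dotR (z1 - z2) (fun j => e N i j - p j) with hddef
  have hEvEq : ∀ᵐ ω ∂P, ω ∈ pathAtom X t ω₀ → ∀ i, ω ∈ EV X t i →
      Y1' ω - Y2' ω = (1+α) * (c1 - c2) - cf + d i := by
    filter_upwards [heq1, heq2, hz1, hz2, hc1, hc2, hcf, hp] with ω e1 e2 h1 h2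
      hc1' hc2' hcf' h3 hmem i hEV
    have hXω : X (t+1) ω = e N i := hEV
    have hZ1ω : Z1 ω = z1 := funext (h1 hmem)
    have hZ2ω : Z2 ω = z2 := funext (h2 hmem)
    have hdot1 : dotR (Z1 ω) (Mdiff P F X t ω) = dotR z1 (fun j => e N i j - p j) := by
      simp only [dotR, Mdiff]
      refine Finset.sum_congr rfl fun j _ => ?_
      rw [hZ1ω, h3 hmem j, hXω]
    have hdot2 : dotR (Z2 ω) (Mdiff P F X t ω) = dotR z2 (fun j => e N i j - p j) := by
      simp only [dotR, Mdiff]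
      refine Finset.sum_congr rfl fun j _ => ?_
      rw [hZ2ω, h3 hmem j, hXω]
    have hfc : f ω t (Z1 ω) - f ω t (Z2 ω) = cf := by
      rw [hZ1ω, hZ2ω]
      exact hcf' hmem
    have hdd : d i = dotR z1 (fun j => e N i j - p j) - dotR z2 (fun j => e N i j - p j) :=
      dotR_sub z1 z2 _
    rw [e1, e2, hc1' hmem, hc2' hmem, hdot1, hdot2]
    linarith [hfc, hdd]
  have hcomp1 := hfComp t 0 z1 z2 ω₀ hA
  have hcomp2 := hfComp t 0 z2 z1 ω₀ hA
  obtain ⟨ωm, hωmA, hωmR⟩ := exists_mem_of_ae hA (hcomp1.and (hcomp2.and (hp.and hcf)))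
  obtain ⟨hm1, hm2, hpm, hcfm⟩ := hωmR
  have hcfval : f ωm t z1 - f ωm t z2 = cf := hcfm hωmA
  obtain ⟨⟨i₀, hi₀pos, hval₀⟩, -⟩ := minJump_spec hX hF t hA z1 z2 ωm
  obtain ⟨⟨i₁, hi₁pos, hval₁⟩, -⟩ := minJump_spec hX hF t hA z2 z1 ωm
  have hval₀' : minJump P F X t ω₀ z1 z2 ωm = d i₀ := by
    rw [hval₀, hddef]
    congr 1
    funext j
    rw [hpm hωmA j]
  have hval₁' : minJump P F X t ω₀ z2 z1 ωm = -(d i₁) := by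
    have h1 : dotR (z2 - z1) (fun j => e N i₁ j - p j) = -(d i₁) := by
      rw [dotR_sub, hddef]
      simp only
      rw [dotR_sub]
      ring
    rw [hval₁, ← h1]
    congr 1
    funext j
    rw [hpm hωmA j]
  have hd0cf : d i₀ ≤ cf := by
    have hc1' := hm1 hωmA
    simp only at hc1'
    rcases eq_or_ne (minJump P F X t ω₀ z1 z2 ωm) 0 with h0 | h0
    · have := hc1'.1 h0
      rw [hval₀'] at h0
      linarith [hcfval]
    · have := hc1'.2 h0
      rw [hval₀'] at this
      linarith [hcfval]
  have hd1cf : cf ≤ d i₁ := by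
    have hc2' := hm2 hωmA
    simp only at hc2'
    have hcfval' : f ωm t z2 - f ωm t z1 = -cf := by linarith [hcfval]
    rcases eq_or_ne (minJump P F X t ω₀ z2 z1 ωm) 0 with h0 | h0
    · have := hc2'.1 h0
      rw [hval₁'] at h0
      linarith [hcfval']
    · have := hc2'.2 h0
      rw [hval₁'] at this
      linarith [hcfval']
  have hbound : ∀ i : Fin N, 0 < P (EV X t i ∩ pathAtom X t ω₀) →
      ∃ ω, (Y1' ω - Y2' ω = (1+α) * (c1 - c2) - cf + d i) ∧ |Y1' ω - Y2' ω| ≤ D := by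
    intro i hpos
    rw [Set.inter_comm] at hpos
    obtain ⟨ω, hωmem, hωR⟩ := exists_mem_of_ae hpos (hEvEq.and hD)
    exact ⟨ω, hωR.1 hωmem.1 i hωmem.2, hωR.2⟩
  obtain ⟨ωa, hEa, hDa⟩ := hbound i₀ hi₀pos
  obtain ⟨ωb, hEb, hDb⟩ := hbound i₁ hi₁pos
  have hlow : -D ≤ (1+α) * (c1 - c2) := by
    have := (abs_le.1 hDa).1
    linarith [hd0cf]
  have hhigh : (1+α) * (c1 - c2) ≤ D := by
    have := (abs_le.1 hDb).2
    linarith [hd1cf]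
  have hfinal : |c1 - c2| ≤ D / (1+α) := by
    refine abs_le.2 ⟨?_, ?_⟩
    · rw [← neg_div, div_le_iff₀ h1α, mul_comm]
      exact hlow
    · rw [le_div_iff₀ h1α, mul_comm]
      exact hhigh
  filter_upwards [hc1, hc2] with ω h1 h2 hmem
  rw [h1 hmem, h2 hmem]
  exact hfinal
end
end AuxLemmas


section MainLemmas
variable {Ω : Type*} {mΩ : MeasurableSpace Ω} {N : ℕ}
variable {P : Measure Ω} {F : Filtration ℕ mΩ} {X : ℕ → Ω → (Fin N → ℝ)}

lemma dotR_zero' (w : Fin N → ℝ) : dotR (fun _ => (0:ℝ)) w = 0 := by simp [dotR]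

lemma dotR_e_sub (zv pv : Fin N → ℝ) (i : Fin N) :
    dotR zv (fun j => e N i j - pv j) = zv i - ∑ j, zv j * pv j := by
  classical
  have h1 : ∀ j, zv j * (e N i j - pv j) = (if i = j then zv j else 0) - zv j * pv j := by
    intro j
    by_cases h : i = j
    · subst h; simp [e]; ring
    · simp [e, Pi.single_apply, h, Ne.symm h]
  rw [dotR, Finset.sum_congr rfl fun j _ => h1 j, Finset.sum_sub_distrib, Finset.sum_ite_eq]
  simp

/-- one-step bound for a one-step system with bounded driver at 0. -/
lemma onestep_bound [IsProbabilityMeasure P]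
    (hX : BasisValued X) (hF : IsCompletedNaturalFiltration P X F)
    {α : ℝ} (hα : 0 < α) {f : Ω → ℕ → (Fin N → ℝ) → ℝ}
    (hfAd : ∀ t : ℕ, Measurable[(F t).prod inferInstance]
      fun p : Ω × (Fin N → ℝ) => f p.1 t p.2)
    (hfComp : ComparisonCondition P F X fun ω t _ z => f ω t z)
    {C : ℝ} (hfBdd : ∀ (ω : Ω) (t : ℕ), |f ω t 0| ≤ C)
    (t : ℕ) {Y1 Y1' : Ω → ℝ} {Z1 : Ω → Fin N → ℝ}
    (hY1 : Measurable[F t] Y1) (hZ1 : StronglyMeasurable[F t] Z1) {D' : ℝ}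
    (heq1 : ∀ᵐ ω ∂P, Y1' ω
      = (1+α) * Y1 ω - f ω t (Z1 ω) + dotR (Z1 ω) (Mdiff P F X t ω))
    (hD' : ∀ᵐ ω ∂P, |Y1' ω| ≤ D') :
    ∀ᵐ ω ∂P, |Y1 ω| ≤ (D' + C) / (1+α) := by
  have heq2 : ∀ᵐ ω ∂P, (fun ω' => -(f ω' t 0)) ω
      = (1+α) * (fun _ => (0:ℝ)) ω - f ω t ((fun _ => (0 : Fin N → ℝ)) ω)
        + dotR ((fun _ => (0 : Fin N → ℝ)) ω) (Mdiff P F X t ω) := by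
    filter_upwards with ω
    have h0 : dotR (0 : Fin N → ℝ) (Mdiff P F X t ω) = 0 := by simp [dotR]
    simp only [h0]
    ring
  have hD : ∀ᵐ ω ∂P, |Y1' ω - (fun ω' => -(f ω' t 0)) ω| ≤ D' + C := by
    filter_upwards [hD'] with ω h1
    have h2 := hfBdd ω t
    simp only [sub_neg_eq_add]
    calc |Y1' ω + f ω t 0| ≤ |Y1' ω| + |f ω t 0| := abs_add_le _ _
      _ ≤ D' + C := add_le_add h1 h2
  have := onestep_contraction hX hF hα hfAd hfComp t hY1 measurable_const hZ1
    stronglyMeasurable_const heq1 heq2 hD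
  filter_upwards [this] with ω h
  simpa using h

/-- extract the one-step relation from a finite-horizon BSDE solution. -/
lemma finite_onestep {α : ℝ} {f : Ω → ℕ → (Fin N → ℝ) → ℝ} {T : ℕ}
    {Y : ℕ → Ω → ℝ} {Z : ℕ → Ω → Fin N → ℝ}
    (hT : SolvesFiniteBSDE P F X (fun ω u y z => f ω u z - α * y) T (fun _ => 0) Y Z)
    {t : ℕ} (ht : t < T) :
    ∀ᵐ ω ∂P, Y (t+1) ω
      = (1+α) * Y t ω - f ω t (Z t ω) + dotR (Z t ω) (Mdiff P F X t ω) := by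
  filter_upwards [hT.2.2 t (le_of_lt ht), hT.2.2 (t+1) ht] with ω h1 h2
  rw [Finset.sum_eq_sum_Ico_succ_bot ht, Finset.sum_eq_sum_Ico_succ_bot ht
    (f := fun u => dotR (Z u ω) (Mdiff P F X u ω))] at h1
  linarith [h1, h2]

lemma finite_terminal {α : ℝ} {f : Ω → ℕ → (Fin N → ℝ) → ℝ} {T : ℕ}
    {Y : ℕ → Ω → ℝ} {Z : ℕ → Ω → Fin N → ℝ}
    (hT : SolvesFiniteBSDE P F X (fun ω u y z => f ω u z - α * y) T (fun _ => 0) Y Z) :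
    ∀ᵐ ω ∂P, Y T ω = 0 := by
  filter_upwards [hT.2.2 T le_rfl] with ω h1
  simpa [Finset.Ico_self] using h1

/-- extract the one-step relation from a discounted BSDE solution. -/
lemma discounted_onestep {α : ℝ} {f : Ω → ℕ → (Fin N → ℝ) → ℝ}
    {Y : ℕ → Ω → ℝ} {Z : ℕ → Ω → Fin N → ℝ}
    (hS : SolvesDiscountedBSDE P F X α f Y Z) (t : ℕ) :
    ∀ᵐ ω ∂P, Y (t+1) ω
      = (1+α) * Y t ω - f ω t (Z t ω) + dotR (Z t ω) (Mdiff P F X t ω) := by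
  filter_upwards [hS.2.2 t (t+1) (Nat.lt_succ_self t)] with ω h1
  rw [Finset.sum_eq_sum_Ico_succ_bot (Nat.lt_succ_self t),
    Finset.sum_eq_sum_Ico_succ_bot (Nat.lt_succ_self t)
      (f := fun u => dotR (Z u ω) (Mdiff P F X u ω)), Finset.Ico_self] at h1
  simp only [Finset.sum_empty] at h1
  linarith [h1]

end MainLemmas


section MainLemmas2
variable {Ω : Type*} {mΩ : MeasurableSpace Ω} {N : ℕ}
variable {P : Measure Ω} {F : Filtration ℕ mΩ} {X : ℕ → Ω → (Fin N → ℝ)}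
variable {α : ℝ} {f : Ω → ℕ → (Fin N → ℝ) → ℝ} {C : ℝ}
variable {YT : ℕ → ℕ → Ω → ℝ} {ZT : ℕ → ℕ → Ω → Fin N → ℝ}

lemma YT_bound [IsProbabilityMeasure P]
    (hX : BasisValued X) (hF : IsCompletedNaturalFiltration P X F) (hα : 0 < α)
    (hfAd : ∀ t : ℕ, Measurable[(F t).prod inferInstance]
      fun p : Ω × (Fin N → ℝ) => f p.1 t p.2)
    (hfComp : ComparisonCondition P F X fun ω t _ z => f ω t z)
    (hC : 0 < C) (hfBdd : ∀ (ω : Ω) (t : ℕ), |f ω t 0| ≤ C)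
    (hYT : ∀ T : ℕ, SolvesFiniteBSDE P F X (fun ω u y z => f ω u z - α * y) T
      (fun _ => 0) (YT T) (ZT T)) :
    ∀ k t : ℕ, ∀ᵐ ω ∂P, |YT (t+k) t ω| ≤ C / α := by
  intro k
  induction k with
  | zero =>
    intro t
    filter_upwards [finite_terminal (hYT t)] with ω h
    rw [Nat.add_zero, h]
    simp only [abs_zero]
    positivity
  | succ k ih =>
    intro t
    have hstep := finite_onestep (hYT (t+(k+1))) (show t < t+(k+1) by omega)
    have hIH := ih (t+1)
    rw [show (t+1)+k = t+(k+1) by omega] at hIH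
    have hres := onestep_bound hX hF hα hfAd hfComp hfBdd t
      ((hYT (t+(k+1))).1 t) ((hYT (t+(k+1))).2.1 t).stronglyMeasurable hstep hIH
    have harith : (C/α + C)/(1+α) = C/α := by
      field_simp
    rw [harith] at hres
    exact hres

lemma YT_bound' [IsProbabilityMeasure P]
    (hX : BasisValued X) (hF : IsCompletedNaturalFiltration P X F) (hα : 0 < α)
    (hfAd : ∀ t : ℕ, Measurable[(F t).prod inferInstance]
      fun p : Ω × (Fin N → ℝ) => f p.1 t p.2)
    (hfComp : ComparisonCondition P F X fun ω t _ z => f ω t z)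
    (hC : 0 < C) (hfBdd : ∀ (ω : Ω) (t : ℕ), |f ω t 0| ≤ C)
    (hYT : ∀ T : ℕ, SolvesFiniteBSDE P F X (fun ω u y z => f ω u z - α * y) T
      (fun _ => 0) (YT T) (ZT T)) {T t : ℕ} (ht : t ≤ T) :
    ∀ᵐ ω ∂P, |YT T t ω| ≤ C / α := by
  have hres := YT_bound hX hF hα hfAd hfComp hC hfBdd hYT (T - t) t
  rw [show t + (T - t) = T by omega] at hres
  exact hres

lemma YT_cauchy [IsProbabilityMeasure P]
    (hX : BasisValued X) (hF : IsCompletedNaturalFiltration P X F) (hα : 0 < α)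
    (hfAd : ∀ t : ℕ, Measurable[(F t).prod inferInstance]
      fun p : Ω × (Fin N → ℝ) => f p.1 t p.2)
    (hfComp : ComparisonCondition P F X fun ω t _ z => f ω t z)
    (hC : 0 < C) (hfBdd : ∀ (ω : Ω) (t : ℕ), |f ω t 0| ≤ C)
    (hYT : ∀ T : ℕ, SolvesFiniteBSDE P F X (fun ω u y z => f ω u z - α * y) T
      (fun _ => 0) (YT T) (ZT T)) :
    ∀ (k t T' : ℕ), t + k ≤ T' →
      ∀ᵐ ω ∂P, |YT T' t ω - YT (t+k) t ω| ≤ (C/α) / (1+α)^k := by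
  intro k
  induction k with
  | zero =>
    intro t T' hT'
    filter_upwards [finite_terminal (hYT t),
      YT_bound' hX hF hα hfAd hfComp hC hfBdd hYT (show t ≤ T' by omega)] with ω h1 h2
    rw [pow_zero, div_one, Nat.add_zero, h1, sub_zero]
    exact h2
  | succ k ih =>
    intro t T' hT'
    have hstep1 := finite_onestep (hYT T') (show t < T' by omega)
    have hstep2 := finite_onestep (hYT (t+(k+1))) (show t < t+(k+1) by omega)
    have hIH := ih (t+1) T' (by omega)
    rw [show (t+1)+k = t+(k+1) by omega] at hIH
    have hcon := onestep_contraction hX hF hα hfAd hfComp t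
      ((hYT T').1 t) ((hYT (t+(k+1))).1 t)
      ((hYT T').2.1 t).stronglyMeasurable ((hYT (t+(k+1))).2.1 t).stronglyMeasurable hstep1 hstep2 hIH
    filter_upwards [hcon] with ω h
    have harith : (C/α) / (1+α)^k / (1+α) = (C/α) / (1+α)^(k+1) := by
      rw [div_div, ← pow_succ]
    rw [← harith]
    exact h

lemma exists_limY [IsProbabilityMeasure P]
    (hX : BasisValued X) (hF : IsCompletedNaturalFiltration P X F) (hα : 0 < α)
    (hfAd : ∀ t : ℕ, Measurable[(F t).prod inferInstance]
      fun p : Ω × (Fin N → ℝ) => f p.1 t p.2)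
    (hfComp : ComparisonCondition P F X fun ω t _ z => f ω t z)
    (hC : 0 < C) (hfBdd : ∀ (ω : Ω) (t : ℕ), |f ω t 0| ≤ C)
    (hYT : ∀ T : ℕ, SolvesFiniteBSDE P F X (fun ω u y z => f ω u z - α * y) T
      (fun _ => 0) (YT T) (ZT T)) :
    ∃ Y : ℕ → Ω → ℝ, (∀ t, StronglyMeasurable[F t] (Y t)) ∧
      (∀ t, ∀ᵐ ω ∂P, Tendsto (fun T => YT T t ω) atTop (nhds (Y t ω))) := by
  have h1α : (0:ℝ) < 1 + α := by linarith
  have key : ∀ t : ℕ, ∃ g : Ω → ℝ, StronglyMeasurable[F t] g ∧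
      ∀ᵐ ω ∂P, Tendsto (fun T => YT T t ω) atTop (nhds (g ω)) := by
    intro t
    have hcau : ∀ᵐ ω ∂P, ∀ k T' : ℕ, t + k ≤ T' →
        |YT T' t ω - YT (t+k) t ω| ≤ (C/α)/(1+α)^k := by
      rw [ae_all_iff]
      intro k
      rw [ae_all_iff]
      intro T'
      by_cases h : t + k ≤ T'
      · filter_upwards [YT_cauchy hX hF hα hfAd hfComp hC hfBdd hYT k t T' h] with ω h1 _
        exact h1
      · filter_upwards with ω h1
        exact absurd h1 h
    have hconv : ∀ᵐ ω ∂P, ∃ l, Tendsto (fun T => YT T t ω) atTop (nhds l) := by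
      filter_upwards [hcau] with ω hω
      refine cauchySeq_tendsto_of_complete ?_
      rw [Metric.cauchySeq_iff']
      intro ε hε
      have htend0 : Tendsto (fun k : ℕ => (C/α) * (1/(1+α))^k) atTop (nhds 0) := by
        have h0 := tendsto_pow_atTop_nhds_zero_of_lt_one
          (le_of_lt (show (0:ℝ) < 1/(1+α) by positivity))
          (by rw [div_lt_one h1α]; linarith)
        simpa using h0.const_mul (C/α)
      obtain ⟨k, hk⟩ := (htend0.eventually (gt_mem_nhds hε)).exists
      refine ⟨t + k, fun n hn => ?_⟩
      rw [Real.dist_eq]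
      calc |YT n t ω - YT (t+k) t ω| ≤ (C/α)/(1+α)^k := hω k n hn
        _ = (C/α) * (1/(1+α))^k := by
            rw [one_div, inv_pow, ← div_eq_mul_inv]
        _ < ε := hk
    have hle := F.le t
    have hbadF : MeasurableSet[F t]
        {ω | ¬ ∃ l, Tendsto (fun T => YT T t ω) atTop (nhds l)} :=
      null_mem_F hF t (ae_iff.1 hconv)
    have htrim : ∀ᵐ ω ∂(P.trim hle), ∃ l, Tendsto (fun T => YT T t ω) atTop (nhds l) := by
      rw [ae_iff, trim_measurableSet_eq hle hbadF]
      exact ae_iff.1 hconv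
    obtain ⟨g, hgm, hgt⟩ := @measurable_limit_of_tendsto_metrizable_ae Ω ℝ (F t)
      _ _ _ _ ℕ _ (P.trim hle) (fun T (ω : Ω) => YT T t ω) atTop _
      (fun T => (((hYT T).1 t)).aemeasurable) htrim
    exact ⟨g, hgm.stronglyMeasurable, ae_of_ae_trim hle hgt⟩
  choose Yg hmeas htend using key
  exact ⟨Yg, hmeas, htend⟩

end MainLemmas2


section MainLemmas3
variable {Ω : Type*} {mΩ : MeasurableSpace Ω} {N : ℕ}
variable {P : Measure Ω} {F : Filtration ℕ mΩ} {X : ℕ → Ω → (Fin N → ℝ)}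
variable {α : ℝ} {f : Ω → ℕ → (Fin N → ℝ) → ℝ} {C : ℝ}
variable {YT : ℕ → ℕ → Ω → ℝ} {ZT : ℕ → ℕ → Ω → Fin N → ℝ}

/-- the martingale-representation candidate for `Z`. -/
def Zc (P : Measure Ω) (F : Filtration ℕ mΩ) (X : ℕ → Ω → (Fin N → ℝ))
    (Y1 : Ω → ℝ) (t : ℕ) : Ω → Fin N → ℝ := fun ω i =>
  if (P[(fun ω' => X (t+1) ω' i)|F t]) ω = 0 then 0
  else (P[((EV X t i).indicator Y1)|F t]) ω / (P[(fun ω' => X (t+1) ω' i)|F t]) ω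

lemma Zc_stronglyMeasurable (Y1 : Ω → ℝ) (t : ℕ) :
    StronglyMeasurable[F t] (Zc P F X Y1 t) := by
  classical
  have hmeas : Measurable[F t] (Zc P F X Y1 t) := by
    refine @measurable_pi_lambda Ω (Fin N) (fun _ => ℝ) (F t) _ _ (fun i => ?_)
    have hden : Measurable[F t] fun ω => (P[(fun ω' => X (t+1) ω' i)|F t]) ω :=
      stronglyMeasurable_condExp.measurable
    have hnum : Measurable[F t] fun ω => (P[((EV X t i).indicator Y1)|F t]) ω :=
      stronglyMeasurable_condExp.measurable
    exact Measurable.ite (hden (measurableSet_singleton 0)) measurable_const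
      (hnum.div hden)
  exact hmeas.stronglyMeasurable

lemma pathAtom_succ_eq (X : ℕ → Ω → (Fin N → ℝ)) (t : ℕ) (ω' : Ω) :
    pathAtom X (t+1) ω' = pathAtom X t ω' ∩ {ω'' | X (t+1) ω'' = X (t+1) ω'} := by
  ext ω''
  constructor
  · intro h
    exact ⟨fun s hs => h s (le_trans hs (Nat.le_succ t)), h (t+1) le_rfl⟩
  · rintro ⟨h1, h2⟩ s hs
    by_cases h : s ≤ t
    · exact h1 s h
    · have hs' : s = t+1 := by omega
      rw [hs']
      exact h2

/-- martingale representation: `Zc · M = Y1 - E[Y1 | F t]` a.s. -/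
lemma rep_dot [IsProbabilityMeasure P]
    (hX : BasisValued X) (hF : IsCompletedNaturalFiltration P X F) (t : ℕ)
    {Y1 : Ω → ℝ} (hY1m : Measurable[F (t+1)] Y1) {K : ℝ}
    (hY1b : ∀ᵐ ω ∂P, |Y1 ω| ≤ K) :
    ∀ᵐ ω ∂P, dotR (Zc P F X Y1 t ω) (Mdiff P F X t ω) = Y1 ω - (P[Y1|F t]) ω := by
  classical
  have hY1m' : Measurable Y1 := hY1m.mono (F.le (t+1)) le_rfl
  have hY1i : Integrable Y1 P := integrable_of_ae_bdd hY1m'.aestronglyMeasurable hY1b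
  refine ae_of_ae_on_atoms hX t (fun ω₀ hA => ?_)
  have hAm : MeasurableSet (pathAtom X t ω₀) := F.le t _ (measurableSet_pathAtom hF t ω₀)
  have hp := condexp_X_vec_on_atom hX hF t hA
  set p : Fin N → ℝ :=
    fun i => (P (pathAtom X t ω₀ ∩ EV X t i)).toReal / (P (pathAtom X t ω₀)).toReal
    with hpdef
  have hPA : (P (pathAtom X t ω₀)).toReal ≠ 0 := by
    simp only [ENNReal.toReal_ne_zero]
    exact ⟨hA.ne', measure_ne_top _ _⟩
  have hconsts : ∀ i : Fin N, 0 < P (pathAtom X t ω₀ ∩ EV X t i) →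
      ∃ c : ℝ, ∀ᵐ ω ∂P, ω ∈ pathAtom X t ω₀ ∩ EV X t i → Y1 ω = c := by
    intro i hpos
    obtain ⟨ω', hω'⟩ := nonempty_of_measure_ne_zero hpos.ne'
    have hatomeq : pathAtom X (t+1) ω' = pathAtom X t ω₀ ∩ EV X t i := by
      rw [pathAtom_succ_eq, pathAtom_eq_of_mem hω'.1]
      congr 1
      ext ω''
      simp only [Set.mem_setOf_eq, EV]
      rw [(hω'.2 : X (t+1) ω' = e N i)]
    obtain ⟨c, hc⟩ := exists_ae_const_on_atom hF (t+1) hY1m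
      (by rw [hatomeq]; exact hpos)
    refine ⟨c, ?_⟩
    rw [← hatomeq]
    exact hc
  choose! c hc using hconsts
  have hnum : ∀ i : Fin N, ∀ᵐ ω ∂P, ω ∈ pathAtom X t ω₀ →
      (P[((EV X t i).indicator Y1)|F t]) ω = c i * p i := by
    intro i
    have hind_i : Integrable ((EV X t i).indicator Y1) P :=
      hY1i.indicator (measurableSet_EV' hF t i)
    have hival : ∫ x in pathAtom X t ω₀, (EV X t i).indicator Y1 x ∂P
        = c i * (P (pathAtom X t ω₀ ∩ EV X t i)).toReal := by
      rw [setIntegral_indicator (measurableSet_EV' hF t i)]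
      rcases eq_or_lt_of_le (zero_le : 0 ≤ P (pathAtom X t ω₀ ∩ EV X t i)) with hz | hpos
      · rw [Measure.restrict_eq_zero.2 hz.symm, integral_zero_measure, ← hz]
        simp
      · rw [setIntegral_congr_ae (hAm.inter (measurableSet_EV' hF t i))
          ((hc i hpos).mono fun ω h hmem => h hmem), setIntegral_const, smul_eq_mul,
          mul_comm]
        rfl
    filter_upwards [condexp_ae_eq_on_atom hF t hind_i hA] with ω h hmem
    rw [h hmem, hival, hpdef]
    simp only
    ring
  have hEa : ∀ᵐ ω ∂P, ω ∈ pathAtom X t ω₀ → (P[Y1|F t]) ω = ∑ i, c i * p i := by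
    have hAint : ∫ x in pathAtom X t ω₀, Y1 x ∂P
        = (∑ i, c i * p i) * (P (pathAtom X t ω₀)).toReal := by
      have hdecomp : ∫ x in pathAtom X t ω₀, Y1 x ∂P
          = ∑ i, ∫ x in pathAtom X t ω₀ ∩ EV X t i, Y1 x ∂P := by
        have h1 : ∫ x in ⋃ i, (pathAtom X t ω₀ ∩ EV X t i), Y1 x ∂P
            = ∑' i, ∫ x in pathAtom X t ω₀ ∩ EV X t i, Y1 x ∂P :=
          integral_iUnion (fun i => hAm.inter (measurableSet_EV' hF t i))
            (EV_pairwise_disjoint t) hY1i.integrableOn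
        rw [iUnion_inter_EV hX t] at h1
        rw [h1, tsum_fintype]
      have hval : ∀ i, ∫ x in pathAtom X t ω₀ ∩ EV X t i, Y1 x ∂P
          = (c i * p i) * (P (pathAtom X t ω₀)).toReal := by
        intro i
        rcases eq_or_lt_of_le (zero_le : 0 ≤ P (pathAtom X t ω₀ ∩ EV X t i)) with hz | hpos
        · rw [Measure.restrict_eq_zero.2 hz.symm, integral_zero_measure, hpdef]
          simp only
          rw [← hz]
          simp
        · rw [setIntegral_congr_ae (hAm.inter (measurableSet_EV' hF t i))
            ((hc i hpos).mono fun ω h hmem => h hmem), setIntegral_const, smul_eq_mul,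
            hpdef]
          simp only [Measure.real]
          field_simp
      rw [hdecomp, Finset.sum_congr rfl fun i _ => hval i, ← Finset.sum_mul]
    filter_upwards [condexp_ae_eq_on_atom hF t hY1i hA] with ω h hmem
    rw [h hmem, hAint]
    field_simp
  have hnullev : ∀ᵐ ω ∂P, ∀ i, P (pathAtom X t ω₀ ∩ EV X t i) = 0 →
      ω ∉ pathAtom X t ω₀ ∩ EV X t i := by
    rw [ae_all_iff]
    intro i
    by_cases hz : P (pathAtom X t ω₀ ∩ EV X t i) = 0
    · filter_upwards [measure_eq_zero_iff_ae_notMem.1 hz] with ω hω _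
      exact hω
    · filter_upwards with ω hmem
      exact absurd hmem hz
  have hY1val : ∀ᵐ ω ∂P, ∀ i, 0 < P (pathAtom X t ω₀ ∩ EV X t i) →
      ω ∈ pathAtom X t ω₀ ∩ EV X t i → Y1 ω = c i := by
    rw [ae_all_iff]
    intro i
    by_cases hz : 0 < P (pathAtom X t ω₀ ∩ EV X t i)
    · filter_upwards [hc i hz] with ω h _ hmem
      exact h hmem
    · filter_upwards with ω h hmem
      exact absurd h hz
  filter_upwards [hp, ae_all_iff.2 hnum, hEa, hnullev, hY1val] with ω hpω hnumω hEω
    hnullω hYω hmem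
  obtain ⟨i, hEV⟩ := hX (t+1) ω
  have hEV' : ω ∈ EV X t i := hEV
  have hpos : 0 < P (pathAtom X t ω₀ ∩ EV X t i) := by
    rcases eq_or_lt_of_le (zero_le : 0 ≤ P (pathAtom X t ω₀ ∩ EV X t i)) with hz | h
    · exact absurd ⟨hmem, hEV'⟩ (hnullω i hz.symm)
    · exact h
  have hpi0 : p i ≠ 0 := fun h => hpos.ne' ((pAtom_eq_zero_iff hA i).1 h)
  have hZval : ∀ j, Zc P F X Y1 t ω j = if p j = 0 then 0 else c j := by
    intro j
    simp only [Zc]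
    rw [hpω hmem j, hnumω j hmem]
    by_cases hpj : p j = 0
    · rw [if_pos hpj, if_pos hpj]
    · rw [if_neg hpj, if_neg hpj, mul_div_assoc, div_self hpj, mul_one]
  have hgoal : dotR (Zc P F X Y1 t ω) (Mdiff P F X t ω) = c i - ∑ j, c j * p j := by
    have hM : Mdiff P F X t ω = fun j => e N i j - p j := by
      funext j
      simp only [Mdiff]
      rw [hpω hmem j, (hEV' : X (t+1) ω = e N i)]
    rw [hM, dotR_e_sub]
    congr 1
    · rw [hZval i, if_neg hpi0]
    · refine Finset.sum_congr rfl fun j _ => ?_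
      rw [hZval j]
      by_cases hpj : p j = 0
      · rw [if_pos hpj, hpj, mul_zero, mul_zero]
      · rw [if_neg hpj]
  rw [hgoal, hYω i hpos ⟨hmem, hEV'⟩, hEω hmem]

lemma Y_bound [IsProbabilityMeasure P]
    (hX : BasisValued X) (hF : IsCompletedNaturalFiltration P X F) (hα : 0 < α)
    (hfAd : ∀ t : ℕ, Measurable[(F t).prod inferInstance]
      fun p : Ω × (Fin N → ℝ) => f p.1 t p.2)
    (hfComp : ComparisonCondition P F X fun ω t _ z => f ω t z)
    (hC : 0 < C) (hfBdd : ∀ (ω : Ω) (t : ℕ), |f ω t 0| ≤ C)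
    (hYT : ∀ T : ℕ, SolvesFiniteBSDE P F X (fun ω u y z => f ω u z - α * y) T
      (fun _ => 0) (YT T) (ZT T))
    {Y : ℕ → Ω → ℝ}
    (htend : ∀ t, ∀ᵐ ω ∂P, Tendsto (fun T => YT T t ω) atTop (nhds (Y t ω)))
    (t : ℕ) : ∀ᵐ ω ∂P, |Y t ω| ≤ C / α := by
  have hb : ∀ᵐ ω ∂P, ∀ T, t ≤ T → |YT T t ω| ≤ C/α := by
    rw [ae_all_iff]
    intro T
    by_cases h : t ≤ T
    · filter_upwards [YT_bound' hX hF hα hfAd hfComp hC hfBdd hYT h] with ω h1 _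
      exact h1
    · filter_upwards with ω h1
      exact absurd h1 h
  filter_upwards [htend t, hb] with ω h1 h2
  exact le_of_tendsto h1.abs (eventually_atTop.2 ⟨t, h2⟩)

lemma Y_err [IsProbabilityMeasure P]
    (hX : BasisValued X) (hF : IsCompletedNaturalFiltration P X F) (hα : 0 < α)
    (hfAd : ∀ t : ℕ, Measurable[(F t).prod inferInstance]
      fun p : Ω × (Fin N → ℝ) => f p.1 t p.2)
    (hfComp : ComparisonCondition P F X fun ω t _ z => f ω t z)
    (hC : 0 < C) (hfBdd : ∀ (ω : Ω) (t : ℕ), |f ω t 0| ≤ C)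
    (hYT : ∀ T : ℕ, SolvesFiniteBSDE P F X (fun ω u y z => f ω u z - α * y) T
      (fun _ => 0) (YT T) (ZT T))
    {Y : ℕ → Ω → ℝ}
    (htend : ∀ t, ∀ᵐ ω ∂P, Tendsto (fun T => YT T t ω) atTop (nhds (Y t ω)))
    (t T : ℕ) (htT : t ≤ T) :
    ∀ᵐ ω ∂P, |YT T t ω - Y t ω| ≤ (C/α) / (1+α)^(T-t) := by
  have hb : ∀ᵐ ω ∂P, ∀ T', T ≤ T' → |YT T' t ω - YT T t ω| ≤ (C/α)/(1+α)^(T-t) := by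
    rw [ae_all_iff]
    intro T'
    by_cases h : T ≤ T'
    · have hcau := YT_cauchy hX hF hα hfAd hfComp hC hfBdd hYT (T-t) t T' (by omega)
      rw [show t + (T-t) = T by omega] at hcau
      filter_upwards [hcau] with ω h1 _
      exact h1
    · filter_upwards with ω h1
      exact absurd h1 h
  filter_upwards [htend t, hb] with ω h1 h2
  have htendabs : Tendsto (fun T' => |YT T' t ω - YT T t ω|) atTop
      (nhds |Y t ω - YT T t ω|) := (h1.sub tendsto_const_nhds).abs
  have hle := le_of_tendsto htendabs (eventually_atTop.2 ⟨T, h2⟩)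
  rwa [abs_sub_comm] at hle

end MainLemmas3


section MainLemmas4
variable {Ω : Type*} {mΩ : MeasurableSpace Ω} {N : ℕ}
variable {P : Measure Ω} {F : Filtration ℕ mΩ} {X : ℕ → Ω → (Fin N → ℝ)}
variable {α : ℝ} {f : Ω → ℕ → (Fin N → ℝ) → ℝ} {C L : ℝ}
variable {YT : ℕ → ℕ → Ω → ℝ} {ZT : ℕ → ℕ → Ω → Fin N → ℝ}

lemma ZT_dot_bdd [IsProbabilityMeasure P]
    (hX : BasisValued X) (hF : IsCompletedNaturalFiltration P X F) (hα : 0 < α)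
    (hfAd : ∀ t : ℕ, Measurable[(F t).prod inferInstance]
      fun p : Ω × (Fin N → ℝ) => f p.1 t p.2)
    (hfComp : ComparisonCondition P F X fun ω t _ z => f ω t z)
    (hC : 0 < C) (hfBdd : ∀ (ω : Ω) (t : ℕ), |f ω t 0| ≤ C)
    (hYT : ∀ T : ℕ, SolvesFiniteBSDE P F X (fun ω u y z => f ω u z - α * y) T
      (fun _ => 0) (YT T) (ZT T))
    {T t : ℕ} (ht : t < T) :
    ∀ᵐ ω ∂P, |dotR (ZT T t ω) (Mdiff P F X t ω)| ≤ 2 * (C/α) := by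
  have hhm : Measurable[F t]
      (fun ω => f ω t (ZT T t ω) - (1+α) * YT T t ω) :=
    (measurable_f_Z hfAd t ((hYT T).2.1 t).stronglyMeasurable).sub
      (measurable_const.mul ((hYT T).1 t))
  have heqd : ∀ᵐ ω ∂P, dotR (ZT T t ω) (Mdiff P F X t ω)
      - dotR ((fun _ => (0 : Fin N → ℝ)) ω) (Mdiff P F X t ω)
      = YT T (t+1) ω + (f ω t (ZT T t ω) - (1+α) * YT T t ω) := by
    filter_upwards [finite_onestep (hYT T) ht] with ω h1
    have h0 : dotR (0 : Fin N → ℝ) (Mdiff P F X t ω) = 0 := by simp [dotR]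
    rw [h0]
    linarith [h1]
  have hu : ∀ᵐ ω ∂P, |YT T (t+1) ω| ≤ C/α :=
    YT_bound' hX hF hα hfAd hfComp hC hfBdd hYT (show t+1 ≤ T by omega)
  have hres := dot_bound_on_atom hX hF t ((hYT T).2.1 t).stronglyMeasurable stronglyMeasurable_const
    hhm heqd hu
  filter_upwards [hres] with ω h
  have h0 : dotR ((fun _ => (0 : Fin N → ℝ)) ω) (Mdiff P F X t ω) = 0 := by simp [dotR]
  rw [h0, sub_zero] at h
  exact h

lemma YT_condexp [IsProbabilityMeasure P]
    (hX : BasisValued X) (hF : IsCompletedNaturalFiltration P X F) (hα : 0 < α)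
    (hfAd : ∀ t : ℕ, Measurable[(F t).prod inferInstance]
      fun p : Ω × (Fin N → ℝ) => f p.1 t p.2)
    (hfComp : ComparisonCondition P F X fun ω t _ z => f ω t z)
    (hC : 0 < C) (hfBdd : ∀ (ω : Ω) (t : ℕ), |f ω t 0| ≤ C)
    (hYT : ∀ T : ℕ, SolvesFiniteBSDE P F X (fun ω u y z => f ω u z - α * y) T
      (fun _ => 0) (YT T) (ZT T))
    {T t : ℕ} (ht : t < T) :
    P[YT T (t+1)|F t] =ᵐ[P] fun ω => (1+α) * YT T t ω - f ω t (ZT T t ω) := by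
  set W : Ω → ℝ := fun ω => dotR (ZT T t ω) (Mdiff P F X t ω) with hWdef
  set G : Ω → ℝ := fun ω => (1+α) * YT T t ω - f ω t (ZT T t ω) with hGdef
  have hWb := ZT_dot_bdd hX hF hα hfAd hfComp hC hfBdd hYT ht
  have hWi : Integrable W P :=
    integrable_of_ae_bdd (measurable_dotMdiff hF t ((hYT T).2.1 t).stronglyMeasurable).aestronglyMeasurable hWb
  have hGmF : Measurable[F t] G :=
    (measurable_const.mul ((hYT T).1 t)).sub (measurable_f_Z hfAd t ((hYT T).2.1 t).stronglyMeasurable)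
  have hGb : ∀ᵐ ω ∂P, |G ω| ≤ (1+α) * (C/α) + (2*(C/α) + C/α + (1+α)*(C/α)) := by
    filter_upwards [YT_bound' hX hF hα hfAd hfComp hC hfBdd hYT (le_of_lt ht),
      YT_bound' hX hF hα hfAd hfComp hC hfBdd hYT (show t+1 ≤ T by omega),
      finite_onestep (hYT T) ht, hWb] with ω h1 h2 h3 h4
    have hf : |f ω t (ZT T t ω)| ≤ 2*(C/α) + C/α + (1+α)*(C/α) := by
      have heq : f ω t (ZT T t ω) = (1+α) * YT T t ω - YT T (t+1) ω + W ω := by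
        rw [hWdef]
        linarith [h3]
      rw [heq]
      have := abs_add_le ((1+α) * YT T t ω - YT T (t+1) ω) (W ω)
      have h5 := abs_sub ((1+α) * YT T t ω) (YT T (t+1) ω)
      have h6 : |(1+α) * YT T t ω| = (1+α) * |YT T t ω| := by
        rw [abs_mul, abs_of_pos (by linarith : (0:ℝ) < 1+α)]
      nlinarith [abs_nonneg (YT T t ω)]
    simp only [hGdef]
    have h6 : |(1+α) * YT T t ω| = (1+α) * |YT T t ω| := by
      rw [abs_mul, abs_of_pos (by linarith : (0:ℝ) < 1+α)]
    have := abs_sub ((1+α) * YT T t ω) (f ω t (ZT T t ω))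
    nlinarith [abs_nonneg (YT T t ω)]
  have hGi : Integrable G P :=
    integrable_of_ae_bdd ((hGmF.mono (F.le t) le_rfl).aestronglyMeasurable) hGb
  have hYeq : YT T (t+1) =ᵐ[P] fun ω => G ω + W ω := by
    filter_upwards [finite_onestep (hYT T) ht] with ω h1
    simp only [hGdef, hWdef]
    linarith [h1]
  have h1 : P[YT T (t+1)|F t] =ᵐ[P] P[fun ω => G ω + W ω|F t] := condExp_congr_ae hYeq
  have h2 : P[fun ω => G ω + W ω|F t] =ᵐ[P] P[G|F t] + P[W|F t] :=
    condExp_add hGi hWi (F t)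
  have h3 : P[G|F t] = G :=
    condExp_of_stronglyMeasurable (F.le t) (hGmF.stronglyMeasurable) hGi
  have h4 : P[W|F t] =ᵐ[P] 0 := condexp_dot_eq_zero hX hF t ((hYT T).2.1 t).stronglyMeasurable hWb
  filter_upwards [h1, h2, h4] with ω e1 e2 e4
  rw [e1, e2, Pi.add_apply, h3, e4, Pi.zero_apply, add_zero]

/-- the one-step equation for the limit pair `(Y, Zc)`. -/
lemma main_onestep [IsProbabilityMeasure P]
    (hX : BasisValued X) (hF : IsCompletedNaturalFiltration P X F) (hα : 0 < α)
    (hfAd : ∀ t : ℕ, Measurable[(F t).prod inferInstance]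
      fun p : Ω × (Fin N → ℝ) => f p.1 t p.2)
    (hfComp : ComparisonCondition P F X fun ω t _ z => f ω t z)
    (hL : 0 < L) (hfLip : DriverLipschitzNoY P F X L f)
    (hC : 0 < C) (hfBdd : ∀ (ω : Ω) (t : ℕ), |f ω t 0| ≤ C)
    (hYT : ∀ T : ℕ, SolvesFiniteBSDE P F X (fun ω u y z => f ω u z - α * y) T
      (fun _ => 0) (YT T) (ZT T))
    {Y : ℕ → Ω → ℝ} (hYm : ∀ t, StronglyMeasurable[F t] (Y t))
    (htend : ∀ t, ∀ᵐ ω ∂P, Tendsto (fun T => YT T t ω) atTop (nhds (Y t ω)))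
    (t : ℕ) :
    ∀ᵐ ω ∂P, Y (t+1) ω = (1+α) * Y t ω - f ω t (Zc P F X (Y (t+1)) t ω)
      + dotR (Zc P F X (Y (t+1)) t ω) (Mdiff P F X t ω) := by
  classical
  have h1α : (0:ℝ) < 1 + α := by linarith
  set Z : Ω → Fin N → ℝ := Zc P F X (Y (t+1)) t with hZdef
  have hZm : StronglyMeasurable[F t] Z := Zc_stronglyMeasurable _ t
  have hY1b : ∀ᵐ ω ∂P, |Y (t+1) ω| ≤ C/α :=
    Y_bound hX hF hα hfAd hfComp hC hfBdd hYT htend (t+1)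
  have hY1i : Integrable (Y (t+1)) P :=
    integrable_of_ae_bdd (((hYm (t+1)).measurable.mono (F.le (t+1)) le_rfl).aestronglyMeasurable) hY1b
  have hrep : ∀ᵐ ω ∂P, dotR (Z ω) (Mdiff P F X t ω)
      = Y (t+1) ω - (P[Y (t+1)|F t]) ω :=
    rep_dot hX hF t (hYm (t+1)).measurable hY1b
  have hpowconv : ∀ m : ℕ, (C/α)/(1+α)^m = (C/α)*(1/(1+α))^m := by
    intro m
    rw [one_div, inv_pow, ← div_eq_mul_inv]
  set Ktot : ℝ := (2 + α + 2*L) * (C/α) with hKtot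
  have hT : ∀ k : ℕ, ∀ᵐ ω ∂P,
      |(P[Y (t+1)|F t]) ω - ((1+α) * Y t ω - f ω t (Z ω))|
        ≤ Ktot * (1/(1+α))^k := by
    intro k
    set T := t + 1 + k with hTdef
    have htT : t < T := by omega
    have ht1T : t + 1 ≤ T := by omega
    set ε1 : ℝ := (C/α) * (1/(1+α))^k with hε1
    have hε10 : 0 ≤ ε1 := by positivity
    have hcond := YT_condexp hX hF hα hfAd hfComp hC hfBdd hYT htT
    -- bound on Y (t+1) - YT T (t+1)
    have hdiffb : ∀ᵐ ω ∂P, |Y (t+1) ω - YT T (t+1) ω| ≤ ε1 := by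
      have herr := Y_err hX hF hα hfAd hfComp hC hfBdd hYT htend (t+1) T ht1T
      rw [show T - (t+1) = k by omega, hpowconv k] at herr
      filter_upwards [herr] with ω h
      rwa [abs_sub_comm]
    -- bound on YT T t - Y t
    have hYdiffb : ∀ᵐ ω ∂P, |YT T t ω - Y t ω| ≤ ε1 := by
      have herr := Y_err hX hF hα hfAd hfComp hC hfBdd hYT htend t T (by omega)
      rw [show T - t = k + 1 by omega] at herr
      filter_upwards [herr] with ω h
      refine le_trans h ?_
      rw [hpowconv (k+1), hε1]
      have hle2 : (0:ℝ) < 1/(1+α) := by positivity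
      have : (1/(1+α))^(k+1) ≤ (1/(1+α))^k := by
        apply pow_le_pow_of_le_one (le_of_lt hle2) _ (by omega)
        rw [div_le_one h1α]
        linarith
      nlinarith [div_nonneg (le_of_lt hC) (le_of_lt hα)]
    -- bound on difference of conditional expectations
    have hYT1i : Integrable (YT T (t+1)) P :=
      integrable_of_ae_bdd ((((hYT T).1 (t+1)).mono (F.le (t+1)) le_rfl).aestronglyMeasurable)
        (YT_bound' hX hF hα hfAd hfComp hC hfBdd hYT ht1T)
    have hcondbd : ∀ᵐ ω ∂P,
        |(P[Y (t+1)|F t]) ω - (P[YT T (t+1)|F t]) ω| ≤ ε1 := by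
      have hsub : P[fun ω => Y (t+1) ω - YT T (t+1) ω|F t]
          =ᵐ[P] P[Y (t+1)|F t] - P[YT T (t+1)|F t] := condExp_sub hY1i hYT1i (F t)
      have hbdd := ae_bdd_condExp_of_ae_bdd (m := F t) (R := ε1.toNNReal)
        (by filter_upwards [hdiffb] with ω h
            rwa [Real.coe_toNNReal _ hε10])
      filter_upwards [hsub, hbdd] with ω e1 e2
      rw [e1, Pi.sub_apply] at e2
      rwa [Real.coe_toNNReal _ hε10] at e2
    -- bound on the martingale increments difference
    have hZdiff : ∀ᵐ ω ∂P, |dotR (Z ω) (Mdiff P F X t ω)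
        - dotR (ZT T t ω) (Mdiff P F X t ω)| ≤ 2 * ε1 := by
      have hhm : Measurable[F t] (fun ω => -(P[Y (t+1)|F t]) ω
          + (1+α) * YT T t ω - f ω t (ZT T t ω)) :=
        ((stronglyMeasurable_condExp.measurable.neg).add
          (measurable_const.mul ((hYT T).1 t))).sub
          (measurable_f_Z hfAd t ((hYT T).2.1 t).stronglyMeasurable)
      refine dot_bound_on_atom hX hF t hZm ((hYT T).2.1 t).stronglyMeasurable hhm ?_ hdiffb
      filter_upwards [hrep, finite_onestep (hYT T) htT] with ω e1 e2
      rw [e1]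
      linarith [e2]
    -- seminorm bound
    have hsemi : ∀ᵐ ω ∂P,
        mSeminorm P F X t (fun ω' => Z ω' - ZT T t ω') ω ≤ 2 * ε1 := by
      have hsq : ∀ᵐ ω ∂P,
          (dotR (Z ω - ZT T t ω) (Mdiff P F X t ω))^2 ≤ (2*ε1)^2 := by
        filter_upwards [hZdiff] with ω h
        rw [dotR_sub]
        exact sq_le_sq' (by linarith [(abs_le.1 h).1]) (abs_le.1 h).2
      have hgm : Measurable (fun ω => (dotR (Z ω - ZT T t ω) (Mdiff P F X t ω))^2) := by
        have := measurable_dotMdiff hF t (hZm.sub ((hYT T).2.1 t).stronglyMeasurable)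
        exact (by simpa [Pi.sub_apply] using this : Measurable
          (fun ω => dotR (Z ω - ZT T t ω) (Mdiff P F X t ω))).pow_const 2
      have hgi : Integrable (fun ω => (dotR (Z ω - ZT T t ω) (Mdiff P F X t ω))^2) P := by
        refine integrable_of_ae_bdd hgm.aestronglyMeasurable (K := (2*ε1)^2) ?_
        filter_upwards [hsq] with ω h
        rwa [abs_of_nonneg (sq_nonneg _)]
      have hmono := condExp_mono (m := F t) hgi (integrable_const ((2*ε1)^2)) hsq
      have hconst : (P[fun (_ : Ω) => (2*ε1)^2|F t]) = fun _ => (2*ε1)^2 :=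
        condExp_const (F.le t) _
      filter_upwards [hmono] with ω h
      rw [hconst] at h
      have h' : seminormSq P F X t (fun ω' => Z ω' - ZT T t ω') ω ≤ (2*ε1)^2 := by
        simpa [seminormSq] using h
      calc mSeminorm P F X t (fun ω' => Z ω' - ZT T t ω') ω
          ≤ Real.sqrt ((2*ε1)^2) := Real.sqrt_le_sqrt h'
        _ = 2*ε1 := Real.sqrt_sq (by positivity)
    -- Lipschitz bound
    have hfz : ∀ᵐ ω ∂P, |f ω t (Z ω) - f ω t (ZT T t ω)| ≤ L * (2*ε1) := by
      filter_upwards [hfLip t Z (ZT T t) hZm ((hYT T).2.1 t).stronglyMeasurable, hsemi] with ω h1 h2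
      exact le_trans h1 (mul_le_mul_of_nonneg_left h2 (le_of_lt hL))
    -- combine
    filter_upwards [hcond, hcondbd, hfz, hYdiffb] with ω e0 e1 e2 e3
    have hsplit : (P[Y (t+1)|F t]) ω - ((1+α) * Y t ω - f ω t (Z ω))
        = ((P[Y (t+1)|F t]) ω - (P[YT T (t+1)|F t]) ω)
          + ((1+α) * (YT T t ω - Y t ω))
          + (f ω t (Z ω) - f ω t (ZT T t ω)) := by
      rw [e0]
      ring
    have hmain : |(P[Y (t+1)|F t]) ω - ((1+α) * Y t ω - f ω t (Z ω))|
        ≤ ε1 + (1+α) * ε1 + L * (2*ε1) := by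
      rw [hsplit]
      have habs1 := abs_add_le ((P[Y (t+1)|F t]) ω - (P[YT T (t+1)|F t]) ω
        + (1+α) * (YT T t ω - Y t ω)) (f ω t (Z ω) - f ω t (ZT T t ω))
      have habs2 := abs_add_le ((P[Y (t+1)|F t]) ω - (P[YT T (t+1)|F t]) ω)
        ((1+α) * (YT T t ω - Y t ω))
      have habs3 : |(1+α) * (YT T t ω - Y t ω)| = (1+α) * |YT T t ω - Y t ω| := by
        rw [abs_mul, abs_of_pos h1α]
      rw [habs3] at habs2
      have h3 : (1+α) * |YT T t ω - Y t ω| ≤ (1+α) * ε1 :=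
        mul_le_mul_of_nonneg_left e3 (le_of_lt h1α)
      linarith [habs1, habs2, e1, e2]
    refine le_trans hmain ?_
    rw [hKtot, hε1]
    nlinarith [pow_nonneg (le_of_lt (show (0:ℝ) < 1/(1+α) by positivity)) k,
      div_nonneg (le_of_lt hC) (le_of_lt hα)]
  have hfinal : ∀ᵐ ω ∂P, (P[Y (t+1)|F t]) ω = (1+α) * Y t ω - f ω t (Z ω) := by
    filter_upwards [ae_all_iff.2 hT] with ω hω
    have h0 : Tendsto (fun k : ℕ => Ktot * (1/(1+α))^k) atTop (nhds 0) := by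
      have hr := tendsto_pow_atTop_nhds_zero_of_lt_one
        (le_of_lt (show (0:ℝ) < 1/(1+α) by positivity))
        (by rw [div_lt_one h1α]; linarith)
      simpa using hr.const_mul Ktot
    have habs : |(P[Y (t+1)|F t]) ω - ((1+α) * Y t ω - f ω t (Z ω))| ≤ 0 :=
      ge_of_tendsto h0 (Eventually.of_forall hω)
    have := abs_eq_zero.1 (le_antisymm habs (abs_nonneg _))
    linarith [this]
  filter_upwards [hfinal, hrep] with ω h1 h2
  rw [h2, h1]
  ring

end MainLemmas4


section MainLemmas5
variable {Ω : Type*} {mΩ : MeasurableSpace Ω} {N : ℕ}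
variable {P : Measure Ω} {F : Filtration ℕ mΩ} {X : ℕ → Ω → (Fin N → ℝ)}

/-- telescoping one-step equations into the discounted BSDE equation. -/
lemma onestep_to_solution {α : ℝ} {f : Ω → ℕ → (Fin N → ℝ) → ℝ}
    {Y : ℕ → Ω → ℝ} {Z : ℕ → Ω → Fin N → ℝ}
    (hstep : ∀ t, ∀ᵐ ω ∂P, Y (t+1) ω
      = (1+α) * Y t ω - f ω t (Z t ω) + dotR (Z t ω) (Mdiff P F X t ω))
    (t T : ℕ) (htT : t < T) :
    ∀ᵐ ω ∂P, Y T ω = Y t ω - ∑ u ∈ Finset.Ico t T, (f ω u (Z u ω) - α * Y u ω)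
      + ∑ u ∈ Finset.Ico t T, dotR (Z u ω) (Mdiff P F X u ω) := by
  filter_upwards [ae_all_iff.2 hstep] with ω hω
  clear hstep
  induction T with
  | zero => omega
  | succ T ih =>
    by_cases hT : t < T
    · have hstepT := hω T
      have hih := ih hT
      rw [Finset.sum_Ico_succ_top (le_of_lt hT), Finset.sum_Ico_succ_top (le_of_lt hT)
        (f := fun u => dotR (Z u ω) (Mdiff P F X u ω)), hstepT, hih]
      ring
    · have hTt : T = t := by omega
      subst hTt
      rw [Finset.sum_Ico_succ_top le_rfl, Finset.sum_Ico_succ_top le_rfl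
        (f := fun u => dotR (Z u ω) (Mdiff P F X u ω)), Finset.Ico_self]
      simp only [Finset.sum_empty]
      rw [hω T]
      ring

lemma equivMt_of_dot_zero [IsProbabilityMeasure P] (t : ℕ) {Z1 Z2 : Ω → Fin N → ℝ}
    (h0 : ∀ᵐ ω ∂P, dotR (Z1 ω) (Mdiff P F X t ω)
      - dotR (Z2 ω) (Mdiff P F X t ω) = 0) :
    equivMt P F X t Z1 Z2 := by
  have hg : (fun ω => (dotR ((fun ω' => Z1 ω' - Z2 ω') ω) (Mdiff P F X t ω))^2)
      =ᵐ[P] (0 : Ω → ℝ) := by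
    filter_upwards [h0] with ω h
    have hz : dotR (Z1 ω - Z2 ω) (Mdiff P F X t ω) = 0 := by
      rw [dotR_sub]
      exact h
    simp [hz]
  have h1 : seminormSq P F X t (fun ω => Z1 ω - Z2 ω)
      =ᵐ[P] P[(0 : Ω → ℝ)|F t] := condExp_congr_ae hg
  rw [equivMt]
  refine h1.trans ?_
  rw [condExp_zero]

end MainLemmas5

/-- **Discounted BSDE: existence, uniqueness and approximation** by finite-horizon
solutions. -/
theorem discounted_BSDE_exists_unique
    {Ω : Type*} {mΩ : MeasurableSpace Ω} {N : ℕ}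
    (P : Measure Ω) [IsProbabilityMeasure P] (F : Filtration ℕ mΩ)
    (X : ℕ → Ω → (Fin N → ℝ)) (hX : BasisValued X)
    (hF : IsCompletedNaturalFiltration P X F)
    (α : ℝ) (hα : 0 < α)
    (f : Ω → ℕ → (Fin N → ℝ) → ℝ)
    (hfAd : ∀ t : ℕ, Measurable[(F t).prod inferInstance]
      fun p : Ω × (Fin N → ℝ) => f p.1 t p.2)
    (L : ℝ) (hL : 0 < L) (hfLip : DriverLipschitzNoY P F X L f)
    (hfComp : ComparisonCondition P F X fun ω t _ z => f ω t z)
    (C : ℝ) (hC : 0 < C) (hfBdd : ∀ (ω : Ω) (t : ℕ), |f ω t 0| ≤ C)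
    (YT : ℕ → ℕ → Ω → ℝ) (ZT : ℕ → ℕ → Ω → Fin N → ℝ)
    (hYT : ∀ T : ℕ, SolvesFiniteBSDE P F X (fun ω u y z => f ω u z - α * y) T
      (fun _ => 0) (YT T) (ZT T)) :
    ∃ (Y : ℕ → Ω → ℝ) (Z : ℕ → Ω → Fin N → ℝ),
      SolvesDiscountedBSDE P F X α f Y Z ∧
      (∀ t : ℕ, ∀ᵐ ω ∂P, |Y t ω| ≤ C / α) ∧
      (∀ (Y' : ℕ → Ω → ℝ) (Z' : ℕ → Ω → Fin N → ℝ),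
        SolvesDiscountedBSDE P F X α f Y' Z' →
        (∃ D : ℝ, ∀ t : ℕ, ∀ᵐ ω ∂P, |Y' t ω| ≤ D) →
        (∀ t : ℕ, Y t =ᵐ[P] Y' t) ∧ equivM P F X Z Z') ∧
      ∀ t₀ : ℕ, ∀ ε : ℝ, 0 < ε → ∃ T₀ : ℕ, ∀ T ≥ T₀, ∀ t ≤ t₀,
        eLpNorm (fun ω => YT T t ω - Y t ω) ⊤ P ≤ ENNReal.ofReal ε := by
  classical
  have h1α : (0:ℝ) < 1 + α := by linarith
  have hr0 : (0:ℝ) < 1/(1+α) := by positivity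
  have hr1 : (1:ℝ)/(1+α) < 1 := by
    rw [div_lt_one h1α]
    linarith
  have hpowconv : ∀ m : ℕ, (C/α)/(1+α)^m = (C/α)*(1/(1+α))^m := by
    intro m
    rw [one_div, inv_pow, ← div_eq_mul_inv]
  obtain ⟨Y, hYm, htend⟩ := exists_limY hX hF hα hfAd hfComp hC hfBdd hYT
  set Z : ℕ → Ω → Fin N → ℝ := fun t => Zc P F X (Y (t+1)) t with hZdef
  have hZm : ∀ t, StronglyMeasurable[F t] (Z t) := fun t => Zc_stronglyMeasurable _ t
  have hstep : ∀ t, ∀ᵐ ω ∂P, Y (t+1) ω = (1+α) * Y t ω - f ω t (Z t ω)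
      + dotR (Z t ω) (Mdiff P F X t ω) :=
    fun t => main_onestep hX hF hα hfAd hfComp hL hfLip hC hfBdd hYT hYm htend t
  have hsol : SolvesDiscountedBSDE P F X α f Y Z :=
    ⟨fun t => (hYm t).measurable, fun t => (hZm t).measurable, fun t T htT => onestep_to_solution hstep t T htT⟩
  have hbound : ∀ t, ∀ᵐ ω ∂P, |Y t ω| ≤ C/α :=
    fun t => Y_bound hX hF hα hfAd hfComp hC hfBdd hYT htend t
  refine ⟨Y, Z, hsol, hbound, ?_, ?_⟩
  · -- uniqueness
    rintro Y' Z' hsol' ⟨D, hD⟩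
    have hstep' : ∀ t, ∀ᵐ ω ∂P, Y' (t+1) ω = (1+α) * Y' t ω - f ω t (Z' t ω)
        + dotR (Z' t ω) (Mdiff P F X t ω) := discounted_onestep hsol'
    have hiter : ∀ k t : ℕ, ∀ᵐ ω ∂P, |Y t ω - Y' t ω| ≤ (C/α + D)/(1+α)^k := by
      intro k
      induction k with
      | zero =>
        intro t
        filter_upwards [hbound t, hD t] with ω h1 h2
        rw [pow_zero, div_one]
        calc |Y t ω - Y' t ω| ≤ |Y t ω| + |Y' t ω| := abs_sub _ _
          _ ≤ C/α + D := add_le_add h1 h2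
      | succ k ih =>
        intro t
        have hcon := onestep_contraction hX hF hα hfAd hfComp t
          (hYm t).measurable ((hsol'.1 t)) (hZm t) (hsol'.2.1 t).stronglyMeasurable
          (hstep t) (hstep' t) (ih (t+1))
        filter_upwards [hcon] with ω h
        rwa [div_div, ← pow_succ] at h
    have hzero : ∀ t, ∀ᵐ ω ∂P, Y t ω = Y' t ω := by
      intro t
      filter_upwards [ae_all_iff.2 (fun k => hiter k t)] with ω hω
      have h0 : Tendsto (fun k : ℕ => (C/α + D)*(1/(1+α))^k) atTop (nhds 0) := by
        have hr := tendsto_pow_atTop_nhds_zero_of_lt_one (le_of_lt hr0) hr1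
        simpa using hr.const_mul (C/α + D)
      have hω' : ∀ k : ℕ, |Y t ω - Y' t ω| ≤ (C/α + D)*(1/(1+α))^k := by
        intro k
        have := hω k
        rwa [show (C/α + D)/(1+α)^k = (C/α + D)*(1/(1+α))^k by
          rw [one_div, inv_pow, ← div_eq_mul_inv]] at this
      have habs : |Y t ω - Y' t ω| ≤ 0 := ge_of_tendsto h0 (Eventually.of_forall hω')
      have := abs_eq_zero.1 (le_antisymm habs (abs_nonneg _))
      linarith [this]
    refine ⟨fun t => hzero t, fun t => ?_⟩
    have hdot0 : ∀ᵐ ω ∂P, dotR (Z t ω) (Mdiff P F X t ω)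
        - dotR (Z' t ω) (Mdiff P F X t ω) = 0 := by
      have hhm : Measurable[F t] (fun ω => f ω t (Z t ω) - f ω t (Z' t ω)) :=
        (measurable_f_Z hfAd t (hZm t)).sub (measurable_f_Z hfAd t (hsol'.2.1 t).stronglyMeasurable)
      have hbd := dot_bound_on_atom hX hF t (hZm t) (hsol'.2.1 t).stronglyMeasurable hhm
        (u := fun ω => (Y (t+1) ω - Y' (t+1) ω) - (1+α)*(Y t ω - Y' t ω)) (ε := 0)
        (by filter_upwards [hstep t, hstep' t] with ω e1 e2
            linarith [e1, e2])
        (by filter_upwards [hzero (t+1), hzero t] with ω h1 h2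
            rw [h1, h2]
            simp)
      filter_upwards [hbd] with ω h
      have h' : |dotR (Z t ω) (Mdiff P F X t ω) - dotR (Z' t ω) (Mdiff P F X t ω)| ≤ 0 := by
        linarith [h]
      exact abs_eq_zero.1 (le_antisymm h' (abs_nonneg _))
    exact equivMt_of_dot_zero t hdot0
  · -- convergence of finite-horizon approximations
    intro t₀ ε hε
    have h0 : Tendsto (fun n : ℕ => (C/α)*(1/(1+α))^n) atTop (nhds 0) := by
      have hr := tendsto_pow_atTop_nhds_zero_of_lt_one (le_of_lt hr0) hr1
      simpa using hr.const_mul (C/α)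
    obtain ⟨n, hn⟩ := (h0.eventually (gt_mem_nhds hε)).exists
    refine ⟨t₀ + n, fun T hT t ht => ?_⟩
    have htT : t ≤ T := by omega
    have herr := Y_err hX hF hα hfAd hfComp hC hfBdd hYT htend t T htT
    have hmono : (C/α)/(1+α)^(T-t) ≤ (C/α)*(1/(1+α))^n := by
      rw [hpowconv (T-t)]
      have hpow : (1/(1+α))^(T-t) ≤ (1/(1+α))^n :=
        pow_le_pow_of_le_one (le_of_lt hr0) (le_of_lt hr1) (by omega)
      have hCα : (0:ℝ) ≤ C/α := div_nonneg (le_of_lt hC) (le_of_lt hα)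
      exact mul_le_mul_of_nonneg_left hpow hCα
    have hb : ∀ᵐ ω ∂P, ‖YT T t ω - Y t ω‖ ≤ (C/α)*(1/(1+α))^n := by
      filter_upwards [herr] with ω h
      rw [Real.norm_eq_abs]
      exact le_trans h hmono
    have hle := eLpNorm_le_of_ae_bound (p := ⊤) (μ := P) hb
    refine le_trans hle ?_
    have huniv : (P Set.univ : ENNReal) ^ (⊤ : ENNReal).toReal⁻¹ = 1 := by
      simp [measure_univ]
    rw [huniv, one_mul]
    exact ENNReal.ofReal_le_ofReal (le_of_lt hn)
end DiscreteEBSDE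
end
end

section
/- If a driver f is γ-balanced for some γ ∈ (0,1), then f is Lipschitz in z with Lipschitz constant 1/γ; that is, for every t and all F_t-measurable random variables Y_t (real-valued) and Z_t, Z'_t (ℝ^N-valued), |f(ω,t,Y_t,Z_t) − f(ω,t,Y_t,Z'_t)| ≤ (1/γ)‖Z_t − Z'_t‖_{M_{t+1}} a.s. -/
open MeasureTheory Finset Filter

noncomputable section

namespace DiscreteEBSDE

variable {Ω : Type*} {mΩ : MeasurableSpace Ω} {N : ℕ}

namespace Helper

variable {Ω : Type*} {mΩ : MeasurableSpace Ω} {N : ℕ}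

lemma integrable_of_ae_bound {P : Measure Ω} [IsProbabilityMeasure P] {g : Ω → ℝ}
    (hg : AEStronglyMeasurable g P) {C : ℝ} (h : ∀ᵐ ω ∂P, |g ω| ≤ C) :
    Integrable g P :=
  (integrable_const C).mono' hg (h.mono fun ω hω => by
    rw [Real.norm_eq_abs]; exact hω)

lemma dot_e (z : Fin N → ℝ) (k : Fin N) :
    ∑ i, z i * DiscreteEBSDE.e N k i = z k := by
  simp [DiscreteEBSDE.e, Pi.single_apply, mul_ite]

lemma e_inj : Function.Injective (DiscreteEBSDE.e N) := by
  intro i j h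
  by_contra hne
  have := congrFun h i
  simp [DiscreteEBSDE.e, Pi.single_apply, hne] at this

lemma abs_e_le (k : Fin N) (i : Fin N) : |DiscreteEBSDE.e N k i| ≤ 1 := by
  simp only [DiscreteEBSDE.e, Pi.single_apply]
  split <;> norm_num

end Helper

lemma balanced_algebra {N : ℕ} {γ : ℝ} (hγ : γ ∈ Set.Ioo (0 : ℝ) 1)
    (p ψ w : Fin N → ℝ) (hp0 : ∀ i, 0 ≤ p i) (hp1 : ∑ i, p i = 1)
    (hψ1 : ∑ i, ψ i = 1) (hr : ∀ i, balRatio (ψ i) (p i) ∈ Set.Icc γ γ⁻¹) :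
    |∑ i, w i * (ψ i - p i)| ≤
      γ⁻¹ * Real.sqrt (∑ i, p i * w i ^ 2 - (∑ i, p i * w i) ^ 2) := by
  obtain ⟨hγ0, hγ1⟩ := hγ
  have hγinv : (1:ℝ) ≤ γ⁻¹ := (one_le_inv₀ hγ0).2 hγ1.le
  set r : Fin N → ℝ := fun i => if p i = 0 then 1 else ψ i / p i with hrdef
  have hψ_eq : ∀ i, ψ i = r i * p i := by
    intro i
    by_cases hpi : p i = 0
    · simp only [hrdef, hpi, if_pos, mul_zero]
      by_contra hψi
      have := hr i
      rw [balRatio, if_neg (by tauto), hpi, div_zero] at this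
      exact absurd this.1 (by linarith)
    · simp only [hrdef, hpi, if_false]; exact (div_mul_cancel₀ _ hpi).symm
  have hrI : ∀ i, γ ≤ r i ∧ r i ≤ γ⁻¹ := by
    intro i
    by_cases hpi : p i = 0
    · simp only [hrdef, hpi, if_pos]
      exact ⟨hγ1.le, hγinv⟩
    · have := hr i
      by_cases hψi : ψ i = 0
      · rw [balRatio, if_neg (by tauto)] at this
        simp only [hrdef, hpi, if_neg, Set.mem_Icc] at *
        exact this
      · rw [balRatio, if_neg (by tauto)] at this
        simp only [hrdef, hpi, if_neg, Set.mem_Icc] at *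
        exact this
  have hψ0 : ∀ i, 0 ≤ ψ i := fun i => by
    rw [hψ_eq i]; exact mul_nonneg (le_trans hγ0.le (hrI i).1) (hp0 i)
  set c : ℝ := ∑ i, p i * w i with hc
  set S : ℝ := ∑ i, p i * w i ^ 2 - (∑ i, p i * w i) ^ 2 with hS
  have hSalt : S = ∑ i, p i * (w i - c) ^ 2 := by
    simp only [hS, hc, sub_sq, mul_add, mul_sub]
    rw [Finset.sum_add_distrib, Finset.sum_sub_distrib]
    have h1 : ∑ i, p i * (2 * w i * c) = 2 * c * ∑ i, p i * w i := by
      rw [Finset.mul_sum]; congr 1; ext i; ring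
    have h2 : ∑ i, p i * c ^ 2 = c ^ 2 := by
      rw [← Finset.sum_mul, hp1, one_mul]
    rw [h1, h2]; ring
  have hS0 : 0 ≤ S := by
    rw [hSalt]
    exact Finset.sum_nonneg fun i _ => mul_nonneg (hp0 i) (sq_nonneg _)
  -- key: the sum equals recentered sum
  have hsum0 : ∑ i, p i * (r i - 1) = 0 := by
    have : ∑ i, p i * (r i - 1) = (∑ i, ψ i) - ∑ i, p i := by
      rw [← Finset.sum_sub_distrib]; congr 1; ext i; rw [hψ_eq i]; ring
    rw [this, hψ1, hp1, sub_self]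
  have hD : ∑ i, w i * (ψ i - p i) = ∑ i, (w i - c) * (p i * (r i - 1)) := by
    have : ∑ i, (w i - c) * (p i * (r i - 1))
        = (∑ i, w i * (p i * (r i - 1))) - c * ∑ i, p i * (r i - 1) := by
      rw [Finset.mul_sum, ← Finset.sum_sub_distrib]; congr 1; ext i; ring
    rw [this, hsum0, mul_zero, sub_zero]
    congr 1; ext i; rw [hψ_eq i]; ring
  have hB : ∑ i, p i * (r i - 1) ^ 2 ≤ γ⁻¹ - 1 := by
    have hexp : ∑ i, p i * (r i - 1) ^ 2
        = ∑ i, (ψ i * r i - 2 * ψ i + p i) :=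
      Finset.sum_congr rfl fun i _ => by rw [hψ_eq i]; ring
    rw [Finset.sum_add_distrib, Finset.sum_sub_distrib, ← Finset.mul_sum,
      hψ1, hp1] at hexp
    rw [hexp]
    have : ∑ i, ψ i * r i ≤ γ⁻¹ := by
      calc ∑ i, ψ i * r i ≤ ∑ i, ψ i * γ⁻¹ := by
            apply Finset.sum_le_sum
            intro i _; exact mul_le_mul_of_nonneg_left (hrI i).2 (hψ0 i)
        _ = γ⁻¹ := by rw [← Finset.sum_mul, hψ1, one_mul]
    linarith
  have hBS : γ⁻¹ - 1 ≤ γ⁻¹ ^ 2 := by nlinarith [sq_nonneg (γ⁻¹ - 1)]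
  have hCS : (∑ i, (w i - c) * (p i * (r i - 1))) ^ 2
      ≤ S * (γ⁻¹ ^ 2) := by
    have := sum_sq_le_sum_mul_sum_of_sq_eq_mul Finset.univ
      (r := fun i => (w i - c) * (p i * (r i - 1)))
      (f := fun i => p i * (w i - c) ^ 2) (g := fun i => p i * (r i - 1) ^ 2)
      (fun i _ => mul_nonneg (hp0 i) (sq_nonneg _))
      (fun i _ => mul_nonneg (hp0 i) (sq_nonneg _))
      (fun i _ => by ring)
    calc (∑ i, (w i - c) * (p i * (r i - 1))) ^ 2
        ≤ (∑ i, p i * (w i - c) ^ 2) * ∑ i, p i * (r i - 1) ^ 2 := this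
      _ ≤ S * (γ⁻¹ ^ 2) := by
          rw [← hSalt]
          apply mul_le_mul_of_nonneg_left _ hS0
          exact le_trans hB hBS
  rw [hD]
  have habs : |∑ i, (w i - c) * (p i * (r i - 1))| ≤ Real.sqrt (S * γ⁻¹ ^ 2) := by
    rw [← Real.sqrt_sq_eq_abs]
    exact Real.sqrt_le_sqrt hCS
  calc |∑ i, (w i - c) * (p i * (r i - 1))| ≤ Real.sqrt (S * γ⁻¹ ^ 2) := habs
    _ = γ⁻¹ * Real.sqrt S := by
        rw [Real.sqrt_mul hS0, Real.sqrt_sq (by positivity), mul_comm]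


lemma exists_ae_const_on (P : Measure Ω)
    [IsProbabilityMeasure P] {m : MeasurableSpace Ω} (hm : m ≤ mΩ) {S : Set Ω} (hpos : P S ≠ 0)
    {V : Ω → ℝ} (hV : Measurable[m] V)
    (h01 : ∀ A : Set Ω, MeasurableSet[m] A → P (A ∩ S) = 0 ∨ P (S \ A) = 0) :
    ∃ v : ℝ, P ({ω | V ω ≠ v} ∩ S) = 0 := by
  have hStop : P S ≠ ⊤ := measure_ne_top P S
  set G : ℝ → ENNReal := fun x => P ({ω | V ω ≤ x} ∩ S) with hG
  have hAm : ∀ x : ℝ, MeasurableSet[m] {ω | V ω ≤ x} := fun x => hV measurableSet_Iic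
  have hfull : ∀ x : ℝ, P (S \ {ω | V ω ≤ x}) = 0 → G x = P S := by
    intro x h
    have := @measure_inter_add_diff Ω mΩ P _ S (hm _ (hAm x))
    rw [h, add_zero, Set.inter_comm] at this
    exact this
  have hdich : ∀ x : ℝ, G x = 0 ∨ G x = P S := by
    intro x
    rcases h01 _ (hAm x) with h | h
    · exact Or.inl h
    · exact Or.inr (hfull x h)
  have hcompl : ∀ x : ℝ, G x = P S → P (S \ {ω | V ω ≤ x}) = 0 := by
    intro x h
    have h2 := @measure_inter_add_diff Ω mΩ P _ S (hm _ (hAm x))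
    rw [Set.inter_comm] at h2
    have h' : P ({ω | V ω ≤ x} ∩ S) = P S := h
    rw [h'] at h2
    nth_rewrite 2 [← add_zero (P S)] at h2
    exact (ENNReal.add_right_inj hStop).1 h2
  have hGmono : ∀ {x y : ℝ}, x ≤ y → G x ≤ G y := by
    intro x y hxy
    apply measure_mono
    intro ω hω
    exact ⟨le_trans hω.1 hxy, hω.2⟩
  -- ∃ upper point in T
  have hup : ∃ n : ℕ, G (n : ℝ) = P S := by
    by_contra hno
    push_neg at hno
    have h0 : ∀ n : ℕ, G (n : ℝ) = 0 := fun n => (hdich n).resolve_right (hno n)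
    have : S ⊆ ⋃ n : ℕ, ({ω | V ω ≤ (n : ℝ)} ∩ S) := by
      intro ω hω
      obtain ⟨n, hn⟩ := exists_nat_ge (V ω)
      exact Set.mem_iUnion.2 ⟨n, hn, hω⟩
    exact hpos (measure_mono_null this (measure_iUnion_null h0))
  have hdown : ∃ n : ℕ, G (-(n : ℝ)) = 0 := by
    by_contra hno
    push_neg at hno
    have h1 : ∀ n : ℕ, P (S \ {ω | V ω ≤ -(n : ℝ)}) = 0 := fun n =>
      hcompl _ ((hdich _).resolve_left (hno n))
    have : S ⊆ ⋃ n : ℕ, (S \ {ω | V ω ≤ -(n : ℝ)}) := by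
      intro ω hω
      obtain ⟨n, hn⟩ := exists_nat_gt (-(V ω))
      exact Set.mem_iUnion.2 ⟨n, hω, by simp only [Set.mem_setOf_eq]; push_neg; linarith⟩
    exact hpos (measure_mono_null this (measure_iUnion_null h1))
  obtain ⟨nu, hnu⟩ := hup
  obtain ⟨nd, hnd⟩ := hdown
  set T : Set ℝ := {x | G x = P S} with hT
  have hTne : Set.Nonempty T := ⟨nu, hnu⟩
  have hTbdd : BddBelow T := by
    refine ⟨-(nd : ℝ), fun x hx => ?_⟩
    by_contra hlt
    push_neg at hlt
    have h2 : G x ≤ G (-(nd : ℝ)) := hGmono hlt.le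
    rw [hnd] at h2
    have h3 : G x = 0 := le_antisymm h2 zero_le
    rw [hT] at hx
    simp only [Set.mem_setOf_eq] at hx
    rw [hx] at h3
    exact hpos h3
  set v : ℝ := sInf T with hv
  have hlt0 : ∀ x : ℝ, x < v → G x = 0 := by
    intro x hx
    refine (hdich x).resolve_right fun hmem => ?_
    exact absurd (csInf_le hTbdd hmem) (not_le.2 hx)
  have hgtfull : ∀ x : ℝ, v < x → G x = P S := by
    intro x hx
    obtain ⟨y, hyT, hyx⟩ := (csInf_lt_iff hTbdd hTne).1 hx
    have h1 : P S ≤ G x := hyT ▸ hGmono hyx.le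
    exact le_antisymm (measure_mono Set.inter_subset_right) h1
  have hbelow : P ({ω | V ω < v} ∩ S) = 0 := by
    have hsub : {ω | V ω < v} ∩ S ⊆
        ⋃ k : ℕ, ({ω | V ω ≤ v - 1 / ((k : ℝ) + 1)} ∩ S) := by
      rintro ω ⟨hω, hωS⟩
      have hω' : V ω < v := hω
      obtain ⟨k, hk⟩ := exists_nat_one_div_lt (show (0:ℝ) < v - V ω by linarith)
      exact Set.mem_iUnion.2 ⟨k, by simp only [Set.mem_setOf_eq]; linarith, hωS⟩
    refine measure_mono_null hsub (measure_iUnion_null fun k => hlt0 _ ?_)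
    have : (0:ℝ) < 1 / ((k : ℝ) + 1) := by positivity
    linarith
  have habove : P (S \ {ω | V ω ≤ v}) = 0 := by
    have hsub : S \ {ω | V ω ≤ v} ⊆
        ⋃ k : ℕ, (S \ {ω | V ω ≤ v + 1 / ((k : ℝ) + 1)}) := by
      rintro ω ⟨hωS, hω⟩
      simp only [Set.mem_setOf_eq, not_le] at hω
      obtain ⟨k, hk⟩ := exists_nat_one_div_lt (show (0:ℝ) < V ω - v by linarith)
      refine Set.mem_iUnion.2 ⟨k, hωS, ?_⟩
      simp only [Set.mem_setOf_eq]; push_neg; linarith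
    refine measure_mono_null hsub (measure_iUnion_null fun k => hcompl _ (hgtfull _ ?_))
    have : (0:ℝ) < 1 / ((k : ℝ) + 1) := by positivity
    linarith
  refine ⟨v, measure_mono_null ?_ (measure_union_null hbelow habove)⟩
  rintro ω ⟨hω, hωS⟩
  rcases lt_or_gt_of_ne (hω : V ω ≠ v) with h | h
  · exact Or.inl ⟨h, hωS⟩
  · exact Or.inr ⟨hωS, by simp only [Set.mem_setOf_eq]; push_neg; exact h⟩


lemma condexp_sq_dot (P : Measure Ω) [IsProbabilityMeasure P] (F : Filtration ℕ mΩ)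
    (X : ℕ → Ω → (Fin N → ℝ)) (hX : DiscreteEBSDE.BasisValued X) (t : ℕ)
    (hXm : Measurable (X (t + 1)))
    (A : ℕ → Matrix (Fin N) (Fin N) ℝ)
    (hXFi : ∀ i, Measurable[F t] fun ω => (A t).mulVec (X t ω) i)
    (hA : DiscreteEBSDE.IsMarkovChain P F X A)
    (z : Fin N → ℝ) :
    (P[(fun ω => (DiscreteEBSDE.dotR z (DiscreteEBSDE.Mdiff P F X t ω)) ^ 2)|F t]) =ᵐ[P]
      fun ω => (∑ i, (A t).mulVec (X t ω) i * z i ^ 2)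
        - (∑ i, (A t).mulVec (X t ω) i * z i) ^ 2 := by
  haveI hσ : SigmaFinite (P.trim (F.le t)) := inferInstance
  set q : Ω → Fin N → ℝ := fun ω => (A t).mulVec (X t ω) with hqdef
  set u : Ω → ℝ := fun ω => ∑ i, z i * X (t + 1) ω i with hudef
  set v : Ω → ℝ := fun ω => ∑ i, z i * q ω i with hvdef
  set Cz : ℝ := ∑ i, |z i| with hCz
  -- basic facts about q
  have hqform : ∀ ω, ∃ k, X t ω = DiscreteEBSDE.e N k ∧ ∀ i, q ω i = A t i k := by
    intro ω
    obtain ⟨k, hk⟩ := hX t ω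
    refine ⟨k, hk, fun i => ?_⟩
    simp only [hqdef, hk, DiscreteEBSDE.e, Matrix.mulVec_single_one, Matrix.col_apply]
  have hqabs : ∀ ω i, |q ω i| ≤ 1 := by
    intro ω i
    obtain ⟨k, _, hform⟩ := hqform ω
    rw [hform i, abs_of_nonneg (hA.1 t |>.1 i k)]
    calc A t i k ≤ ∑ i', A t i' k :=
          Finset.single_le_sum (fun i' _ => (hA.1 t).1 i' k) (Finset.mem_univ i)
      _ = 1 := (hA.1 t).2 k
  -- measurability
  have hqmF : ∀ i, Measurable[F t] fun ω => q ω i := fun i => hXFi i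
  have humeas : Measurable u := by
    apply Finset.measurable_sum
    intro i _
    exact measurable_const.mul ((measurable_pi_apply i).comp hXm)
  have hvmF : Measurable[F t] v := by
    apply Finset.measurable_sum
    intro i _
    exact (measurable_const.mul (hqmF i) :)
  have hvsm : StronglyMeasurable[F t] v := hvmF.stronglyMeasurable
  have hvmeas : Measurable v := hvmF.mono (F.le t) le_rfl
  -- bounds
  have hXabs : ∀ s ω i, |X s ω i| ≤ 1 := by
    intro s ω i
    obtain ⟨k, hk⟩ := hX s ω
    rw [hk]
    exact Helper.abs_e_le k i
  have hub : ∀ ω, |u ω| ≤ Cz := by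
    intro ω
    refine le_trans (Finset.abs_sum_le_sum_abs _ _) (Finset.sum_le_sum fun i _ => ?_)
    rw [abs_mul]
    exact mul_le_of_le_one_right (abs_nonneg _) (hXabs (t+1) ω i)
  have hvb : ∀ ω, |v ω| ≤ Cz := by
    intro ω
    refine le_trans (Finset.abs_sum_le_sum_abs _ _) (Finset.sum_le_sum fun i _ => ?_)
    rw [abs_mul]
    exact mul_le_of_le_one_right (abs_nonneg _) (hqabs ω i)
  -- integrability
  have hXi_int : ∀ i, Integrable (fun ω => X (t + 1) ω i) P := fun i =>
    Helper.integrable_of_ae_bound ((measurable_pi_apply i).comp hXm).aestronglyMeasurable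
      (Filter.Eventually.of_forall fun ω => hXabs (t+1) ω i)
  have hu_int : Integrable u P :=
    Helper.integrable_of_ae_bound humeas.aestronglyMeasurable
      (Filter.Eventually.of_forall hub)
  have husq_int : Integrable (fun ω => u ω ^ 2) P := by
    refine Helper.integrable_of_ae_bound ((humeas.pow_const 2).aestronglyMeasurable)
      (C := Cz ^ 2) (Filter.Eventually.of_forall fun ω => ?_)
    rw [abs_pow]
    exact pow_le_pow_left₀ (abs_nonneg _) (hub ω) 2
  have hvsq_int : Integrable (fun ω => v ω ^ 2) P := by
    refine Helper.integrable_of_ae_bound ((hvmeas.pow_const 2).aestronglyMeasurable)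
      (C := Cz ^ 2) (Filter.Eventually.of_forall fun ω => ?_)
    rw [abs_pow]
    exact pow_le_pow_left₀ (abs_nonneg _) (hvb ω) 2
  have hcross_int : Integrable ((fun ω => 2 * v ω) * u) P := by
    refine Helper.integrable_of_ae_bound
      (((measurable_const.mul hvmeas).mul humeas).aestronglyMeasurable)
      (C := 2 * Cz * Cz) (Filter.Eventually.of_forall fun ω => ?_)
    simp only [Pi.mul_apply]
    rw [abs_mul, abs_mul]
    have h0Cz : (0:ℝ) ≤ Cz := le_trans (abs_nonneg _) (hvb ω)
    have := hvb ω
    have := hub ω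
    rw [abs_two]
    gcongr
  -- the conditional expectations of the coordinates
  have hcE : ∀ i : Fin N, (P[(fun ω => X (t + 1) ω i)|F t]) =ᵐ[P] fun ω => q ω i :=
    fun i => hA.2 t i
  -- Step 1: rewrite integrand a.e.
  have h0 : (fun ω => (DiscreteEBSDE.dotR z (DiscreteEBSDE.Mdiff P F X t ω)) ^ 2) =ᵐ[P]
      fun ω => (u ω - v ω) ^ 2 := by
    have hae : ∀ᵐ ω ∂P, ∀ i, (P[(fun ω' => X (t + 1) ω' i)|F t]) ω = q ω i :=
      (MeasureTheory.ae_all_iff).2 fun i => hcE i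
    filter_upwards [hae] with ω hω
    have : DiscreteEBSDE.dotR z (DiscreteEBSDE.Mdiff P F X t ω) = u ω - v ω := by
      simp only [DiscreteEBSDE.dotR, DiscreteEBSDE.Mdiff, mul_sub, hudef, hvdef]
      rw [Finset.sum_sub_distrib]
      congr 1
      exact Finset.sum_congr rfl fun i _ => by rw [hω i]
    rw [this]
  -- Step 2: split into three terms
  have hsplitfun : (fun ω => (u ω - v ω) ^ 2) =
      ((fun ω => u ω ^ 2) - (fun ω => 2 * v ω) * u) + fun ω => v ω ^ 2 := by
    funext ω
    simp only [Pi.add_apply, Pi.sub_apply, Pi.mul_apply]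
    ring
  have hsplit : (P[(fun ω => (u ω - v ω) ^ 2)|F t]) =ᵐ[P]
      (P[(fun ω => u ω ^ 2)|F t]) - (P[(fun ω => 2 * v ω) * u|F t])
        + (P[(fun ω => v ω ^ 2)|F t]) := by
    rw [hsplitfun]
    exact (condExp_add (husq_int.sub hcross_int) hvsq_int _).trans
      ((condExp_sub husq_int hcross_int _).add EventuallyEq.rfl)
  -- Step 3: each term
  have hu2fun : (fun ω => u ω ^ 2) = ∑ i, (z i ^ 2) • fun ω => X (t + 1) ω i := by
    funext ω
    rw [Finset.sum_apply]
    simp only [Pi.smul_apply, smul_eq_mul]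
    obtain ⟨k, hk⟩ := hX (t + 1) ω
    simp only [hudef, hk]
    rw [Helper.dot_e z k, Helper.dot_e (fun i => z i ^ 2) k]
  have hufun : u = ∑ i, (z i) • fun ω => X (t + 1) ω i := by
    funext ω
    rw [Finset.sum_apply]
    simp only [Pi.smul_apply, smul_eq_mul, hudef]
  have hu2 : (P[(fun ω => u ω ^ 2)|F t]) =ᵐ[P] fun ω => ∑ i, z i ^ 2 * q ω i := by
    rw [hu2fun]
    refine (condExp_finsetSum (fun i _ =>
      ((hXi_int i).smul (z i ^ 2) :)) _).trans ?_
    have hterm : ∀ i : Fin N, (P[(z i ^ 2) • fun ω => X (t + 1) ω i|F t]) =ᵐ[P]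
        fun ω => z i ^ 2 * q ω i := fun i =>
      (condExp_smul (z i ^ 2) _ _).trans ((hcE i).const_smul (z i ^ 2))
    have := (MeasureTheory.ae_all_iff).2 hterm
    filter_upwards [this] with ω hω
    rw [Finset.sum_apply]
    exact Finset.sum_congr rfl fun i _ => hω i
  have hu1 : (P[u|F t]) =ᵐ[P] v := by
    rw [hufun]
    refine (condExp_finsetSum (fun i _ => ((hXi_int i).smul (z i) :)) _).trans ?_
    have hterm : ∀ i : Fin N, (P[(z i) • fun ω => X (t + 1) ω i|F t]) =ᵐ[P]
        fun ω => z i * q ω i := fun i =>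
      (condExp_smul (z i) _ _).trans ((hcE i).const_smul (z i))
    have := (MeasureTheory.ae_all_iff).2 hterm
    filter_upwards [this] with ω hω
    rw [Finset.sum_apply]
    exact Finset.sum_congr rfl fun i _ => hω i
  have hcross : (P[(fun ω => 2 * v ω) * u|F t]) =ᵐ[P] fun ω => 2 * v ω * v ω := by
    have h2vsm : StronglyMeasurable[F t] fun ω => 2 * v ω :=
      (stronglyMeasurable_const.mul hvsm :)
    refine (condExp_mul_of_stronglyMeasurable_left h2vsm hcross_int hu_int).trans ?_
    filter_upwards [hu1] with ω hω
    simp only [Pi.mul_apply]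
    rw [hω]
  have hv2sm : StronglyMeasurable[F t] fun ω => v ω ^ 2 := by
    simpa [pow_two, Pi.mul_def] using hvsm.mul hvsm
  have hv2 : (P[(fun ω => v ω ^ 2)|F t]) =ᵐ[P] fun ω => v ω ^ 2 := by
    rw [condExp_of_stronglyMeasurable (F.le t) hv2sm hvsq_int]
  -- Step 4: combine
  refine ((condExp_congr_ae h0).trans hsplit).trans ?_
  filter_upwards [hu2, hcross, hv2] with ω h1 h2 h3
  simp only [Pi.add_apply, Pi.sub_apply]
  rw [h1, h2, h3]
  have e1 : ∑ i, z i ^ 2 * q ω i = ∑ i, q ω i * z i ^ 2 :=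
    Finset.sum_congr rfl fun i _ => mul_comm _ _
  have e2 : v ω = ∑ i, q ω i * z i := by
    simp only [hvdef]
    exact Finset.sum_congr rfl fun i _ => mul_comm _ _
  rw [e1, ← e2]
  ring

lemma integrable_dot_sq (P : Measure Ω) [IsProbabilityMeasure P] (F : Filtration ℕ mΩ)
    (X : ℕ → Ω → (Fin N → ℝ)) (hX : DiscreteEBSDE.BasisValued X) (t : ℕ)
    (hXm : Measurable (X (t + 1)))
    (A : ℕ → Matrix (Fin N) (Fin N) ℝ) (hA : DiscreteEBSDE.IsMarkovChain P F X A)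
    (z : Fin N → ℝ) :
    Integrable (fun ω => (DiscreteEBSDE.dotR z (DiscreteEBSDE.Mdiff P F X t ω)) ^ 2) P := by
  set Cz : ℝ := ∑ i, |z i| with hCz
  have hXabs : ∀ s ω i, |X s ω i| ≤ 1 := by
    intro s ω i
    obtain ⟨k, hk⟩ := hX s ω
    rw [hk]
    exact Helper.abs_e_le k i
  have hqabs : ∀ ω i, |(A t).mulVec (X t ω) i| ≤ 1 := by
    intro ω i
    obtain ⟨k, hk⟩ := hX t ω
    rw [hk]
    simp only [DiscreteEBSDE.e, Matrix.mulVec_single_one, Matrix.col_apply]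
    rw [abs_of_nonneg ((hA.1 t).1 i k)]
    calc A t i k ≤ ∑ i', A t i' k :=
          Finset.single_le_sum (fun i' _ => (hA.1 t).1 i' k) (Finset.mem_univ i)
      _ = 1 := (hA.1 t).2 k
  have hm : Measurable fun ω => DiscreteEBSDE.dotR z (DiscreteEBSDE.Mdiff P F X t ω) := by
    have : (fun ω => DiscreteEBSDE.dotR z (DiscreteEBSDE.Mdiff P F X t ω)) =
        fun ω => ∑ i, z i * (X (t + 1) ω i -
          (P[(fun ω' => X (t + 1) ω' i)|F t]) ω) := rfl
    rw [this]
    apply Finset.measurable_sum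
    intro i _
    exact measurable_const.mul (((measurable_pi_apply i).comp hXm).sub
      ((stronglyMeasurable_condExp.mono (F.le t)).measurable))
  refine Helper.integrable_of_ae_bound ((hm.pow_const 2).aestronglyMeasurable)
    (C := (2 * Cz) ^ 2) ?_
  have hae : ∀ᵐ ω ∂P, ∀ i, (P[(fun ω' => X (t + 1) ω' i)|F t]) ω =
      (A t).mulVec (X t ω) i := (MeasureTheory.ae_all_iff).2 fun i => hA.2 t i
  filter_upwards [hae] with ω hω
  rw [abs_pow]
  have hbase : |DiscreteEBSDE.dotR z (DiscreteEBSDE.Mdiff P F X t ω)| ≤ 2 * Cz := by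
    have : DiscreteEBSDE.dotR z (DiscreteEBSDE.Mdiff P F X t ω) =
        ∑ i, z i * (X (t + 1) ω i - (A t).mulVec (X t ω) i) := by
      refine Finset.sum_congr rfl fun i _ => ?_
      rw [DiscreteEBSDE.Mdiff, hω i]
    rw [this]
    refine le_trans (Finset.abs_sum_le_sum_abs _ _) ?_
    have : ∀ i : Fin N, |z i * (X (t + 1) ω i - (A t).mulVec (X t ω) i)| ≤ |z i| * 2 := by
      intro i
      rw [abs_mul]
      refine mul_le_mul_of_nonneg_left ?_ (abs_nonneg _)
      calc |X (t + 1) ω i - (A t).mulVec (X t ω) i|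
          ≤ |X (t + 1) ω i| + |(A t).mulVec (X t ω) i| := abs_sub _ _
        _ ≤ 1 + 1 := add_le_add (hXabs (t+1) ω i) (hqabs ω i)
        _ = 2 := by norm_num
    refine le_trans (Finset.sum_le_sum fun i _ => this i) ?_
    rw [← Finset.sum_mul, hCz]
    linarith [Finset.sum_nonneg (fun i (_ : i ∈ Finset.univ) => abs_nonneg (z i))]
  calc |DiscreteEBSDE.dotR z (DiscreteEBSDE.Mdiff P F X t ω)| ^ 2
      ≤ (2 * Cz) ^ 2 := by
        apply pow_le_pow_left₀ (abs_nonneg _) hbase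

/-- A `γ`-balanced driver is Lipschitz in `z` with Lipschitz constant `1/γ`. -/
theorem gammaBalanced_lipschitz
    {Ω : Type*} {mΩ : MeasurableSpace Ω} {N : ℕ}
    (P : Measure Ω) [IsProbabilityMeasure P] (F : Filtration ℕ mΩ)
    (X : ℕ → Ω → (Fin N → ℝ)) (hX : BasisValued X)
    (hF : IsCompletedNaturalFiltration P X F)
    (A : ℕ → Matrix (Fin N) (Fin N) ℝ) (hA : IsMarkovChain P F X A)
    (γ : ℝ) (hγ : γ ∈ Set.Ioo (0 : ℝ) 1)
    (f : Ω → ℕ → ℝ → (Fin N → ℝ) → ℝ) (hfAd : DriverAdapted F f)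
    (hf : IsGammaBalanced P F X A γ f) :
    ∀ (t : ℕ) (Yt : Ω → ℝ) (Zt Z't : Ω → Fin N → ℝ),
      StronglyMeasurable[F t] Yt → StronglyMeasurable[F t] Zt →
      StronglyMeasurable[F t] Z't →
      ∀ᵐ ω ∂P, |f ω t (Yt ω) (Zt ω) - f ω t (Yt ω) (Z't ω)| ≤
        γ⁻¹ * mSeminorm P F X t (fun ω' => Zt ω' - Z't ω') ω := by
  intro t Yt Zt Z't hYsm hZsm hZ'sm
  obtain ⟨ψ, hψmeas, hψ⟩ := hf
  haveI hσ : SigmaFinite (P.trim (F.le t)) := inferInstance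
  -- natSigma is below F
  have hnat_le : ∀ u : ℕ, natSigma X u ≤ F u := by
    intro u
    intro B hB
    exact (hF u B).2 ⟨B, hB, by simp [symmDiff_self]⟩
  have hXsm : ∀ s u : ℕ, s ≤ u → Measurable[F u] (X s) := by
    intro s u hs
    rw [measurable_iff_comap_le]
    refine le_trans ?_ (hnat_le u)
    rw [natSigma]
    exact le_iSup₂ (f := fun (s' : ℕ) (_ : s' ∈ Set.Iic u) =>
      MeasurableSpace.comap (X s') inferInstance) s (Set.mem_Iic.2 hs)
  have hXm1 : Measurable (X (t + 1)) :=
    (hXsm (t + 1) (t + 1) le_rfl).mono (F.le (t + 1)) le_rfl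
  -- the index map and atoms
  set ι := (Fin (t + 1) → Fin N) with hι
  have hidx' : ∀ (s : Fin (t + 1)) (ω : Ω), ∃ k, X s.1 ω = e N k := fun s ω => hX s.1 ω
  set idx : Ω → ι := fun ω s => (hidx' s ω).choose with hidxdef
  have hidx : ∀ (ω : Ω) (s : Fin (t + 1)), X s.1 ω = e N (idx ω s) :=
    fun ω s => (hidx' s ω).choose_spec
  set Atom : ι → Set Ω := fun c => {ω | ∀ s : Fin (t + 1), X s.1 ω = e N (c s)}
    with hAtomdef
  have hAtom_eq : ∀ c, Atom c = idx ⁻¹' {c} := by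
    intro c
    ext ω
    simp only [hAtomdef, Set.mem_setOf_eq, Set.mem_preimage, Set.mem_singleton_iff]
    constructor
    · intro h
      funext s
      exact Helper.e_inj ((hidx ω s).symm.trans (h s))
    · intro h s
      rw [hidx ω s, h]
  have hmemAtom : ∀ ω, ω ∈ Atom (idx ω) := fun ω s => hidx ω s
  -- atoms are natSigma-measurable
  have hsingleton : ∀ x : Fin N → ℝ, MeasurableSet ({x} : Set (Fin N → ℝ)) := by
    intro x
    have : ({x} : Set (Fin N → ℝ)) = ⋂ i, (fun g : Fin N → ℝ => g i) ⁻¹' {x i} := by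
      ext y
      simp [funext_iff]
    rw [this]
    exact MeasurableSet.iInter fun i => (measurable_pi_apply i) (measurableSet_singleton _)
  have hAtom_nat : ∀ c, MeasurableSet[natSigma X t] (Atom c) := by
    intro c
    have : Atom c = ⋂ s : Fin (t + 1), X s.1 ⁻¹' {e N (c s)} := by
      ext ω
      simp [hAtomdef]
    rw [this]
    refine MeasurableSet.iInter fun s => ?_
    have h1 : MeasurableSet[MeasurableSpace.comap (X s.1) inferInstance]
        (X s.1 ⁻¹' {e N (c s)}) := ⟨{e N (c s)}, hsingleton _, rfl⟩
    refine le_iSup₂ (f := fun (s' : ℕ) (_ : s' ∈ Set.Iic t) =>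
      MeasurableSpace.comap (X s') inferInstance) s.1
      (Set.mem_Iic.2 (Nat.lt_succ_iff.1 s.2)) _ h1
  have hAtomFt : ∀ c, MeasurableSet[F t] (Atom c) := fun c => hnat_le t _ (hAtom_nat c)
  have hAtommΩ : ∀ c, MeasurableSet (Atom c) := fun c => F.le t _ (hAtomFt c)
  -- saturation of natSigma sets
  have hsat : ∀ B : Set Ω, MeasurableSet[natSigma X t] B →
      ∀ ω ω', idx ω = idx ω' → ω ∈ B → ω' ∈ B := by
    intro B hB
    have hle : natSigma X t ≤ MeasurableSpace.comap idx ⊤ := by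
      rw [natSigma]
      refine iSup₂_le fun s hs => ?_
      have hcomp : X s = (fun c : ι => e N (c ⟨s, Nat.lt_succ_of_le hs⟩)) ∘ idx := by
        funext ω
        exact hidx ω ⟨s, Nat.lt_succ_of_le hs⟩
      rw [hcomp, ← MeasurableSpace.comap_comp]
      exact MeasurableSpace.comap_mono le_top
    obtain ⟨S, -, hBS⟩ := hle B hB
    intro ω ω' hωω' hω
    rw [← hBS] at hω ⊢
    rwa [Set.mem_preimage, ← hωω']
  -- zero-one law on atoms
  have h01 : ∀ c : ι, P (Atom c) ≠ 0 → ∀ D : Set Ω, MeasurableSet[F t] D →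
      P (D ∩ Atom c) = 0 ∨ P (Atom c \ D) = 0 := by
    intro c _ D hD
    obtain ⟨B, hB, hsymm⟩ := (hF t D).1 hD
    by_cases hc : ∃ ω₀ ∈ Atom c, ω₀ ∉ B
    · left
      obtain ⟨ω₀, hω₀, hω₀B⟩ := hc
      refine measure_mono_null (fun ω hω => ?_) hsymm
      have hωA : ω ∈ Atom c := hω.2
      have hωB : ω ∉ B := by
        intro hωB
        have : idx ω = idx ω₀ := by
          have h1 : idx ω = c := by
            have := (hAtom_eq c) ▸ hωA; exact this
          have h2 : idx ω₀ = c := by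
            have := (hAtom_eq c) ▸ hω₀; exact this
          rw [h1, h2]
        exact hω₀B (hsat B hB ω ω₀ this hωB)
      rw [Set.symmDiff_def]
      exact Set.mem_union_left _ ⟨hω.1, hωB⟩
    · right
      push_neg at hc
      refine measure_mono_null (fun ω hω => ?_) hsymm
      rw [Set.symmDiff_def]
      exact Set.mem_union_right _ ⟨hc ω hω.1, hω.2⟩
  -- constants on atoms
  have hYmF : Measurable[F t] Yt := hYsm.measurable
  have hZmF : ∀ i, Measurable[F t] fun ω => Zt ω i := fun i =>
    (measurable_pi_apply i).comp hZsm.measurable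
  have hZ'mF : ∀ i, Measurable[F t] fun ω => Z't ω i := fun i =>
    (measurable_pi_apply i).comp hZ'sm.measurable
  have hYc : ∀ c : ι, ∃ y : ℝ, P (Atom c) ≠ 0 →
      P ({ω | Yt ω ≠ y} ∩ Atom c) = 0 := by
    intro c
    by_cases h : P (Atom c) ≠ 0
    · obtain ⟨v, hv⟩ := exists_ae_const_on P (F.le t) h hYmF (h01 c h)
      exact ⟨v, fun _ => hv⟩
    · exact ⟨0, fun h' => absurd h' h⟩
  have hZci : ∀ (c : ι) (i : Fin N), ∃ y : ℝ, P (Atom c) ≠ 0 →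
      P ({ω | Zt ω i ≠ y} ∩ Atom c) = 0 := by
    intro c i
    by_cases h : P (Atom c) ≠ 0
    · obtain ⟨v, hv⟩ := exists_ae_const_on P (F.le t) h (hZmF i) (h01 c h)
      exact ⟨v, fun _ => hv⟩
    · exact ⟨0, fun h' => absurd h' h⟩
  have hZ'ci : ∀ (c : ι) (i : Fin N), ∃ y : ℝ, P (Atom c) ≠ 0 →
      P ({ω | Z't ω i ≠ y} ∩ Atom c) = 0 := by
    intro c i
    by_cases h : P (Atom c) ≠ 0
    · obtain ⟨v, hv⟩ := exists_ae_const_on P (F.le t) h (hZ'mF i) (h01 c h)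
      exact ⟨v, fun _ => hv⟩
    · exact ⟨0, fun h' => absurd h' h⟩
  choose yc hyc using hYc
  choose zc hzc using hZci
  choose z'c hz'c using hZ'ci
  -- main a.e. ingredients
  have hE1 : ∀ᵐ ω ∂P, ∀ c : ι, P (Atom c) ≠ 0 → ω ∈ Atom c →
      Yt ω = yc c ∧ Zt ω = zc c ∧ Z't ω = z'c c := by
    rw [MeasureTheory.ae_all_iff]
    intro c
    by_cases h : P (Atom c) ≠ 0
    · rw [ae_iff]
      have hUnull : P (({ω | Yt ω ≠ yc c} ∩ Atom c) ∪
          (⋃ i, {ω | Zt ω i ≠ zc c i} ∩ Atom c) ∪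
          (⋃ i, {ω | Z't ω i ≠ z'c c i} ∩ Atom c)) = 0 :=
        measure_union_null (measure_union_null (hyc c h)
          (measure_iUnion_null fun i => hzc c i h))
          (measure_iUnion_null fun i => hz'c c i h)
      refine measure_mono_null (fun ω hω => ?_) hUnull
      simp only [Set.mem_setOf_eq, Classical.not_imp] at hω
      obtain ⟨-, hmem, hne⟩ := hω
      by_cases h1 : Yt ω = yc c
      · by_cases h2 : Zt ω = zc c
        · have h3 : Z't ω ≠ z'c c := fun h3 => hne ⟨h1, h2, h3⟩
          obtain ⟨i, hi⟩ := Function.ne_iff.1 h3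
          exact Or.inr (Set.mem_iUnion.2 ⟨i, ⟨hi, hmem⟩⟩)
        · obtain ⟨i, hi⟩ := Function.ne_iff.1 h2
          exact Or.inl (Or.inr (Set.mem_iUnion.2 ⟨i, ⟨hi, hmem⟩⟩))
      · exact Or.inl (Or.inl ⟨h1, hmem⟩)
    · exact Filter.Eventually.of_forall fun ω hcon => absurd hcon h
  have hE2 : ∀ᵐ ω ∂P, ∀ c : ι, P (Atom c) = 0 → ω ∉ Atom c := by
    rw [MeasureTheory.ae_all_iff]
    intro c
    by_cases h : P (Atom c) = 0
    · filter_upwards [measure_eq_zero_iff_ae_notMem.1 h] with ω hω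
      exact fun _ => hω
    · exact Filter.Eventually.of_forall fun ω hcon => absurd hcon h
  have hE3 : ∀ᵐ ω ∂P, ∀ c : ι,
      f ω t (yc c) (zc c) - f ω t (yc c) (z'c c) =
          dotR (zc c - z'c c) (fun i => ψ ω t (zc c) (z'c c) i -
            (A t).mulVec (X t ω) i) ∧
        (∀ i, balRatio (ψ ω t (zc c) (z'c c) i) ((A t).mulVec (X t ω) i) ∈
          Set.Icc γ γ⁻¹) ∧
        ∑ i, ψ ω t (zc c) (z'c c) i = 1 :=
    (MeasureTheory.ae_all_iff).2 fun c => hψ t (yc c) (zc c) (z'c c)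
  -- the seminorm computation
  set wv : ι → Fin N → ℝ := fun c => zc c - z'c c with hwv
  set hfun : ι → Ω → ℝ := fun c ω => (dotR (wv c) (Mdiff P F X t ω)) ^ 2 with hhfun
  set gfun : ι → Ω → ℝ := fun c ω =>
    (∑ i, (A t).mulVec (X t ω) i * wv c i ^ 2)
      - (∑ i, (A t).mulVec (X t ω) i * wv c i) ^ 2 with hgfun
  have hint : ∀ c, Integrable (hfun c) P := fun c =>
    integrable_dot_sq P F X hX t hXm1 A hA (wv c)
  have hcollapse : ∀ (ω : Ω) (g : ι → Ω → ℝ), (∀ c : ι, P (Atom c) ≠ 0 → ω ∈ Atom c →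
      True) → ω ∈ Atom (idx ω) →
      ∑ c : ι, (Atom c).indicator (g c) ω = g (idx ω) ω := by
    intro ω g _ hmem
    rw [Finset.sum_eq_single (idx ω)]
    · exact Set.indicator_of_mem hmem _
    · intro c _ hne
      refine Set.indicator_of_notMem (fun hc => hne ?_) _
      have := (hAtom_eq c) ▸ hc
      exact this.symm ▸ rfl
    · intro h
      exact absurd (Finset.mem_univ _) h
  have hE4 : seminormSq P F X t (fun ω' => Zt ω' - Z't ω') =ᵐ[P]
      fun ω => ∑ c : ι, (Atom c).indicator (gfun c) ω := by
    have step1 : (fun ω => (dotR (Zt ω - Z't ω) (Mdiff P F X t ω)) ^ 2) =ᵐ[P]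
        fun ω => ∑ c : ι, (Atom c).indicator (hfun c) ω := by
      filter_upwards [hE1, hE2] with ω h1 h2
      have hmem := hmemAtom ω
      have hpos : P (Atom (idx ω)) ≠ 0 := fun h => h2 _ h hmem
      obtain ⟨-, hZ, hZ'⟩ := h1 (idx ω) hpos hmem
      rw [hcollapse ω hfun (fun _ _ _ => trivial) hmem]
      simp only [hhfun, hwv, hZ, hZ']
    have step2 : (P[(fun ω => ∑ c : ι, (Atom c).indicator (hfun c) ω)|F t]) =ᵐ[P]
        fun ω => ∑ c : ι, (Atom c).indicator (gfun c) ω := by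
      have hsumfun : (fun ω => ∑ c : ι, (Atom c).indicator (hfun c) ω) =
          ∑ c : ι, (Atom c).indicator (hfun c) := by
        funext ω
        rw [Finset.sum_apply]
      rw [hsumfun]
      refine (condExp_finsetSum (fun c _ => (hint c).indicator (hAtommΩ c)) _).trans ?_
      have hterm : ∀ c : ι, (P[(Atom c).indicator (hfun c)|F t]) =ᵐ[P]
          (Atom c).indicator (P[hfun c|F t]) := fun c =>
        condExp_indicator (hint c) (hAtomFt c)
      have hterm2 : ∀ c : ι, (P[hfun c|F t]) =ᵐ[P] gfun c := by
        intro c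
        have hXFi : ∀ i, Measurable[F t] fun ω => (A t).mulVec (X t ω) i := by
          intro i
          have heq : (fun ω => (A t).mulVec (X t ω) i) =
              fun ω => ∑ j, A t i j * X t ω j := rfl
          rw [heq]
          apply Finset.measurable_sum
          intro j _
          exact measurable_const.mul ((measurable_pi_apply j).comp (hXsm t t le_rfl))
        exact condexp_sq_dot P F X hX t hXm1 A hXFi hA (wv c)
      have h1 := (MeasureTheory.ae_all_iff).2 hterm
      have h2 := (MeasureTheory.ae_all_iff).2 hterm2
      filter_upwards [h1, h2] with ω hω1 hω2
      rw [Finset.sum_apply]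
      refine Finset.sum_congr rfl fun c _ => ?_
      rw [hω1 c]
      by_cases hc : ω ∈ Atom c
      · rw [Set.indicator_of_mem hc, Set.indicator_of_mem hc, hω2 c]
      · rw [Set.indicator_of_notMem hc, Set.indicator_of_notMem hc]
    exact (condExp_congr_ae step1).trans step2
  -- final combination
  filter_upwards [hE1, hE2, hE3, hE4] with ω h1 h2 h3 h4
  set c := idx ω with hc
  have hmem := hmemAtom ω
  have hpos : P (Atom c) ≠ 0 := fun h => h2 _ h hmem
  obtain ⟨hY, hZ, hZ'⟩ := h1 c hpos hmem
  obtain ⟨heq, hratio, hsum⟩ := h3 c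
  obtain ⟨k, hk⟩ := hX t ω
  have hpform : ∀ i, (A t).mulVec (X t ω) i = A t i k := by
    intro i
    rw [hk]
    simp [e, Matrix.mulVec_single_one]
  have hp0 : ∀ i, 0 ≤ (A t).mulVec (X t ω) i := fun i =>
    (hpform i).symm ▸ (hA.1 t).1 i k
  have hp1 : ∑ i, (A t).mulVec (X t ω) i = 1 := by
    rw [Finset.sum_congr rfl fun i _ => hpform i]
    exact (hA.1 t).2 k
  have hval : mSeminorm P F X t (fun ω' => Zt ω' - Z't ω') ω =
      Real.sqrt (gfun c ω) := by
    rw [mSeminorm, h4, hcollapse ω gfun (fun _ _ _ => trivial) hmem]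
  rw [hY, hZ, hZ', hval]
  have hdot : dotR (zc c - z'c c) (fun i => ψ ω t (zc c) (z'c c) i -
      (A t).mulVec (X t ω) i) =
      ∑ i, (wv c) i * (ψ ω t (zc c) (z'c c) i - (A t).mulVec (X t ω) i) := rfl
  rw [heq, hdot]
  have := balanced_algebra hγ (fun i => (A t).mulVec (X t ω) i)
    (fun i => ψ ω t (zc c) (z'c c) i) (wv c) hp0 hp1 hsum hratio
  refine le_trans this ?_
  simp only [hgfun]
  exact le_rfl
end DiscreteEBSDE
end
end

section
/- If f is a γ-balanced driver for some γ ∈ (0,1), then f satisfies the comparison condition: for any t ≥ 0, y ∈ ℝ, z, z' ∈ ℝ^N and any atom F ∈ F_t, on F one has f(ω,t,y,z) − f(ω,t,y,z') > min_{i∈J_t^F}{(z−z')ᵀ(e_i − E[X_{t+1} | F_t])} whenever this minimum is strictly negative, and f(ω,t,y,z) − f(ω,t,y,z') = 0 whenever this minimum equals 0. -/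
open MeasureTheory Finset Filter

noncomputable section

namespace DiscreteEBSDE

variable {Ω : Type*} {mΩ : MeasurableSpace Ω} {N : ℕ}

/-- A `γ`-balanced driver satisfies the comparison condition of the change-of-measure
proposition. -/
theorem gammaBalanced_comparison
    {Ω : Type*} {mΩ : MeasurableSpace Ω} {N : ℕ}
    (P : Measure Ω) [IsProbabilityMeasure P] (F : Filtration ℕ mΩ)
    (X : ℕ → Ω → (Fin N → ℝ)) (hX : BasisValued X)
    (hF : IsCompletedNaturalFiltration P X F)
    (A : ℕ → Matrix (Fin N) (Fin N) ℝ) (hA : IsMarkovChain P F X A)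
    (γ : ℝ) (hγ : γ ∈ Set.Ioo (0 : ℝ) 1)
    (f : Ω → ℕ → ℝ → (Fin N → ℝ) → ℝ) (hfAd : DriverAdapted F f)
    (hf : IsGammaBalanced P F X A γ f) :
    ∀ (t : ℕ) (y : ℝ) (z z' : Fin N → ℝ) (ω₀ : Ω), 0 < P (pathAtom X t ω₀) →
      ∀ᵐ ω ∂P, ω ∈ pathAtom X t ω₀ →
        (minJump P F X t ω₀ z z' ω < 0 →
          minJump P F X t ω₀ z z' ω < f ω t y z - f ω t y z') ∧
        (minJump P F X t ω₀ z z' ω = 0 → f ω t y z - f ω t y z' = 0) := by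
  obtain ⟨ψ, hψmeas, hψ⟩ := hf
  intro t y z z' ω₀ hpos
  obtain ⟨k, hk⟩ := hX t ω₀
  have he : ∀ (i j : Fin N), e N i j = if j = i then 1 else 0 := fun i j => Pi.single_apply i 1 j
  set c : Fin N → ℝ := (A t).mulVec (X t ω₀) with hc
  have hc_eq : ∀ i, c i = A t i k := by
    intro i
    simp [hc, hk, Matrix.mulVec, dotProduct, he, mul_ite]
  have hc_nonneg : ∀ i, 0 ≤ c i := fun i => (hc_eq i) ▸ (hA.1 t).1 i k
  have hc_sum : ∑ i, c i = 1 := by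
    simp only [hc_eq]; exact (hA.1 t).2 k
  -- measurability facts
  have hnatle : ∀ s, natSigma X s ≤ F s := fun s B hB =>
    (hF s B).2 ⟨B, hB, by simp⟩
  have hcomap_le : ∀ s t' : ℕ, s ≤ t' →
      MeasurableSpace.comap (X s) inferInstance ≤ natSigma X t' := by
    intro s t' hs
    exact le_iSup₂ (f := fun s (_ : s ∈ Set.Iic t') =>
      MeasurableSpace.comap (X s) inferInstance) s hs
  have hXmeas : ∀ s, Measurable (X s) :=
    fun s => measurable_iff_comap_le.mpr
      (((hcomap_le s s le_rfl).trans (hnatle s)).trans (F.le s))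
  have hatom_nat : MeasurableSet[natSigma X t] (pathAtom X t ω₀) := by
    have heq : pathAtom X t ω₀ = ⋂ s, ⋂ (_ : s ≤ t), X s ⁻¹' {X s ω₀} := by
      ext ω; simp [pathAtom]
    rw [heq]
    exact MeasurableSet.iInter fun s => MeasurableSet.iInter fun hs =>
      hcomap_le s t hs _ ⟨{X s ω₀}, measurableSet_singleton _, rfl⟩
  have hatomF : MeasurableSet[F t] (pathAtom X t ω₀) := hnatle t _ hatom_nat
  have hatomΩ : MeasurableSet (pathAtom X t ω₀) := F.le t _ hatomF
  have hS : ∀ i : Fin N, MeasurableSet {ω' | X (t + 1) ω' = e N i} := fun i =>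
    hXmeas (t + 1) (measurableSet_singleton (e N i))
  have h_ind : ∀ (i : Fin N) ω, X (t + 1) ω i =
      ({ω' | X (t + 1) ω' = e N i}).indicator (fun _ => (1 : ℝ)) ω := by
    intro i ω
    obtain ⟨j, hj⟩ := hX (t + 1) ω
    by_cases hmem : X (t + 1) ω = e N i
    · rw [Set.indicator_of_mem (show ω ∈ {ω' | X (t + 1) ω' = e N i} from hmem), hmem, he]; simp
    · rw [Set.indicator_of_notMem (show ω ∉ {ω' | X (t + 1) ω' = e N i} from hmem), hj]
      have hji : j ≠ i := by rintro rfl; exact hmem hj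
      rw [he]; simp [Ne.symm hji]
  have hInt : ∀ i : Fin N, Integrable (fun ω => X (t + 1) ω i) P := by
    intro i
    have : (fun ω => X (t + 1) ω i) =
        ({ω' | X (t + 1) ω' = e N i}).indicator (fun _ => (1 : ℝ)) := funext (h_ind i)
    rw [this]
    exact (integrable_const (1 : ℝ)).indicator (hS i)
  -- key identity : c i * P(atom) = P(S i ∩ atom)
  have hkeyint : ∀ i : Fin N, c i * (P (pathAtom X t ω₀)).toReal =
      (P ({ω' | X (t + 1) ω' = e N i} ∩ pathAtom X t ω₀)).toReal := by
    intro i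
    have h1 : ∫ ω in pathAtom X t ω₀, (P[(fun ω' => X (t + 1) ω' i)|F t]) ω ∂P
        = ∫ ω in pathAtom X t ω₀, X (t + 1) ω i ∂P :=
      setIntegral_condExp (F.le t) (hInt i) hatomF
    have h2 : ∫ ω in pathAtom X t ω₀, X (t + 1) ω i ∂P
        = (P ({ω' | X (t + 1) ω' = e N i} ∩ pathAtom X t ω₀)).toReal := by
      simp_rw [h_ind i]
      rw [setIntegral_indicator (hS i), setIntegral_const, Set.inter_comm]
      simp
      rfl
    have h3 : ∫ ω in pathAtom X t ω₀, (P[(fun ω' => X (t + 1) ω' i)|F t]) ω ∂P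
        = c i * (P (pathAtom X t ω₀)).toReal := by
      rw [setIntegral_congr_ae hatomΩ (g := fun _ => c i) ?_, setIntegral_const,
        smul_eq_mul, mul_comm]
      rfl
      filter_upwards [hA.2 t i] with ω hω hωmem
      rw [hω]
      have hXt : X t ω = X t ω₀ := hωmem t le_rfl
      rw [hXt, ← hc]
    rw [← h3, h1, h2]
  have hPpos_iff : ∀ i : Fin N,
      0 < P ({ω' | X (t + 1) ω' = e N i} ∩ pathAtom X t ω₀) ↔ 0 < c i := by
    intro i
    have hfin : P ({ω' | X (t + 1) ω' = e N i} ∩ pathAtom X t ω₀) ≠ ⊤ := measure_ne_top P _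
    have hPt : 0 < (P (pathAtom X t ω₀)).toReal :=
      ENNReal.toReal_pos hpos.ne' (measure_ne_top P _)
    constructor
    · intro h
      have h' : 0 < (P ({ω' | X (t + 1) ω' = e N i} ∩ pathAtom X t ω₀)).toReal :=
        ENNReal.toReal_pos h.ne' hfin
      rw [← hkeyint i] at h'
      by_contra hle
      push_neg at hle
      have hci : c i = 0 := le_antisymm hle (hc_nonneg i)
      rw [hci, zero_mul] at h'
      exact lt_irrefl 0 h'
    · intro h
      have h' : 0 < (P ({ω' | X (t + 1) ω' = e N i} ∩ pathAtom X t ω₀)).toReal := by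
        rw [← hkeyint i]; exact mul_pos h hPt
      rcases eq_or_ne (P ({ω' | X (t + 1) ω' = e N i} ∩ pathAtom X t ω₀)) 0 with h0 | h0
      · rw [h0] at h'; simp at h'
      · exact pos_iff_ne_zero.mpr h0
  -- constants for the minimum
  set C : ℝ := ∑ i, (z i - z' i) * c i with hC
  set Jset : Finset (Fin N) := Finset.univ.filter fun i => 0 < c i with hJ
  have hJne : Jset.Nonempty := by
    obtain ⟨i, hi⟩ : ∃ i, 0 < c i := by
      by_contra hno
      push_neg at hno
      have h0 : ∑ i, c i = 0 :=
        Finset.sum_eq_zero fun i _ => le_antisymm (hno i) (hc_nonneg i)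
      rw [hc_sum] at h0; norm_num at h0
    exact ⟨i, Finset.mem_filter.mpr ⟨Finset.mem_univ i, hi⟩⟩
  have hdot : ∀ i : Fin N,
      dotR (z - z') (fun j => e N i j - c j) = (z i - z' i) - C := by
    intro i
    unfold dotR
    simp only [Pi.sub_apply]
    simp_rw [mul_sub, Finset.sum_sub_distrib]
    rw [← hC]
    congr 1
    simp [he, mul_ite]
  have hsumcJ : ∑ i ∈ Jset, c i = 1 := by
    rw [← hc_sum]
    apply Finset.sum_subset (Finset.subset_univ _)
    intro i _ hiJ
    rw [hJ, Finset.mem_filter] at hiJ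
    push_neg at hiJ
    exact le_antisymm (hiJ (Finset.mem_univ i)) (hc_nonneg i)
  have hCJ : ∑ i ∈ Jset, c i * ((z i - z' i) - C) = 0 := by
    have h1 : ∑ i ∈ Jset, c i * ((z i - z' i) - C)
        = ∑ i, c i * ((z i - z' i) - C) := by
      apply Finset.sum_subset (Finset.subset_univ _)
      intro i _ hiJ
      rw [hJ, Finset.mem_filter] at hiJ
      push_neg at hiJ
      rw [le_antisymm (hiJ (Finset.mem_univ i)) (hc_nonneg i), zero_mul]
    rw [h1]
    have h2 : ∑ i, c i * ((z i - z' i) - C)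
        = (∑ i, c i * (z i - z' i)) - (∑ i, c i) * C := by
      simp_rw [mul_sub, Finset.sum_sub_distrib, Finset.sum_mul]
    rw [h2, hc_sum, one_mul, hC, sub_eq_zero]
    exact Finset.sum_congr rfl fun i _ => mul_comm _ _
  -- the a.e. statement
  have hAE : ∀ᵐ ω ∂P, ∀ i : Fin N,
      (P[(fun ω' => X (t + 1) ω' i)|F t]) ω = (A t).mulVec (X t ω) i :=
    ae_all_iff.mpr (hA.2 t)
  filter_upwards [hψ t y z z', hAE] with ω hω hcond hmem
  obtain ⟨hfd, hrat, hsumψ⟩ := hω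
  have hXtω : X t ω = X t ω₀ := hmem t le_rfl
  set w : Fin N → ℝ := ψ ω t z z' with hw
  have hcondc : ∀ j, (P[(fun ω'' => X (t + 1) ω'' j)|F t]) ω = c j := by
    intro j
    rw [hcond j, hXtω, ← hc]
  have hrat' : ∀ i, balRatio (w i) (c i) ∈ Set.Icc γ γ⁻¹ := by
    intro i
    have := hrat i
    rwa [hXtω, ← hc] at this
  have hw0 : ∀ i, c i = 0 → w i = 0 := by
    intro i h0
    by_contra hne
    have h1 := hrat' i
    rw [balRatio, if_neg (by tauto), h0, div_zero] at h1
    exact absurd h1.1 (not_le.mpr hγ.1)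
  have hwpos : ∀ i, 0 < c i → 0 < w i := by
    intro i h0
    have h1 := hrat' i
    rw [balRatio, if_neg (fun h => h0.ne' h.2)] at h1
    have := (le_div_iff₀ h0).mp h1.1
    exact lt_of_lt_of_le (mul_pos hγ.1 h0) this
  have hwnonneg : ∀ i, 0 ≤ w i := by
    intro i
    rcases (hc_nonneg i).lt_or_eq with h | h
    · exact (hwpos i h).le
    · rw [hw0 i h.symm]
  -- the minJump value
  have hset : {r : ℝ | ∃ i : Fin N,
        0 < P ({ω' | X (t + 1) ω' = e N i} ∩ pathAtom X t ω₀) ∧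
        r = dotR (z - z') (fun j => e N i j - (P[(fun ω'' => X (t + 1) ω'' j)|F t]) ω)}
      = ↑(Jset.image fun i => (z i - z' i) - C) := by
    ext r
    simp only [Set.mem_setOf_eq, Finset.coe_image, Set.mem_image, Finset.mem_coe,
      hJ, Finset.mem_filter, Finset.mem_univ, true_and]
    constructor
    · rintro ⟨i, hPi, rfl⟩
      refine ⟨i, (hPpos_iff i).1 hPi, ?_⟩
      rw [← hdot i]
      congr 1
      funext j
      rw [hcondc j]
    · rintro ⟨i, hi, rfl⟩
      refine ⟨i, (hPpos_iff i).2 hi, ?_⟩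
      rw [← hdot i]
      congr 1
      funext j
      rw [hcondc j]
  have hmj : minJump P F X t ω₀ z z' ω
      = (Jset.image fun i => (z i - z' i) - C).min' (hJne.image _) := by
    unfold minJump
    rw [hset]
    exact Finset.Nonempty.csInf_eq_min' _
  set m : ℝ := (Jset.image fun i => (z i - z' i) - C).min' (hJne.image _) with hm
  have hm_le : ∀ i ∈ Jset, m ≤ (z i - z' i) - C := fun i hi =>
    Finset.min'_le _ _ (Finset.mem_image_of_mem _ hi)
  -- the driver difference
  have hfd' : f ω t y z - f ω t y z' = ∑ i, w i * ((z i - z' i) - C) := by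
    rw [hfd, hXtω, ← hc]
    unfold dotR
    simp only [Pi.sub_apply]
    simp_rw [mul_sub, Finset.sum_sub_distrib, ← Finset.sum_mul, hsumψ]
    rw [← hC, one_mul]
    have h2 : ∑ i, (z i - z' i) * w i = ∑ i, w i * (z i - z' i) :=
      Finset.sum_congr rfl fun i _ => mul_comm _ _
    rw [h2]
    simp_rw [mul_sub, Finset.sum_sub_distrib]
  have hfd'' : f ω t y z - f ω t y z' = ∑ i ∈ Jset, w i * ((z i - z' i) - C) := by
    rw [hfd']
    symm
    apply Finset.sum_subset (Finset.subset_univ _)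
    intro i _ hiJ
    rw [hJ, Finset.mem_filter] at hiJ
    push_neg at hiJ
    rw [hw0 i (le_antisymm (hiJ (Finset.mem_univ i)) (hc_nonneg i)), zero_mul]
  have hsumJ : ∑ i ∈ Jset, w i = 1 := by
    rw [← hsumψ]
    apply Finset.sum_subset (Finset.subset_univ _)
    intro i _ hiJ
    rw [hJ, Finset.mem_filter] at hiJ
    push_neg at hiJ
    exact hw0 i (le_antisymm (hiJ (Finset.mem_univ i)) (hc_nonneg i))
  rw [hmj]
  constructor
  · -- m < 0 → m < fdiff
    intro hmlt
    have hex : ∃ j ∈ Jset, m < (z j - z' j) - C := by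
      by_contra hno
      push_neg at hno
      have hallm : ∀ i ∈ Jset, (z i - z' i) - C = m := fun i hi =>
        le_antisymm (hno i hi) (hm_le i hi)
      have h1 : ∑ i ∈ Jset, c i * ((z i - z' i) - C) = m := by
        rw [Finset.sum_congr rfl (fun i hi => by rw [hallm i hi]), ← Finset.sum_mul,
          hsumcJ, one_mul]
      rw [hCJ] at h1
      exact absurd h1.symm (ne_of_lt hmlt)
    obtain ⟨j, hj, hjlt⟩ := hex
    calc m = ∑ i ∈ Jset, w i * m := by rw [← Finset.sum_mul, hsumJ, one_mul]
      _ < ∑ i ∈ Jset, w i * ((z i - z' i) - C) :=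
          Finset.sum_lt_sum
            (fun i hi => mul_le_mul_of_nonneg_left (hm_le i hi) (hwnonneg i))
            ⟨j, hj, mul_lt_mul_of_pos_left hjlt
              (hwpos j (Finset.mem_filter.mp hj).2)⟩
      _ = f ω t y z - f ω t y z' := hfd''.symm
  · -- m = 0 → fdiff = 0
    intro h0
    have hall : ∀ i ∈ Jset, (z i - z' i) - C = 0 := by
      intro i hi
      have h1 : 0 ≤ (z i - z' i) - C := h0 ▸ hm_le i hi
      by_contra hne
      have hlt : 0 < (z i - z' i) - C := lt_of_le_of_ne h1 (Ne.symm hne)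
      have h2 : 0 < ∑ j ∈ Jset, c j * ((z j - z' j) - C) :=
        Finset.sum_pos'
          (fun j hj => mul_nonneg (hc_nonneg j) (h0 ▸ hm_le j hj))
          ⟨i, hi, mul_pos (Finset.mem_filter.mp hi).2 hlt⟩
      rw [hCJ] at h2
      exact lt_irrefl 0 h2
    rw [hfd'']
    exact Finset.sum_eq_zero fun i hi => by rw [hall i hi, mul_zero]
end DiscreteEBSDE
end
end
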